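/- arXiv:1309.1553 — 8 statements merged into one kernel-verified Lean document; each statement's English description precedes it below -/
import Mathlib

section
/- Let D be a digraph whose connected components are D_1,...,D_k, let G_1 be any digraph, and let G be the disjoint union of G_1 and D_2,...,D_k. If G contains an induced subdivision of D, then G_1 contains an induced subdivision of D_1. Conversely, if G_1 contains an induced subdivision of D_1, then G contains an induced subdivision of D. -/
/-- `S` is a subdivision of `D` realized via the injection `φ` of branch vertices:
each arc `u → v` of `D` is replaced by a directed `(φ u, φ v)`-path `p u v h` of length
`n u v h ≥ 1`; the paths are internally disjoint, their internal vertices are new,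
every vertex of `S` lies on some path, and the arcs of `S` are exactly the path arcs. -/
def IsSubdivisionVia {U W : Type*} (D : U → U → Prop) (S : W → W → Prop)
    (φ : U → W) (n : ∀ u v, D u v → ℕ)
    (p : ∀ u v (h : D u v), Fin (n u v h + 1) → W) : Prop :=
  Function.Injective φ ∧
  (∀ u v (h : D u v), 1 ≤ n u v h) ∧
  (∀ u v (h : D u v), p u v h 0 = φ u ∧ p u v h (Fin.last _) = φ v) ∧
  (∀ u v (h : D u v), Function.Injective (p u v h)) ∧
  (∀ u v (h : D u v) (i : Fin (n u v h + 1)),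
      0 < i.val → i.val < n u v h → ∀ z, p u v h i ≠ φ z) ∧
  (∀ u v (h : D u v) u' v' (h' : D u' v') (i : Fin (n u v h + 1))
      (j : Fin (n u' v' h' + 1)),
      0 < i.val → i.val < n u v h → 0 < j.val → j.val < n u' v' h' →
      p u v h i = p u' v' h' j → u = u' ∧ v = v' ∧ i.val = j.val) ∧
  (∀ w : W, (∃ u, φ u = w) ∨ ∃ u, ∃ v, ∃ h : D u v, ∃ i, p u v h i = w) ∧
  (∀ a b : W, S a b ↔ ∃ u, ∃ v, ∃ h : D u v, ∃ i : Fin (n u v h),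
      p u v h i.castSucc = a ∧ p u v h i.succ = b)

/-- `S` is a subdivision of the digraph `D`. -/
def IsSubdivision {U W : Type*} (D : U → U → Prop) (S : W → W → Prop) : Prop :=
  ∃ φ n p, IsSubdivisionVia D S φ n p

/-- The digraph `G` contains an induced subdivision of `D`: some vertex subset of `G`
induces a subdivision of `D`. -/
def ContainsInducedSubdivision {U W : Type*} (D : U → U → Prop) (G : W → W → Prop) : Prop :=
  ∃ X : Set W, IsSubdivision D (fun a b : X => G a.1 b.1)

section Helpers
variable {U W : Type*} {D : U → U → Prop} {S : W → W → Prop}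
  {φ : U → W} {n : ∀ u v, D u v → ℕ} {p : ∀ u v (h : D u v), Fin (n u v h + 1) → W}

theorem IsSubdivisionVia.p_zero (H : IsSubdivisionVia D S φ n p) {u v} (h : D u v)
    (i : Fin (n u v h + 1)) (hi : i.val = 0) : p u v h i = φ u := by
  have h3 := (H.2.2.1 u v h).1
  have : i = 0 := Fin.ext (by simpa using hi)
  rw [this]; exact h3

theorem IsSubdivisionVia.p_last (H : IsSubdivisionVia D S φ n p) {u v} (h : D u v)
    (i : Fin (n u v h + 1)) (hi : i.val = n u v h) : p u v h i = φ v := by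
  have h3 := (H.2.2.1 u v h).2
  have : i = Fin.last _ := Fin.ext (by simpa using hi)
  rw [this]; exact h3

theorem IsSubdivisionVia.eq_phi (H : IsSubdivisionVia D S φ n p) {u v} (h : D u v)
    {i : Fin (n u v h + 1)} {z : U} (e : p u v h i = φ z) :
    (i.val = 0 ∧ u = z) ∨ (i.val = n u v h ∧ v = z) := by
  rcases Nat.eq_zero_or_pos i.val with h0 | h0
  · exact Or.inl ⟨h0, H.1 (by rw [← H.p_zero h i h0, e])⟩
  rcases eq_or_lt_of_le (Nat.lt_succ_iff.mp i.isLt) with hn | hn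
  · exact Or.inr ⟨hn, H.1 (by rw [← H.p_last h i hn, e])⟩
  · exact absurd e (H.2.2.2.2.1 u v h i h0 hn z)

theorem IsSubdivisionVia.vertex_cases (H : IsSubdivisionVia D S φ n p)
    {u v u' v'} (h : D u v) (h' : D u' v')
    {i : Fin (n u v h + 1)} {i' : Fin (n u' v' h' + 1)}
    (e : p u v h i = p u' v' h' i') :
    (u = u' ∧ v = v' ∧ i.val = i'.val) ∨
    (i.val = 0 ∧ i'.val = 0 ∧ u = u') ∨
    (i.val = 0 ∧ i'.val = n u' v' h' ∧ u = v') ∨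
    (i.val = n u v h ∧ i'.val = 0 ∧ v = u') ∨
    (i.val = n u v h ∧ i'.val = n u' v' h' ∧ v = v') := by
  rcases Nat.eq_zero_or_pos i.val with h0 | h0
  · have e1 : p u' v' h' i' = φ u := by rw [← H.p_zero h i h0, e]
    rcases H.eq_phi h' e1 with ⟨a, b⟩ | ⟨a, b⟩
    · exact Or.inr (Or.inl ⟨h0, a, b.symm⟩)
    · exact Or.inr (Or.inr (Or.inl ⟨h0, a, b.symm⟩))
  rcases eq_or_lt_of_le (Nat.lt_succ_iff.mp i.isLt) with hn | hn
  · have e1 : p u' v' h' i' = φ v := by rw [← H.p_last h i hn, e]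
    rcases H.eq_phi h' e1 with ⟨a, b⟩ | ⟨a, b⟩
    · exact Or.inr (Or.inr (Or.inr (Or.inl ⟨hn, a, b.symm⟩)))
    · exact Or.inr (Or.inr (Or.inr (Or.inr ⟨hn, a, b.symm⟩)))
  · rcases Nat.eq_zero_or_pos i'.val with h0' | h0'
    · exact absurd (by rw [e, H.p_zero h' i' h0']) (H.2.2.2.2.1 u v h i h0 hn u')
    rcases eq_or_lt_of_le (Nat.lt_succ_iff.mp i'.isLt) with hn' | hn'
    · exact absurd (by rw [e, H.p_last h' i' hn']) (H.2.2.2.2.1 u v h i h0 hn v')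
    · exact Or.inl (H.2.2.2.2.2.1 u v h u' v' h' i i' h0 hn h0' hn' e)

theorem IsSubdivisionVia.pair_cases (H : IsSubdivisionVia D S φ n p)
    {u v u' v'} (h : D u v) (h' : D u' v')
    {i : Fin (n u v h)} {i' : Fin (n u' v' h')}
    (e1 : p u v h i.castSucc = p u' v' h' i'.castSucc)
    (e2 : p u v h i.succ = p u' v' h' i'.succ) :
    u = u' ∧ v = v' ∧ i.val = i'.val := by
  have hi := i.isLt; have hi' := i'.isLt
  rcases H.vertex_cases h h' e2 with ⟨a, b, cc⟩ | ⟨a, b, cc⟩ | ⟨a, b, cc⟩ | ⟨a, b, cc⟩ | ⟨a, b, cc⟩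
  · exact ⟨a, b, by simpa using cc⟩
  · simp at a
  · simp at a
  · simp at b
  · simp only [Fin.val_succ] at a b
    rcases H.vertex_cases h h' e1 with ⟨a1, b1, c1⟩ | ⟨a1, b1, c1⟩ | ⟨a1, b1, c1⟩ | ⟨a1, b1, c1⟩ | ⟨a1, b1, c1⟩
    · exact ⟨a1, b1, by simpa using c1⟩
    · simp only [Fin.coe_castSucc] at a1 b1
      exact ⟨c1, cc, by omega⟩
    · simp only [Fin.coe_castSucc] at a1 b1; omega
    · simp only [Fin.coe_castSucc] at a1 b1; omega
    · simp only [Fin.coe_castSucc] at a1 b1; omega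

end Helpers

section Transport
variable {U U' W W' : Type*}

/-- Transport a subdivision along an isomorphism of the host digraph. -/
theorem IsSubdivision.host_iso {D : U → U → Prop} {S : W → W → Prop} {S' : W' → W' → Prop}
    (e : W ≃ W') (harc : ∀ a b, S a b ↔ S' (e a) (e b))
    (H : IsSubdivision D S) : IsSubdivision D S' := by
  obtain ⟨φ, n, p, hinj, hn, hends, hpinj, hint, hcross, hcover, harcs⟩ := H
  refine ⟨fun u => e (φ u), n, fun u v h i => e (p u v h i), ?_, hn, ?_, ?_, ?_, ?_, ?_, ?_⟩
  · exact e.injective.comp hinj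
  · exact fun u v h => ⟨congrArg e (hends u v h).1, congrArg e (hends u v h).2⟩
  · exact fun u v h a b hab => hpinj u v h (e.injective hab)
  · exact fun u v h i h1 h2 z hz => hint u v h i h1 h2 z (e.injective hz)
  · exact fun u v h u' v' h' i j h1 h2 h3 h4 hij =>
      hcross u v h u' v' h' i j h1 h2 h3 h4 (e.injective hij)
  · intro w
    rcases hcover (e.symm w) with ⟨u, hu⟩ | ⟨u, v, h, i, hi⟩
    · exact Or.inl ⟨u, by dsimp only; rw [hu, e.apply_symm_apply]⟩
    · exact Or.inr ⟨u, v, h, i, by dsimp only; rw [hi, e.apply_symm_apply]⟩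
  · intro a b
    rw [← e.apply_symm_apply a, ← e.apply_symm_apply b, ← harc]
    rw [harcs (e.symm a) (e.symm b)]
    constructor
    · rintro ⟨u, v, h, i, h1, h2⟩
      exact ⟨u, v, h, i, by dsimp only; rw [h1], by dsimp only; rw [h2]⟩
    · rintro ⟨u, v, h, i, h1, h2⟩
      refine ⟨u, v, h, i, e.injective ?_, e.injective ?_⟩
      · dsimp only at h1; rw [h1, e.apply_symm_apply]
      · dsimp only at h2; rw [h2, e.apply_symm_apply]

/-- Transport a subdivision along an isomorphism of the pattern digraph. -/
theorem IsSubdivision.pattern_iso {D : U → U → Prop} {D' : U' → U' → Prop} {S : W → W → Prop}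
    (e : U ≃ U') (harc : ∀ a b, D a b ↔ D' (e a) (e b))
    (H : IsSubdivision D' S) : IsSubdivision D S := by
  obtain ⟨φ, n, p, hinj, hn, hends, hpinj, hint, hcross, hcover, harcs⟩ := H
  refine ⟨fun u => φ (e u), fun u v h => n (e u) (e v) ((harc u v).mp h),
    fun u v h i => p (e u) (e v) ((harc u v).mp h) i, ?_, ?_, ?_, ?_, ?_, ?_, ?_, ?_⟩
  · exact hinj.comp e.injective
  · exact fun u v h => hn _ _ _
  · exact fun u v h => hends _ _ _
  · exact fun u v h => hpinj _ _ _
  · exact fun u v h i h1 h2 z => hint _ _ _ i h1 h2 (e z)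
  · intro u v h u' v' h' i j h1 h2 h3 h4 hij
    obtain ⟨a, b, cc⟩ := hcross _ _ _ _ _ _ i j h1 h2 h3 h4 hij
    exact ⟨e.injective a, e.injective b, cc⟩
  · intro w
    rcases hcover w with ⟨u, hu⟩ | ⟨u, v, h, i, hi⟩
    · exact Or.inl ⟨e.symm u, by dsimp only; rw [e.apply_symm_apply]; exact hu⟩
    · have key : ∀ (u' v' : U) (h' : D u' v'), e u' = u → e v' = v →
          ∃ i, p (e u') (e v') ((harc u' v').mp h') i = w := by
        intro u' v' h' hu hv
        subst hu; subst hv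
        exact ⟨i, hi⟩
      have h0 : D (e.symm u) (e.symm v) := by
        rw [harc, e.apply_symm_apply, e.apply_symm_apply]; exact h
      obtain ⟨i0, hi0⟩ := key (e.symm u) (e.symm v) h0 (e.apply_symm_apply u) (e.apply_symm_apply v)
      exact Or.inr ⟨e.symm u, e.symm v, h0, i0, hi0⟩
  · intro a b
    rw [harcs a b]
    constructor
    · rintro ⟨u, v, h, i, h1, h2⟩
      have key : ∀ (u' v' : U) (h' : D u' v'), e u' = u → e v' = v →
          ∃ i : Fin (n (e u') (e v') ((harc u' v').mp h')),
            p (e u') (e v') ((harc u' v').mp h') i.castSucc = a ∧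
            p (e u') (e v') ((harc u' v').mp h') i.succ = b := by
        intro u' v' h' hu hv
        subst hu; subst hv
        exact ⟨i, h1, h2⟩
      have h0 : D (e.symm u) (e.symm v) := by
        rw [harc, e.apply_symm_apply, e.apply_symm_apply]; exact h
      obtain ⟨i0, hi0⟩ := key (e.symm u) (e.symm v) h0 (e.apply_symm_apply u) (e.apply_symm_apply v)
      exact ⟨e.symm u, e.symm v, h0, i0, hi0⟩
    · rintro ⟨u, v, h, i, h1, h2⟩
      exact ⟨e u, e v, (harc u v).mp h, i, h1, h2⟩

end Transport

section Restrict
variable {U W : Type*} {D : U → U → Prop} {S : W → W → Prop}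

/-- The set of host vertices used by the part of a subdivision corresponding to the
pattern vertices in `Y` (branch vertices in `Y`, and paths of arcs inside `Y`). -/
def subdivPiece (φ : U → W) (n : ∀ u v, D u v → ℕ)
    (p : ∀ u v (h : D u v), Fin (n u v h + 1) → W) (Y : Set U) : Set W :=
  {w | (∃ u ∈ Y, φ u = w) ∨
    ∃ u, ∃ v, ∃ h : D u v, ∃ i : Fin (n u v h + 1), u ∈ Y ∧ v ∈ Y ∧ p u v h i = w}

theorem mem_subdivPiece {φ : U → W} {n : ∀ u v, D u v → ℕ}
    {p : ∀ u v (h : D u v), Fin (n u v h + 1) → W} {Y : Set U} {w : W} :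
    w ∈ subdivPiece φ n p Y ↔ ((∃ u ∈ Y, φ u = w) ∨
      ∃ u, ∃ v, ∃ h : D u v, ∃ i : Fin (n u v h + 1), u ∈ Y ∧ v ∈ Y ∧ p u v h i = w) :=
  Iff.rfl

theorem IsSubdivisionVia.restrict_pattern
    {φ : U → W} {n : ∀ u v, D u v → ℕ} {p : ∀ u v (h : D u v), Fin (n u v h + 1) → W}
    (H : IsSubdivisionVia D S φ n p) (Y : Set U) :
    IsSubdivision (fun a b : Y => D a.1 b.1)
      (fun a b : (subdivPiece φ n p Y) => S a.1 b.1) := by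
  obtain ⟨hinj, hn, hends, hpinj, hint, hcross, hcover, harcs⟩ := H
  have H : IsSubdivisionVia D S φ n p :=
    ⟨hinj, hn, hends, hpinj, hint, hcross, hcover, harcs⟩
  refine ⟨fun y => ⟨φ y.1, mem_subdivPiece.mpr (Or.inl ⟨y.1, y.2, rfl⟩)⟩,
    fun y y' h => n y.1 y'.1 h,
    fun y y' h i => ⟨p y.1 y'.1 h i,
      mem_subdivPiece.mpr (Or.inr ⟨y.1, y'.1, h, i, y.2, y'.2, rfl⟩)⟩,
    ?_, ?_, ?_, ?_, ?_, ?_, ?_, ?_⟩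
  · intro a b hab
    exact Subtype.ext (hinj (congrArg Subtype.val hab))
  · exact fun y y' h => hn _ _ _
  · exact fun y y' h => ⟨Subtype.ext (hends _ _ _).1, Subtype.ext (hends _ _ _).2⟩
  · intro y y' h i j hij
    exact hpinj _ _ _ (congrArg Subtype.val hij)
  · intro y y' h i h1 h2 z hz
    exact hint _ _ _ i h1 h2 z.1 (congrArg Subtype.val hz)
  · intro y1 y2 h y3 y4 h' i j h1 h2 h3 h4 hij
    obtain ⟨a, b, cc⟩ := hcross _ _ _ _ _ _ i j h1 h2 h3 h4 (congrArg Subtype.val hij)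
    exact ⟨Subtype.ext a, Subtype.ext b, cc⟩
  · rintro ⟨w, hw⟩
    rcases mem_subdivPiece.mp hw with hw | hw
    · obtain ⟨u, hu, hw⟩ := hw
      exact Or.inl ⟨⟨u, hu⟩, Subtype.ext hw⟩
    · obtain ⟨u, v, h, i, hu, hv, hw⟩ := hw
      exact Or.inr ⟨⟨u, hu⟩, ⟨v, hv⟩, h, i, Subtype.ext hw⟩
  · intro a b
    constructor
    · intro hab
      obtain ⟨u, v, h, i, e1, e2⟩ := (harcs a.1 b.1).mp hab
      have hu : u ∈ Y := by
        rcases mem_subdivPiece.mp a.2 with ⟨z, hz, hza⟩ | ⟨u', v', h', i', hu', hv', hpa⟩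
        · rcases H.eq_phi h (e1.trans hza.symm) with ⟨_, huz⟩ | ⟨hn0, _⟩
          · rw [huz]; exact hz
          · have := i.isLt; simp only [Fin.coe_castSucc] at hn0; omega
        · rcases H.vertex_cases h h' (e1.trans hpa.symm) with
            ⟨rfl, rfl, _⟩ | ⟨_, _, rfl⟩ | ⟨_, _, rfl⟩ | ⟨hn0, _, _⟩ | ⟨hn0, _, _⟩
          · exact hu'
          · exact hu'
          · exact hv'
          · have := i.isLt; simp only [Fin.coe_castSucc] at hn0; omega
          · have := i.isLt; simp only [Fin.coe_castSucc] at hn0; omega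
      have hv : v ∈ Y := by
        rcases mem_subdivPiece.mp b.2 with ⟨z, hz, hza⟩ | ⟨u', v', h', i', hu', hv', hpa⟩
        · rcases H.eq_phi h (e2.trans hza.symm) with ⟨hn0, _⟩ | ⟨_, hvz⟩
          · simp only [Fin.val_succ] at hn0; omega
          · rw [hvz]; exact hz
        · rcases H.vertex_cases h h' (e2.trans hpa.symm) with
            ⟨rfl, rfl, _⟩ | ⟨hn0, _, _⟩ | ⟨hn0, _, _⟩ | ⟨_, _, rfl⟩ | ⟨_, _, rfl⟩
          · exact hv'
          · simp only [Fin.val_succ] at hn0; omega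
          · simp only [Fin.val_succ] at hn0; omega
          · exact hu'
          · exact hv'
      exact ⟨⟨u, hu⟩, ⟨v, hv⟩, h, i, Subtype.ext e1, Subtype.ext e2⟩
    · rintro ⟨y, y', h, i, e1, e2⟩
      exact (harcs a.1 b.1).mpr
        ⟨y.1, y'.1, h, i, congrArg Subtype.val e1, congrArg Subtype.val e2⟩

end Restrict

section Compose
variable {U V W : Type*} {D : U → U → Prop} {S : V → V → Prop}
variable (m : ∀ u v, D u v → ℕ) (q : ∀ u v (h : D u v), Fin (m u v h + 1) → V)
variable (n : ∀ a b, S a b → ℕ)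
variable (σ : ∀ u v (h : D u v) (j : Fin (m u v h)), S (q u v h j.castSucc) (q u v h j.succ))

/-- length of the `j`-th segment of the concatenated path. -/
def cdd (u v : U) (h : D u v) (j : ℕ) : ℕ :=
  if hj : j < m u v h then n _ _ (σ u v h ⟨j, hj⟩) else 1

/-- partial sums of segment lengths. -/
def cs (u v : U) (h : D u v) (t : ℕ) : ℕ :=
  ∑ j ∈ Finset.range t, cdd m q n σ u v h j

/-- total length of the concatenated path. -/
def cN (u v : U) (h : D u v) : ℕ := cs m q n σ u v h (m u v h)

/-- index of the segment containing position `t`. -/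
def cloc (u v : U) (h : D u v) (t : ℕ) : ℕ :=
  Nat.findGreatest (fun j => cs m q n σ u v h j ≤ t) (m u v h)

theorem cs_succ (u v : U) (h : D u v) (t : ℕ) :
    cs m q n σ u v h (t + 1) = cs m q n σ u v h t + cdd m q n σ u v h t :=
  Finset.sum_range_succ _ _

theorem cdd_pos (hn1 : ∀ a b (hab : S a b), 1 ≤ n a b hab) (u v : U) (h : D u v) (j : ℕ) :
    1 ≤ cdd m q n σ u v h j := by
  unfold cdd; split
  · apply hn1
  · exact le_refl 1

theorem cs_mono (u v : U) (h : D u v) {s t : ℕ} (hst : s ≤ t) :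
    cs m q n σ u v h s ≤ cs m q n σ u v h t :=
  Finset.sum_le_sum_of_subset (Finset.range_subset_range.mpr hst)

theorem cs_strict (hn1 : ∀ a b (hab : S a b), 1 ≤ n a b hab) (u v : U) (h : D u v)
    {s t : ℕ} (hst : s < t) :
    cs m q n σ u v h s < cs m q n σ u v h t := by
  have h1 : cs m q n σ u v h s + 1 ≤ cs m q n σ u v h (s + 1) := by
    rw [cs_succ]
    have := cdd_pos m q n σ hn1 u v h s
    omega
  have h2 := cs_mono m q n σ u v h (show s + 1 ≤ t from hst)
  omega

theorem cloc_le (u v : U) (h : D u v) (t : ℕ) : cloc m q n σ u v h t ≤ m u v h :=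
  Nat.findGreatest_le _

theorem cs_cloc_le (u v : U) (h : D u v) (t : ℕ) :
    cs m q n σ u v h (cloc m q n σ u v h t) ≤ t := by
  unfold cloc
  exact Nat.findGreatest_spec (P := fun j => cs m q n σ u v h j ≤ t) (Nat.zero_le _)
    (by simp [cs])

theorem cloc_lt (u v : U) (h : D u v) {t : ℕ} (ht : t < cN m q n σ u v h) :
    cloc m q n σ u v h t < m u v h := by
  rcases eq_or_lt_of_le (cloc_le m q n σ u v h t) with he | hlt
  · have := cs_cloc_le m q n σ u v h t
    rw [he] at this
    exact absurd ht (by rw [cN] at *; omega)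
  · exact hlt

theorem lt_cs_cloc_succ (u v : U) (h : D u v) {t : ℕ} (ht : t < cN m q n σ u v h) :
    t < cs m q n σ u v h (cloc m q n σ u v h t + 1) := by
  by_contra hc
  push_neg at hc
  have hle : cloc m q n σ u v h t + 1 ≤ m u v h := cloc_lt m q n σ u v h ht
  have := Nat.le_findGreatest (P := fun j => cs m q n σ u v h j ≤ t) hle hc
  rw [cloc] at this
  omega

theorem cloc_eq (u v : U) (h : D u v) (j : ℕ) (hj : j < m u v h) (i : ℕ)
    (hi : i < cdd m q n σ u v h j) : cloc m q n σ u v h (cs m q n σ u v h j + i) = j := by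
  have h1 : j ≤ cloc m q n σ u v h (cs m q n σ u v h j + i) :=
    Nat.le_findGreatest (P := fun j' => cs m q n σ u v h j' ≤ cs m q n σ u v h j + i) hj.le
      (Nat.le_add_right _ _)
  rcases eq_or_lt_of_le h1 with he | hlt
  · exact he.symm
  · exfalso
    have hP : cs m q n σ u v h (cloc m q n σ u v h (cs m q n σ u v h j + i)) ≤
        cs m q n σ u v h j + i := cs_cloc_le m q n σ u v h _
    have : cs m q n σ u v h (j + 1) ≤
        cs m q n σ u v h (cloc m q n σ u v h (cs m q n σ u v h j + i)) :=
      cs_mono m q n σ u v h hlt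
    rw [cs_succ] at this
    omega

end Compose

section Compose2
variable {U V W : Type*} {D : U → U → Prop} {S : V → V → Prop} {T : W → W → Prop}
variable (m : ∀ u v, D u v → ℕ) (q : ∀ u v (h : D u v), Fin (m u v h + 1) → V)
variable (ψ : U → V) (φ : V → W) (n : ∀ a b, S a b → ℕ)
variable (p : ∀ a b (h : S a b), Fin (n a b h + 1) → W)
variable (σ : ∀ u v (h : D u v) (j : Fin (m u v h)), S (q u v h j.castSucc) (q u v h j.succ))

/-- the concatenated path replacing the arc `u → v`. -/
def cP (u v : U) (h : D u v) (t : Fin (cN m q n σ u v h + 1)) : W :=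
  if ht : t.val < cN m q n σ u v h then
    p _ _ (σ u v h ⟨cloc m q n σ u v h t.val, cloc_lt m q n σ u v h ht⟩)
      ⟨t.val - cs m q n σ u v h (cloc m q n σ u v h t.val), by
        have h1 := cs_cloc_le m q n σ u v h t.val
        have h2 := lt_cs_cloc_succ m q n σ u v h ht
        rw [cs_succ] at h2
        have h3 : cdd m q n σ u v h (cloc m q n σ u v h t.val) =
            n _ _ (σ u v h ⟨cloc m q n σ u v h t.val, cloc_lt m q n σ u v h ht⟩) :=
          dif_pos _
        omega⟩
  else φ (ψ v)

/-- congruence helper for segments of the concatenated path. -/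
theorem p_congr (u v : U) (h : D u v) (idx idx' : Fin (m u v h)) (he : idx = idx')
    (o : Fin (n _ _ (σ u v h idx) + 1)) (o' : Fin (n _ _ (σ u v h idx') + 1))
    (ho : o.val = o'.val) :
    p _ _ (σ u v h idx) o = p _ _ (σ u v h idx') o' := by
  subst he
  exact congrArg _ (Fin.ext ho)

/-- normal form of an interior-or-start position of the concatenated path -/
theorem cP_spec (u v : U) (h : D u v) (t : Fin (cN m q n σ u v h + 1))
    (ht : t.val < cN m q n σ u v h) :
    ∃ (j : ℕ) (hj : j < m u v h) (o : ℕ) (ho : o < n _ _ (σ u v h ⟨j, hj⟩)),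
      t.val = cs m q n σ u v h j + o ∧
      cP m q ψ φ n p σ u v h t = p _ _ (σ u v h ⟨j, hj⟩) ⟨o, Nat.lt_succ_of_lt ho⟩ := by
  have h1 := cs_cloc_le m q n σ u v h t.val
  have h2 := lt_cs_cloc_succ m q n σ u v h ht
  rw [cs_succ] at h2
  have hj := cloc_lt m q n σ u v h ht
  have h3 : cdd m q n σ u v h (cloc m q n σ u v h t.val) =
      n _ _ (σ u v h ⟨cloc m q n σ u v h t.val, hj⟩) := dif_pos _
  refine ⟨cloc m q n σ u v h t.val, hj, t.val - cs m q n σ u v h (cloc m q n σ u v h t.val),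
    by omega, by omega, ?_⟩
  rw [cP, dif_pos ht]

/-- evaluation of the concatenated path at an explicit position in segment `j`. -/
theorem cP_eval (Hq : IsSubdivisionVia D S ψ m q) (Hp : IsSubdivisionVia S T φ n p)
    (u v : U) (h : D u v) (j : ℕ) (hj : j < m u v h) (i : ℕ)
    (hi : i ≤ n _ _ (σ u v h ⟨j, hj⟩))
    (hb : cs m q n σ u v h j + i < cN m q n σ u v h + 1) :
    cP m q ψ φ n p σ u v h ⟨cs m q n σ u v h j + i, hb⟩ =
      p _ _ (σ u v h ⟨j, hj⟩) ⟨i, Nat.lt_succ_of_le hi⟩ := by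
  have hn1 := Hp.2.1
  have hcddj : cdd m q n σ u v h j = n _ _ (σ u v h ⟨j, hj⟩) := dif_pos hj
  rcases lt_or_eq_of_le hi with hlt | heq
  · -- inside segment j
    have ht : cs m q n σ u v h j + i < cN m q n σ u v h := by
      have h1 : cs m q n σ u v h j + i < cs m q n σ u v h (j + 1) := by
        rw [cs_succ]; omega
      have h2 : cs m q n σ u v h (j + 1) ≤ cN m q n σ u v h :=
        cs_mono m q n σ u v h hj
      omega
    rw [cP, dif_pos ht]
    have hcl : cloc m q n σ u v h (cs m q n σ u v h j + i) = j :=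
      cloc_eq m q n σ u v h j hj i (by omega)
    refine p_congr m q n p σ u v h _ _ (Fin.ext hcl) _ _ ?_
    show cs m q n σ u v h j + i -
        cs m q n σ u v h (cloc m q n σ u v h (cs m q n σ u v h j + i)) = i
    rw [hcl]; omega
  · -- boundary: i = length of segment j
    rcases Nat.lt_or_ge (j + 1) (m u v h) with hj2 | hj2
    · -- next segment exists
      have hteq : cs m q n σ u v h j + i = cs m q n σ u v h (j + 1) := by
        rw [cs_succ]; omega
      have ht : cs m q n σ u v h j + i < cN m q n σ u v h := by
        rw [hteq]; exact cs_strict m q n σ hn1 u v h hj2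
      rw [cP, dif_pos ht]
      have hcl : cloc m q n σ u v h (cs m q n σ u v h j + i) = j + 1 := by
        have h0 := cloc_eq m q n σ u v h (j + 1) hj2 0
          (cdd_pos m q n σ hn1 u v h (j + 1))
        rw [Nat.add_zero] at h0
        rw [hteq]; exact h0
      rw [p_congr m q n p σ u v h _ ⟨j + 1, hj2⟩ (Fin.ext hcl) _ ⟨0, Nat.succ_pos _⟩
        (by show cs m q n σ u v h j + i -
              cs m q n σ u v h (cloc m q n σ u v h (cs m q n σ u v h j + i)) = 0
            rw [hcl]; omega)]
      rw [Hp.p_zero (σ u v h ⟨j + 1, hj2⟩) _ rfl,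
        Hp.p_last (σ u v h ⟨j, hj⟩) _ (by simp [heq])]
      exact congrArg φ (congrArg (q u v h) (Fin.ext (by simp)))
    · -- last segment: position is the end of the whole path
      have hjm : j + 1 = m u v h := by omega
      have hteq : cs m q n σ u v h j + i = cN m q n σ u v h := by
        rw [cN, ← hjm, cs_succ]; omega
      rw [cP, dif_neg (by show ¬ (cs m q n σ u v h j + i < cN m q n σ u v h); omega)]
      rw [Hp.p_last (σ u v h ⟨j, hj⟩) _ (by simp [heq])]
      refine congrArg φ ?_
      have hlast := (Hq.2.2.1 u v h).2
      rw [← hlast]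
      exact congrArg (q u v h) (Fin.ext (by simp [hjm]))

end Compose2

theorem cs_zero {U V : Type*} {D : U → U → Prop} {S : V → V → Prop}
    (m : ∀ u v, D u v → ℕ) (q : ∀ u v (h : D u v), Fin (m u v h + 1) → V)
    (n : ∀ a b, S a b → ℕ)
    (σ : ∀ u v (h : D u v) (j : Fin (m u v h)), S (q u v h j.castSucc) (q u v h j.succ))
    (u v : U) (h : D u v) : cs m q n σ u v h 0 = 0 := rfl

theorem IsSubdivision.trans {U V W : Type*} {D : U → U → Prop} {S : V → V → Prop}
    {T : W → W → Prop} (H1 : IsSubdivision D S) (H2 : IsSubdivision S T) :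
    IsSubdivision D T := by
  obtain ⟨ψ, m, q, Hq⟩ := H1
  obtain ⟨φ, n, p, Hp⟩ := H2
  have hn1 := Hp.2.1
  have hm1 := Hq.2.1
  have q_inj := Hq.2.2.2.1
  have q_ends := Hq.2.2.1
  have q_int := Hq.2.2.2.2.1
  have q_cross := Hq.2.2.2.2.2.1
  have q_cover := Hq.2.2.2.2.2.2.1
  have q_arcs := Hq.2.2.2.2.2.2.2
  have p_cover := Hp.2.2.2.2.2.2.1
  have p_arcs := Hp.2.2.2.2.2.2.2
  set σ : ∀ u v (h : D u v) (j : Fin (m u v h)), S (q u v h j.castSucc) (q u v h j.succ) :=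
    fun u v h j => (q_arcs _ _).mpr ⟨u, v, h, j, rfl, rfl⟩ with hσ
  have hcdd : ∀ u v (h : D u v) (j : Fin (m u v h)),
      cdd m q n σ u v h j.val = n _ _ (σ u v h j) := by
    intro u v h j
    rw [cdd, dif_pos j.isLt]
  -- classification of a concatenated-path vertex equal to a branch value of `p`
  have hphi : ∀ u v (h : D u v) (t : Fin (cN m q n σ u v h + 1)),
      t.val < cN m q n σ u v h → ∀ z : V, cP m q ψ φ n p σ u v h t = φ z →
      ∃ jj : Fin (m u v h + 1), jj.val < m u v h ∧ t.val = cs m q n σ u v h jj.val ∧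
        q u v h jj = z ∧ (0 < t.val → 0 < jj.val) := by
    intro u v h t ht z e
    obtain ⟨j, hj, o, ho, hteq, heval⟩ := cP_spec m q ψ φ n p σ u v h t ht
    rw [heval] at e
    rcases Hp.eq_phi _ e with ⟨h0, hz⟩ | ⟨hn0, _⟩
    · have ho0 : o = 0 := h0
      refine ⟨(⟨j, hj⟩ : Fin (m u v h)).castSucc, by simp only [Fin.coe_castSucc]; exact hj, by simpa [ho0] using hteq,
        hz, ?_⟩
      intro htpos
      simp only [Fin.coe_castSucc]
      rcases Nat.eq_zero_or_pos j with hj0 | hj0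
      · subst hj0; rw [cs_zero] at hteq; omega
      · exact hj0
    · have : o = n _ _ (σ u v h ⟨j, hj⟩) := hn0
      omega
  refine ⟨fun u => φ (ψ u), fun u v h => cN m q n σ u v h, cP m q ψ φ n p σ,
    fun a b hab => Hq.1 (Hp.1 hab), ?_, ?_, ?_, ?_, ?_, ?_, ?_⟩
  · -- length ≥ 1
    intro u v h
    have h0 := cs_strict m q n σ hn1 u v h (show 0 < m u v h from hm1 u v h)
    rw [cs_zero] at h0
    show 1 ≤ cN m q n σ u v h
    have hNN : cN m q n σ u v h = cs m q n σ u v h (m u v h) := rfl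
    omega
  · -- endpoints
    intro u v h
    constructor
    · have hb : cs m q n σ u v h 0 + 0 < cN m q n σ u v h + 1 := by
        have := cs_mono m q n σ u v h (Nat.zero_le (m u v h))
        have hz : cs m q n σ u v h 0 = 0 := cs_zero m q n σ u v h
        have hNN : cN m q n σ u v h = cs m q n σ u v h (m u v h) := rfl
        omega
      have e0 : (0 : Fin (cN m q n σ u v h + 1)) = ⟨cs m q n σ u v h 0 + 0, hb⟩ :=
        Fin.ext (by simp [cs_zero])
      rw [e0, cP_eval m q ψ φ n p σ Hq Hp u v h 0 (hm1 u v h) 0 (Nat.zero_le _) hb,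
        Hp.p_zero _ _ rfl]
      refine congrArg φ ?_
      have : ((⟨0, hm1 u v h⟩ : Fin (m u v h)).castSucc) = (0 : Fin (m u v h + 1)) :=
        Fin.ext (by simp)
      rw [this, (q_ends u v h).1]
    · rw [cP, dif_neg (by simp)]
  · -- injectivity of the concatenated path
    intro u v h t t' e
    have hmix : ∀ (t t' : Fin (cN m q n σ u v h + 1)), t.val < cN m q n σ u v h →
        t'.val = cN m q n σ u v h → cP m q ψ φ n p σ u v h t = cP m q ψ φ n p σ u v h t' →
        False := by
      intro t t' ht ht' e
      have e2 : cP m q ψ φ n p σ u v h t' = φ (ψ v) := by rw [cP, dif_neg (by omega)]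
      obtain ⟨jj, hjjm, _, hqz, _⟩ := hphi u v h t ht (ψ v) (e.trans e2)
      have : jj = Fin.last _ := q_inj u v h (hqz.trans (q_ends u v h).2.symm)
      rw [this] at hjjm
      simp at hjjm
    rcases Nat.lt_or_ge t.val (cN m q n σ u v h) with ht | ht
    · rcases Nat.lt_or_ge t'.val (cN m q n σ u v h) with ht' | ht'
      · obtain ⟨j, hj, o, ho, hteq, heval⟩ := cP_spec m q ψ φ n p σ u v h t ht
        obtain ⟨j', hj', o', ho', hteq', heval'⟩ := cP_spec m q ψ φ n p σ u v h t' ht'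
        rw [heval, heval'] at e
        have hjj' : j = j' ∧ o = o' := by
          rcases Hp.vertex_cases _ _ e with ⟨e1, _, eo⟩ | ⟨e1, e2, e3⟩ | ⟨e1, e2, _⟩ |
            ⟨e1, _, _⟩ | ⟨e1, _, _⟩
          · have hj12 : (⟨j, hj⟩ : Fin (m u v h)).castSucc = (⟨j', hj'⟩ : Fin _).castSucc :=
              q_inj u v h e1
            have : j = j' := by simpa using congrArg Fin.val hj12
            exact ⟨this, eo⟩
          · have hj12 : (⟨j, hj⟩ : Fin (m u v h)).castSucc = (⟨j', hj'⟩ : Fin _).castSucc :=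
              q_inj u v h e3
            have : j = j' := by simpa using congrArg Fin.val hj12
            have ho0 : o = 0 := e1
            have ho0' : o' = 0 := e2
            exact ⟨this, by omega⟩
          · have : o' = n _ _ (σ u v h ⟨j', hj'⟩) := e2
            omega
          · have : o = n _ _ (σ u v h ⟨j, hj⟩) := e1
            omega
          · have : o = n _ _ (σ u v h ⟨j, hj⟩) := e1
            omega
        obtain ⟨h5, h6⟩ := hjj'
        subst h5; subst h6
        exact Fin.ext (by omega)
      · exfalso
        have hb' : t'.val < cN m q n σ u v h + 1 := t'.isLt
        exact hmix t t' ht (by omega) e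
    · rcases Nat.lt_or_ge t'.val (cN m q n σ u v h) with ht' | ht'
      · exfalso
        have hb : t.val < cN m q n σ u v h + 1 := t.isLt
        exact hmix t' t ht' (by omega) e.symm
      · have hb : t.val < cN m q n σ u v h + 1 := t.isLt
        have hb' : t'.val < cN m q n σ u v h + 1 := t'.isLt
        exact Fin.ext (by omega)
  · -- interior vertices avoid branch vertices
    intro u v h t h0 hlt z e
    obtain ⟨jj, hjjm, _, hqz, hpos⟩ := hphi u v h t hlt (ψ z) e
    exact q_int u v h jj (hpos h0) hjjm z hqz
  · -- interior vertices of different paths are distinct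
    intro u v h u' v' h' t t' h1 h2 h3 h4 e
    obtain ⟨j, hj, o, ho, hteq, heval⟩ := cP_spec m q ψ φ n p σ u v h t h2
    obtain ⟨j', hj', o', ho', hteq', heval'⟩ := cP_spec m q ψ φ n p σ u' v' h' t' h4
    rw [heval, heval'] at e
    rcases Hp.vertex_cases _ _ e with ⟨e1, e2, eo⟩ | ⟨e1, e2, e3⟩ | ⟨e1, e2, _⟩ |
      ⟨e1, _, _⟩ | ⟨e1, _, _⟩
    · obtain ⟨hu, hv, hjj⟩ := Hq.pair_cases h h' e1 e2
      subst hu; subst hv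
      refine ⟨rfl, rfl, ?_⟩
      have hcs : ∀ t0, cs m q n σ u v h' t0 = cs m q n σ u v h t0 := fun _ => rfl
      have heo : o = o' := eo
      have hjj2 : j = j' := hjj
      subst hjj2
      rw [hteq, hteq', hcs]
      omega
    · have ho0 : o = 0 := e1
      have ho0' : o' = 0 := e2
      have hj0 : 0 < j := by
        rcases Nat.eq_zero_or_pos j with hj0 | hj0
        · subst hj0; rw [cs_zero] at hteq; omega
        · exact hj0
      have hj0' : 0 < j' := by
        rcases Nat.eq_zero_or_pos j' with hj0' | hj0'
        · subst hj0'; rw [cs_zero] at hteq'; omega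
        · exact hj0'
      obtain ⟨hu, hv, hjj⟩ := q_cross u v h u' v' h'
        (⟨j, hj⟩ : Fin (m u v h)).castSucc (⟨j', hj'⟩ : Fin (m u' v' h')).castSucc
        (by simpa using hj0) (by simpa using hj) (by simpa using hj0') (by simpa using hj') e3
      subst hu; subst hv
      refine ⟨rfl, rfl, ?_⟩
      have hcs : ∀ t0, cs m q n σ u v h' t0 = cs m q n σ u v h t0 := fun _ => rfl
      have hjj2 : j = j' := hjj
      subst hjj2
      rw [hteq, hteq', hcs]
      omega
    · exfalso
      have : o' = n _ _ (σ u' v' h' ⟨j', hj'⟩) := e2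
      omega
    · exfalso
      have : o = n _ _ (σ u v h ⟨j, hj⟩) := e1
      omega
    · exfalso
      have : o = n _ _ (σ u v h ⟨j, hj⟩) := e1
      omega
  · -- coverage
    intro w
    rcases p_cover w with ⟨z, hz⟩ | ⟨a, b, hS, i, hi⟩
    · rcases q_cover z with ⟨u0, hu0⟩ | ⟨u, v, h, jj, hjj⟩
      · exact Or.inl ⟨u0, by show φ (ψ u0) = w; rw [hu0, hz]⟩
      · rcases Nat.eq_zero_or_pos jj.val with hv0 | hv0
        · refine Or.inl ⟨u, ?_⟩
          show φ (ψ u) = w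
          have : jj = 0 := Fin.ext (by simp only [Fin.val_zero]; exact hv0)
          rw [← (q_ends u v h).1, ← this, hjj, hz]
        rcases eq_or_lt_of_le (Nat.lt_succ_iff.mp jj.isLt) with hvm | hvm
        · refine Or.inl ⟨v, ?_⟩
          show φ (ψ v) = w
          have : jj = Fin.last _ := Fin.ext (by simp only [Fin.val_last]; exact hvm)
          rw [← (q_ends u v h).2, ← this, hjj, hz]
        · have hb : cs m q n σ u v h jj.val + 0 < cN m q n σ u v h + 1 := by
            have := cs_mono m q n σ u v h (Nat.le_of_lt hvm)
            have hNN : cN m q n σ u v h = cs m q n σ u v h (m u v h) := rfl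
            omega
          refine Or.inr ⟨u, v, h, ⟨cs m q n σ u v h jj.val + 0, hb⟩, ?_⟩
          rw [cP_eval m q ψ φ n p σ Hq Hp u v h jj.val hvm 0 (Nat.zero_le _) hb,
            Hp.p_zero _ _ rfl]
          have : (⟨jj.val, hvm⟩ : Fin (m u v h)).castSucc = jj := Fin.ext (by simp)
          rw [this, hjj, hz]
    · obtain ⟨u, v, h, jj, f1, f2⟩ := (q_arcs a b).mp hS
      subst f1; subst f2
      have hb : cs m q n σ u v h jj.val + i.val < cN m q n σ u v h + 1 := by
        have h1 : cs m q n σ u v h (jj.val + 1) ≤ cN m q n σ u v h :=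
          cs_mono m q n σ u v h jj.isLt
        rw [cs_succ] at h1
        have h2 := hcdd u v h jj
        have h3 : i.val < n _ _ (σ u v h jj) + 1 := i.isLt
        omega
      refine Or.inr ⟨u, v, h, ⟨cs m q n σ u v h jj.val + i.val, hb⟩, ?_⟩
      rw [cP_eval m q ψ φ n p σ Hq Hp u v h jj.val jj.isLt i.val
        (Nat.lt_succ_iff.mp i.isLt) hb]
      exact hi
  · -- arc characterization
    intro x y
    constructor
    · intro hT
      obtain ⟨a, b, hS, i, e1, e2⟩ := (p_arcs x y).mp hT
      obtain ⟨u, v, h, jj, f1, f2⟩ := (q_arcs a b).mp hS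
      subst f1; subst f2
      have h2 := hcdd u v h jj
      have hlt : cs m q n σ u v h jj.val + i.val < cN m q n σ u v h := by
        have h1 : cs m q n σ u v h (jj.val + 1) ≤ cN m q n σ u v h :=
          cs_mono m q n σ u v h jj.isLt
        rw [cs_succ] at h1
        have h3 : i.val < n _ _ (σ u v h jj) := i.isLt
        omega
      refine ⟨u, v, h, ⟨cs m q n σ u v h jj.val + i.val, hlt⟩, ?_, ?_⟩
      · have hc : ((⟨cs m q n σ u v h jj.val + i.val, hlt⟩ : Fin (cN m q n σ u v h)).castSucc)
            = ⟨cs m q n σ u v h jj.val + i.val, Nat.lt_succ_of_lt hlt⟩ := Fin.ext (by simp)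
        rw [hc, cP_eval m q ψ φ n p σ Hq Hp u v h jj.val jj.isLt i.val
          (le_of_lt i.isLt) (Nat.lt_succ_of_lt hlt)]
        rw [← e1]
        exact p_congr m q n p σ u v h jj jj rfl _ _ (by simp)
      · have hb2 : cs m q n σ u v h jj.val + (i.val + 1) < cN m q n σ u v h + 1 := by omega
        have hc : ((⟨cs m q n σ u v h jj.val + i.val, hlt⟩ : Fin (cN m q n σ u v h)).succ)
            = ⟨cs m q n σ u v h jj.val + (i.val + 1), hb2⟩ := Fin.ext (by simp; omega)
        rw [hc, cP_eval m q ψ φ n p σ Hq Hp u v h jj.val jj.isLt (i.val + 1)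
          i.isLt hb2]
        rw [← e2]
        exact p_congr m q n p σ u v h jj jj rfl _ _ (by simp)
    · rintro ⟨u, v, h, tt, e1, e2⟩
      have htt : (tt.castSucc).val < cN m q n σ u v h := by simpa using tt.isLt
      obtain ⟨j, hj, o, ho, hteq, heval⟩ := cP_spec m q ψ φ n p σ u v h tt.castSucc htt
      rw [heval] at e1
      have h2 := hcdd u v h ⟨j, hj⟩
      have hb2 : cs m q n σ u v h j + (o + 1) < cN m q n σ u v h + 1 := by
        have h1 : cs m q n σ u v h (j + 1) ≤ cN m q n σ u v h :=
          cs_mono m q n σ u v h hj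
        rw [cs_succ] at h1
        omega
      have hc : tt.succ = (⟨cs m q n σ u v h j + (o + 1), hb2⟩ :
          Fin (cN m q n σ u v h + 1)) := by
        apply Fin.ext
        simp only [Fin.val_succ]
        simp only [Fin.coe_castSucc] at hteq
        omega
      rw [hc, cP_eval m q ψ φ n p σ Hq Hp u v h j hj (o + 1) ho hb2] at e2
      refine (p_arcs x y).mpr ⟨q u v h (⟨j, hj⟩ : Fin (m u v h)).castSucc,
        q u v h (⟨j, hj⟩ : Fin (m u v h)).succ, σ u v h ⟨j, hj⟩, ⟨o, ho⟩, ?_, ?_⟩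
      · rw [← e1]
        exact p_congr m q n p σ u v h _ _ rfl _ _ (by simp)
      · rw [← e2]
        exact p_congr m q n p σ u v h _ _ rfl _ _ (by simp)

/-- If `G` contains an induced subdivision of `Q` and `Q` contains an induced
subdivision of `P`, then `G` contains an induced subdivision of `P`. -/
theorem ContainsInducedSubdivision.trans_host {U₁ U₂ W : Type*} {P : U₁ → U₁ → Prop}
    {Q : U₂ → U₂ → Prop} {G : W → W → Prop}
    (h2 : ContainsInducedSubdivision P Q) (h1 : ContainsInducedSubdivision Q G) :
    ContainsInducedSubdivision P G := by
  classical
  obtain ⟨X, φ, n, p, HX⟩ := h1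
  obtain ⟨Y, HY⟩ := h2
  have hres := HX.restrict_pattern Y
  have hcomp := HY.trans hres
  refine ⟨Subtype.val '' (subdivPiece φ n p Y), ?_⟩
  have hbij : Function.Bijective
      (fun a : (subdivPiece φ n p Y : Set X) =>
        (⟨a.1.1, ⟨a.1, a.2, rfl⟩⟩ : (Subtype.val '' (subdivPiece φ n p Y) : Set W))) := by
    constructor
    · intro a b hab
      simp only [Subtype.mk.injEq] at hab
      exact Subtype.ext (Subtype.ext (Subtype.mk.inj hab))
    · rintro ⟨w, hw⟩
      obtain ⟨a, ha, hav⟩ := hw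
      exact ⟨⟨a, ha⟩, Subtype.ext hav⟩
  exact hcomp.host_iso (Equiv.ofBijective _ hbij) (fun a b => Iff.rfl)

/-- From a subdivision on a digraph that embeds as an induced subdigraph of `H₁`,
get induced-subdivision containment in `H₁`. -/
theorem IsSubdivision.to_containment {U W₀ W₁ : Type*} {P : U → U → Prop}
    {S₀ : W₀ → W₀ → Prop} {H₁ : W₁ → W₁ → Prop}
    (h : IsSubdivision P S₀) (f : W₀ → W₁) (hinj : Function.Injective f)
    (harc : ∀ a b, S₀ a b ↔ H₁ (f a) (f b)) : ContainsInducedSubdivision P H₁ := by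
  refine ⟨Set.range f, ?_⟩
  have hbij : Function.Bijective (fun w : W₀ => (⟨f w, ⟨w, rfl⟩⟩ : (Set.range f : Set W₁))) := by
    constructor
    · intro a b hab
      simp only [Subtype.mk.injEq] at hab
      exact hinj (congrArg Subtype.val hab)
    · rintro ⟨w, ⟨w₀, rfl⟩⟩
      exact ⟨w₀, rfl⟩
  exact h.host_iso (Equiv.ofBijective _ hbij) harc

/-- The digraph obtained from a digraph `G₁` (on `C`) and the restriction of `D` to `B`
by taking their disjoint union (no arcs between the two sides). -/
def glue {C B : Type*} (G₁ : C → C → Prop) (DB : B → B → Prop) :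
    C ⊕ B → C ⊕ B → Prop := fun p q =>
  match p, q with
  | Sum.inl x, Sum.inl y => G₁ x y
  | Sum.inr x, Sum.inr y => DB x y
  | _, _ => False

theorem stmt7_backward {A B C : Type} (D : A ⊕ B → A ⊕ B → Prop) (G₁ : C → C → Prop)
    (hloopless : ∀ p, ¬ D p p)
    (hAB : ∀ (a : A) (b : B), ¬ D (Sum.inl a) (Sum.inr b) ∧ ¬ D (Sum.inr b) (Sum.inl a))
    (hcont : ContainsInducedSubdivision (fun a a' : A => D (Sum.inl a) (Sum.inl a')) G₁) :
    ContainsInducedSubdivision D (glue G₁ (fun x y : B => D (Sum.inr x) (Sum.inr y))) := by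
  classical
  obtain ⟨X₁, φ₁, n₁, p₁, H₁⟩ := hcont
  set X : Set (C ⊕ B) := (Sum.inl '' X₁) ∪ Set.range Sum.inr with hX
  have hmemL : ∀ x : X₁, (Sum.inl x.1 : C ⊕ B) ∈ X := fun x => Or.inl ⟨x.1, x.2, rfl⟩
  have hmemR : ∀ b : B, (Sum.inr b : C ⊕ B) ∈ X := fun b => Or.inr ⟨b, rfl⟩
  refine ⟨X, fun u => match u with
    | Sum.inl a => ⟨Sum.inl (φ₁ a).1, hmemL _⟩
    | Sum.inr b => ⟨Sum.inr b, hmemR b⟩,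
    fun u v h => match u, v, h with
    | Sum.inl a, Sum.inl a', h => n₁ a a' h
    | Sum.inr _, Sum.inr _, _ => 1
    | Sum.inl a, Sum.inr b, h => absurd h (hAB a b).1
    | Sum.inr b, Sum.inl a, h => absurd h (hAB a b).2,
    fun u v h => match u, v, h with
    | Sum.inl a, Sum.inl a', h => fun i => ⟨Sum.inl (p₁ a a' h i).1, hmemL _⟩
    | Sum.inr b, Sum.inr b', _ => fun i =>
        if i.val = 0 then ⟨Sum.inr b, hmemR b⟩ else ⟨Sum.inr b', hmemR b'⟩
    | Sum.inl a, Sum.inr b, h => absurd h (hAB a b).1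
    | Sum.inr b, Sum.inl a, h => absurd h (hAB a b).2,
    ?_, ?_, ?_, ?_, ?_, ?_, ?_, ?_⟩
  · -- injectivity of φ
    intro u u' e
    rcases u with a | b <;> rcases u' with a' | b'
    · have e2 : (Sum.inl (φ₁ a).1 : C ⊕ B) = Sum.inl (φ₁ a').1 := congrArg Subtype.val e
      rw [H₁.1 (Subtype.ext (Sum.inl.inj e2))]
    · exact absurd (congrArg Subtype.val e) (by simp)
    · exact absurd (congrArg Subtype.val e) (by simp)
    · have e2 : (Sum.inr b : C ⊕ B) = Sum.inr b' := congrArg Subtype.val e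
      rw [Sum.inr.inj e2]
  · -- lengths
    intro u v h
    rcases u with a | b <;> rcases v with a' | b'
    · exact H₁.2.1 a a' h
    · exact absurd h (hAB a b').1
    · exact absurd h (hAB a' b).2
    · exact le_refl 1
  · -- endpoints
    intro u v h
    rcases u with a | b <;> rcases v with a' | b'
    · exact ⟨Subtype.ext (congrArg Sum.inl (congrArg Subtype.val (H₁.2.2.1 a a' h).1)),
        Subtype.ext (congrArg Sum.inl (congrArg Subtype.val (H₁.2.2.1 a a' h).2))⟩
    · exact absurd h (hAB a b').1
    · exact absurd h (hAB a' b).2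
    · constructor
      · dsimp only
        simp
      · dsimp only
        rw [if_neg (by simp [Fin.last])]
  · -- path injectivity
    intro u v h
    rcases u with a | b <;> rcases v with a' | b'
    · intro i j e
      have e2 : (Sum.inl (p₁ a a' h i).1 : C ⊕ B) = Sum.inl (p₁ a a' h j).1 :=
        congrArg Subtype.val e
      exact H₁.2.2.2.1 a a' h (Subtype.ext (Sum.inl.inj e2))
    · exact absurd h (hAB a b').1
    · exact absurd h (hAB a' b).2
    · intro i j e
      dsimp only at e
      have hi2 : i.val < 2 := i.isLt
      have hj2 : j.val < 2 := j.isLt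
      by_cases hi : i.val = 0 <;> by_cases hj : j.val = 0
      · exact Fin.ext (by omega)
      · rw [if_pos hi, if_neg hj] at e
        have : b = b' := Sum.inr.inj (congrArg Subtype.val e)
        subst this
        exact absurd h (hloopless _)
      · rw [if_neg hi, if_pos hj] at e
        have : b = b' := (Sum.inr.inj (congrArg Subtype.val e)).symm
        subst this
        exact absurd h (hloopless _)
      · exact Fin.ext (by omega)
  · -- interior vertices are new
    intro u v h i h0 hlt z e
    rcases u with a | b <;> rcases v with a' | b'
    · rcases z with a'' | b''
      · exact H₁.2.2.2.2.1 a a' h i h0 hlt a''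
          (Subtype.ext (Sum.inl.inj (congrArg Subtype.val e)))
      · exact absurd (congrArg Subtype.val e) (by simp)
    · exact absurd h (hAB a b').1
    · exact absurd h (hAB a' b).2
    · have hlt1 : i.val < 1 := hlt
      omega
  · -- interior disjointness
    intro u v h u' v' h' i j h1 h2 h3 h4 e
    rcases u with a | b <;> rcases v with a' | b'
    case inl.inr => exact absurd h (hAB a b').1
    case inr.inl => exact absurd h (hAB a' b).2
    case inr.inr =>
      have h2' : i.val < 1 := h2
      omega
    rcases u' with a2 | b2 <;> rcases v' with a2' | b2'
    case inl.inr => exact absurd h' (hAB a2 b2').1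
    case inr.inl => exact absurd h' (hAB a2' b2).2
    case inr.inr =>
      have h4' : j.val < 1 := h4
      omega
    have e2 : (Sum.inl (p₁ a a' h i).1 : C ⊕ B) = Sum.inl (p₁ a2 a2' h' j).1 :=
      congrArg Subtype.val e
    obtain ⟨ha, hb, hv⟩ := H₁.2.2.2.2.2.1 a a' h a2 a2' h' i j h1 h2 h3 h4
      (Subtype.ext (Sum.inl.inj e2))
    exact ⟨congrArg Sum.inl ha, congrArg Sum.inl hb, hv⟩
  · -- coverage
    rintro ⟨wv, hw⟩
    rcases hw with ⟨x, hx, hxv⟩ | ⟨b, hbv⟩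
    · rcases H₁.2.2.2.2.2.2.1 ⟨x, hx⟩ with ⟨u0, hu0⟩ | ⟨a, a', h, i, hi⟩
      · refine Or.inl ⟨Sum.inl u0, Subtype.ext ?_⟩
        show Sum.inl (φ₁ u0).1 = wv
        rw [congrArg Subtype.val hu0]; exact hxv
      · refine Or.inr ⟨Sum.inl a, Sum.inl a', h, i, Subtype.ext ?_⟩
        show Sum.inl (p₁ a a' h i).1 = wv
        rw [congrArg Subtype.val hi]; exact hxv
    · exact Or.inl ⟨Sum.inr b, Subtype.ext hbv⟩
  · -- arcs
    intro a b
    constructor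
    · intro hab
      rcases a with ⟨av, ha⟩
      rcases b with ⟨bv, hb⟩
      rcases av with x | β <;> rcases bv with y | β'
      · have hx : x ∈ X₁ := by
          rcases ha with ⟨x0, hx0, e⟩ | ⟨b0, e⟩
          · rwa [← Sum.inl.inj e]
          · exact absurd e (by simp)
        have hy : y ∈ X₁ := by
          rcases hb with ⟨y0, hy0, e⟩ | ⟨b0, e⟩
          · rwa [← Sum.inl.inj e]
          · exact absurd e (by simp)
        obtain ⟨a₀, a₀', h, i, e1, e2⟩ := (H₁.2.2.2.2.2.2.2 ⟨x, hx⟩ ⟨y, hy⟩).mp hab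
        refine ⟨Sum.inl a₀, Sum.inl a₀', h, i, Subtype.ext ?_, Subtype.ext ?_⟩
        · show Sum.inl (p₁ a₀ a₀' h i.castSucc).1 = Sum.inl x
          rw [congrArg Subtype.val e1]
        · show Sum.inl (p₁ a₀ a₀' h i.succ).1 = Sum.inl y
          rw [congrArg Subtype.val e2]
      · exact hab.elim
      · exact hab.elim
      · refine ⟨Sum.inr β, Sum.inr β', hab, ⟨0, Nat.one_pos⟩, ?_, ?_⟩
        · dsimp only
          simp
        · dsimp only
          rw [if_neg (by simp)]
    · rintro ⟨u, v, h, i, e1, e2⟩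
      rcases u with a0 | b0 <;> rcases v with a0' | b0'
      · subst e1; subst e2
        exact (H₁.2.2.2.2.2.2.2 _ _).mpr ⟨a0, a0', h, i, rfl, rfl⟩
      · exact absurd h (hAB a0 b0').1
      · exact absurd h (hAB a0' b0).2
      · subst e1; subst e2
        have hi0 : i.val = 0 := by have h5 : i.val < 1 := i.isLt; omega
        dsimp only
        rw [if_pos (show (Fin.castSucc i).val = 0 by
            simp only [Fin.coe_castSucc]; exact hi0),
          if_neg (show ¬ ((Fin.succ i).val = 0) by simp)]
        exact h

theorem stmt7_forward {A B C : Type} [Fintype A] [Fintype B] (k : ℕ) (c : B → Fin k)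
    (D : A ⊕ B → A ⊕ B → Prop) (G₁ : C → C → Prop)
    (hAB : ∀ (a : A) (b : B), ¬ D (Sum.inl a) (Sum.inr b) ∧ ¬ D (Sum.inr b) (Sum.inl a))
    (hconnA : ∀ x y : A,
      Relation.ReflTransGen (fun p q : A => D (Sum.inl p) (Sum.inl q) ∨ D (Sum.inl q) (Sum.inl p)) x y)
    (hcB : ∀ x y : B, D (Sum.inr x) (Sum.inr y) → c x = c y)
    (hconnB : ∀ x y : B, c x = c y →
      Relation.ReflTransGen (fun p q : B => D (Sum.inr p) (Sum.inr q) ∨ D (Sum.inr q) (Sum.inr p)) x y)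
    (hcont : ContainsInducedSubdivision D (glue G₁ (fun x y : B => D (Sum.inr x) (Sum.inr y)))) :
    ContainsInducedSubdivision (fun a a' : A => D (Sum.inl a) (Sum.inl a')) G₁ := by
  classical
  rcases isEmpty_or_nonempty A with hA | hA
  · refine ⟨∅, fun a => (hA.false a).elim, fun u v h => 1, fun u v h i => (hA.false u).elim,
      ?_, ?_, ?_, ?_, ?_, ?_, ?_, ?_⟩
    · intro a b e; exact (hA.false a).elim
    · intro u; exact (hA.false u).elim
    · intro u; exact (hA.false u).elim
    · intro u; exact (hA.false u).elim
    · intro u; exact (hA.false u).elim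
    · intro u v h u' v'; exact (hA.false u).elim
    · intro w; exact absurd w.2 (Set.notMem_empty _)
    · intro a b; exact absurd a.2 (Set.notMem_empty _)
  obtain ⟨X, φ, n, p, H⟩ := hcont
  obtain ⟨a₀⟩ := hA
  set DB : B → B → Prop := fun x y => D (Sum.inr x) (Sum.inr y) with hDBdef
  set κ : C ⊕ B → Option (Fin k) :=
    Sum.elim (fun _ => none) (fun b => some (c b)) with hκdef
  set compOf : A ⊕ B → Option (Fin k) :=
    Sum.elim (fun _ => none) (fun b => some (c b)) with hcompdef
  set Yc : Option (Fin k) → Set (A ⊕ B) := fun i => {u | compOf u = i} with hYcdef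
  set Pc : Option (Fin k) → Set X := fun i => subdivPiece φ n p (Yc i) with hPcdef
  have hPc_eq : ∀ i, subdivPiece φ n p (Yc i) = Pc i := fun i => rfl
  -- κ is constant along arcs of the glued graph
  have hglueκ : ∀ w w' : C ⊕ B, glue G₁ DB w w' → κ w = κ w' := by
    intro w w' hg
    rcases w with x | b <;> rcases w' with y | b'
    · rfl
    · exact hg.elim
    · exact hg.elim
    · simp only [hκdef, Sum.elim_inr]
      exact congrArg some (hcB b b' hg)
  have harcκ : ∀ u v (h : D u v) (t : ℕ) (ht : t < n u v h + 1),
      κ (p u v h ⟨t, ht⟩).1 = κ (φ u).1 := by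
    intro u v h t
    induction t with
    | zero => intro ht; rw [H.p_zero h _ rfl]
    | succ t ih =>
      intro ht
      have ht' : t < n u v h + 1 := by omega
      have harc : glue G₁ DB (p u v h ⟨t, ht'⟩).1 (p u v h ⟨t + 1, ht⟩).1 :=
        (H.2.2.2.2.2.2.2 _ _).mpr ⟨u, v, h, ⟨t, by omega⟩, rfl, rfl⟩
      rw [← hglueκ _ _ harc]
      exact ih ht'
  have hpathκ : ∀ u v (h : D u v) (i : Fin (n u v h + 1)), κ (p u v h i).1 = κ (φ u).1 :=
    fun u v h i => harcκ u v h i.val i.isLt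
  have harcφ : ∀ u v (h : D u v), κ (φ u).1 = κ (φ v).1 := by
    intro u v h
    have h1 := harcκ u v h (n u v h) (by omega)
    rw [H.p_last h _ rfl] at h1
    exact h1.symm
  have hcomp_arc : ∀ u v, D u v → compOf u = compOf v := by
    intro u v h
    rcases u with a | b <;> rcases v with a' | b'
    · rfl
    · exact absurd h (hAB a b').1
    · exact absurd h (hAB a' b).2
    · simp only [hcompdef, Sum.elim_inr]
      exact congrArg some (hcB b b' h)
  have hbranchκ : ∀ u v, compOf u = compOf v → κ (φ u).1 = κ (φ v).1 := by
    have hA2 : ∀ a a' : A, κ (φ (Sum.inl a)).1 = κ (φ (Sum.inl a')).1 := by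
      intro a a'
      induction hconnA a a' with
      | refl => rfl
      | tail _ hstep ih =>
        rcases hstep with h | h
        · exact ih.trans (harcφ _ _ h)
        · exact ih.trans (harcφ _ _ h).symm
    have hB2 : ∀ b b' : B, Relation.ReflTransGen
        (fun p q : B => D (Sum.inr p) (Sum.inr q) ∨ D (Sum.inr q) (Sum.inr p)) b b' →
        κ (φ (Sum.inr b)).1 = κ (φ (Sum.inr b')).1 := by
      intro b b' hrt
      induction hrt with
      | refl => rfl
      | tail _ hstep ih =>
        rcases hstep with h | h
        · exact ih.trans (harcφ _ _ h)
        · exact ih.trans (harcφ _ _ h).symm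
    intro u v hc0
    rcases u with a | b <;> rcases v with a' | b'
    · exact hA2 a a'
    · simp [hcompdef] at hc0
    · simp [hcompdef] at hc0
    · simp only [hcompdef, Sum.elim_inr, Option.some.injEq] at hc0
      exact hB2 b b' (hconnB b b' hc0)
  have hsideκ : ∀ i (u : A ⊕ B), u ∈ Yc i → ∀ w : X, w ∈ Pc i → κ w.1 = κ (φ u).1 := by
    intro i u hu w hw
    have hu2 : compOf u = i := hu
    rcases mem_subdivPiece.mp hw with ⟨u', hu', e⟩ | ⟨u₀, v₀, h, idx, hu₀, hv₀, e⟩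
    · rw [← e]
      exact hbranchκ u' u ((show compOf u' = i from hu').trans hu2.symm)
    · rw [← e, hpathκ u₀ v₀ h idx]
      exact hbranchκ u₀ u ((show compOf u₀ = i from hu₀).trans hu2.symm)
  have huniq : ∀ i i' (w : X), w ∈ Pc i → w ∈ Pc i' → i = i' := by
    intro i i' w hw hw'
    rcases mem_subdivPiece.mp hw with ⟨u, hu, e⟩ | ⟨u₀, v₀, h, idx, hu₀, hv₀, e⟩ <;>
      rcases mem_subdivPiece.mp hw' with ⟨u', hu', e'⟩ | ⟨u₀', v₀', h', idx', hu₀', hv₀', e'⟩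
    · have hu2 : compOf u = i := hu
      have hu2' : compOf u' = i' := hu'
      rw [← hu2, ← hu2', H.1 (e.trans e'.symm)]
    · have hu2 : compOf u = i := hu
      rcases H.eq_phi h' (e'.trans e.symm) with ⟨_, he⟩ | ⟨_, he⟩
      · rw [← hu2, ← (show compOf u₀' = i' from hu₀'), he]
      · rw [← hu2, ← (show compOf v₀' = i' from hv₀'), he]
    · have hu2' : compOf u' = i' := hu'
      rcases H.eq_phi h (e.trans e'.symm) with ⟨_, he⟩ | ⟨_, he⟩
      · rw [← (show compOf u₀ = i from hu₀), ← hu2', he]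
      · rw [← (show compOf v₀ = i from hv₀), ← hu2', he]
    · rcases H.vertex_cases h h' (e.trans e'.symm) with
        ⟨h5, _, _⟩ | ⟨_, _, h5⟩ | ⟨_, _, h5⟩ | ⟨_, _, h5⟩ | ⟨_, _, h5⟩
      · rw [← (show compOf u₀ = i from hu₀), ← (show compOf u₀' = i' from hu₀'), h5]
      · rw [← (show compOf u₀ = i from hu₀), ← (show compOf u₀' = i' from hu₀'), h5]
      · rw [← (show compOf u₀ = i from hu₀), ← (show compOf v₀' = i' from hv₀'), h5]
      · rw [← (show compOf v₀ = i from hv₀), ← (show compOf u₀' = i' from hu₀'), h5]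
      · rw [← (show compOf v₀ = i from hv₀), ← (show compOf v₀' = i' from hv₀'), h5]
  -- the chain
  set Bad : Option (Fin k) → Prop :=
    fun i => (Yc i).Nonempty ∧ ∃ j : Fin k, Pc i ⊆ {w : X | κ w.1 = some j} with hBaddef
  set step : Option (Fin k) → Option (Fin k) :=
    fun i => if h : Bad i then some h.2.choose else i with hstepdef
  set ach : ℕ → Option (Fin k) := fun r => step^[r] none with hachdef
  have hach0 : ach 0 = none := rfl
  have hach_succ : ∀ r, ach (r + 1) = step (ach r) := fun r =>
    Function.iterate_succ_apply' step r none
  have hstepBad : ∀ i (hB : Bad i), step i = some hB.2.choose := by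
    intro i hB
    simp only [hstepdef]
    rw [dif_pos hB]
  have hterm : ∃ r, ¬ Bad (ach r) := by
    by_contra hcon
    push_neg at hcon
    have hnext : ∀ r, ach (r + 1) = some (hcon r).2.choose := fun r => by
      rw [hach_succ]; exact hstepBad _ (hcon r)
    have hsub : ∀ r, Pc (ach r) ⊆ {w : X | κ w.1 = some (hcon r).2.choose} :=
      fun r => (hcon r).2.choose_spec
    set Bside : Set X := {w : X | ∃ b : B, w.1 = Sum.inr b} with hBsidedef
    have hBfin : Bside.Finite := by
      have hsubr : Bside ⊆ Subtype.val ⁻¹' (Set.range (Sum.inr : B → C ⊕ B)) := by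
        rintro w ⟨b, hb⟩; exact ⟨b, hb.symm⟩
      exact (((Set.finite_range (Sum.inr : B → C ⊕ B))).preimage
        (Subtype.val_injective.injOn)).subset hsubr
    set CSB : Option (Fin k) → Set X := fun i => {w : X | κ w.1 = i} ∩ Bside with hCSBdef
    have hCSBfin : ∀ i, (CSB i).Finite := fun i => hBfin.subset Set.inter_subset_right
    have hF1 : ∀ r, Pc (ach r) ⊆ CSB (ach (r + 1)) := by
      intro r w hw
      have h1 : κ w.1 = some (hcon r).2.choose := by
        have := hsub r hw; simpa only [Set.mem_setOf_eq] using this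
      constructor
      · show κ w.1 = ach (r + 1)
        rw [h1, hnext r]
      · rcases hwv : w.1 with x | b
        · rw [hwv] at h1; simp [hκdef] at h1
        · exact ⟨b, hwv⟩
    have hPcfin : ∀ r, (Pc (ach r)).Finite := fun r => (hCSBfin _).subset (hF1 r)
    have hYcne : ∀ r, (Yc (ach r)).Nonempty := fun r => (hcon r).1
    -- pigeonhole: the chain repeats
    have hP : ∃ t1, ∃ s, s < t1 ∧ ach s = ach t1 := by
      have hninj : ¬ Function.Injective (fun r : Fin (k + 2) => ach r.val) := by
        intro hinj
        have hcard := Fintype.card_le_of_injective _ hinj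
        simp only [Fintype.card_fin, Fintype.card_option] at hcard
        omega
      rw [Function.not_injective_iff] at hninj
      obtain ⟨x, y, hxy, hne⟩ := hninj
      rcases lt_trichotomy x.val y.val with h | h | h
      · exact ⟨y.val, x.val, h, hxy⟩
      · exact absurd (Fin.ext h) hne
      · exact ⟨x.val, y.val, h, hxy.symm⟩
    obtain ⟨s, hst, hachst⟩ := Nat.find_spec hP
    set t1 := Nat.find hP with ht1def
    have hinjlt : ∀ x y, x < y → y < t1 → ach x ≠ ach y := by
      intro x y hxy hyt e
      exact absurd ⟨x, hxy, e⟩ (Nat.find_min hP hyt)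
    have hs1 : 1 ≤ s := by
      by_contra hs0
      push_neg at hs0
      have hs00 : s = 0 := by omega
      have hnt := hnext (t1 - 1)
      rw [(by omega : t1 - 1 + 1 = t1)] at hnt
      rw [← hachst, hs00, hach0] at hnt
      cases hnt
    -- Finset counting
    set YF : Option (Fin k) → Finset (A ⊕ B) := fun i => (Set.toFinite (Yc i)).toFinset
      with hYFdef
    set PF : ℕ → Finset X := fun r => (hPcfin r).toFinset with hPFdef
    set CF : ℕ → Finset X := fun r => (hCSBfin (ach r)).toFinset with hCFdef
    have hYP : ∀ r, (YF (ach r)).card ≤ (PF r).card := by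
      intro r
      apply Finset.card_le_card_of_injOn (fun u => φ u)
      · intro u hu
        simp only [hYFdef, Finset.mem_coe, Set.Finite.mem_toFinset] at hu
        simp only [hPFdef, Finset.mem_coe, Set.Finite.mem_toFinset]
        exact mem_subdivPiece.mpr (Or.inl ⟨u, hu, rfl⟩)
      · intro u _ u' _ e
        exact H.1 e
    have hCY : ∀ r, (CF r).card ≤ (YF (ach r)).card := by
      intro r
      apply Finset.card_le_card_of_injOn
        (fun w => Sum.elim (fun _ => (Sum.inl a₀ : A ⊕ B)) (fun b => Sum.inr b) w.1)
      · intro w hw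
        simp only [hCFdef, Finset.mem_coe, Set.Finite.mem_toFinset] at hw
        obtain ⟨hκw, b, hb⟩ := hw
        have hκw2 : κ w.1 = ach r := hκw
        simp only [hYFdef, Finset.mem_coe, Set.Finite.mem_toFinset]
        rw [hb]
        simp only [Sum.elim_inr]
        show compOf (Sum.inr b) = ach r
        have h3 : κ (Sum.inr b) = ach r := by rw [← hb]; exact hκw2
        simpa [hcompdef, hκdef] using h3
      · intro w hw w' hw' e
        simp only [Finset.coe_sort_coe, Finset.mem_coe, hCFdef,
          Set.Finite.mem_toFinset] at hw hw'
        obtain ⟨_, b, hb⟩ := hw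
        obtain ⟨_, b', hb'⟩ := hw'
        dsimp only at e
        rw [hb, hb'] at e
        simp only [Sum.elim_inr, Sum.inr.injEq] at e
        exact Subtype.ext (by rw [hb, hb', e])
    have hdisjPF : ∀ x ∈ Finset.Icc (s - 1) (t1 - 1), ∀ y ∈ Finset.Icc (s - 1) (t1 - 1),
        x ≠ y → Disjoint (PF x) (PF y) := by
      intro x hx y hy hne
      rw [Finset.mem_Icc] at hx hy
      have hachne : ach x ≠ ach y := by
        rcases Nat.lt_or_ge x y with h | h
        · exact hinjlt x y h (by omega)
        · exact fun e => (hinjlt y x (by omega) (by omega)) e.symm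
      rw [Finset.disjoint_left]
      intro w hwx hwy
      simp only [hPFdef, Set.Finite.mem_toFinset] at hwx hwy
      exact hachne (huniq _ _ w hwx hwy)
    have hIJ : Finset.Icc (s - 1) (t1 - 1) = insert (s - 1) (Finset.Icc s (t1 - 1)) := by
      ext r
      simp only [Finset.mem_Icc, Finset.mem_insert]
      omega
    have hnotmem : s - 1 ∉ Finset.Icc s (t1 - 1) := by
      simp only [Finset.mem_Icc]; omega
    have hcardbi : ((Finset.Icc (s - 1) (t1 - 1)).biUnion PF).card
        = ∑ r ∈ Finset.Icc (s - 1) (t1 - 1), (PF r).card := Finset.card_biUnion hdisjPF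
    have hsubbi : (Finset.Icc (s - 1) (t1 - 1)).biUnion PF ⊆
        (Finset.Icc s (t1 - 1)).biUnion CF := by
      intro w hw
      rw [Finset.mem_biUnion] at hw ⊢
      obtain ⟨r, hr, hwr⟩ := hw
      rw [Finset.mem_Icc] at hr
      simp only [hPFdef, Set.Finite.mem_toFinset] at hwr
      have hw2 : w ∈ CSB (ach (r + 1)) := hF1 r hwr
      rcases Nat.lt_or_ge (r + 1) t1 with hc1 | hc1
      · refine ⟨r + 1, ?_, ?_⟩
        · rw [Finset.mem_Icc]; omega
        · simp only [hCFdef, Set.Finite.mem_toFinset]; exact hw2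
      · have hrt : r + 1 = t1 := by omega
        refine ⟨s, ?_, ?_⟩
        · rw [Finset.mem_Icc]; omega
        · simp only [hCFdef, Set.Finite.mem_toFinset]
          rw [hachst, ← hrt]
          exact hw2
    have hchain : ∑ r ∈ Finset.Icc (s - 1) (t1 - 1), (YF (ach r)).card
        ≤ ∑ r ∈ Finset.Icc s (t1 - 1), (YF (ach r)).card := by
      calc ∑ r ∈ Finset.Icc (s - 1) (t1 - 1), (YF (ach r)).card
          ≤ ∑ r ∈ Finset.Icc (s - 1) (t1 - 1), (PF r).card :=
            Finset.sum_le_sum (fun r _ => hYP r)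
        _ = ((Finset.Icc (s - 1) (t1 - 1)).biUnion PF).card := hcardbi.symm
        _ ≤ ((Finset.Icc s (t1 - 1)).biUnion CF).card := Finset.card_le_card hsubbi
        _ ≤ ∑ r ∈ Finset.Icc s (t1 - 1), (CF r).card := Finset.card_biUnion_le
        _ ≤ ∑ r ∈ Finset.Icc s (t1 - 1), (YF (ach r)).card :=
            Finset.sum_le_sum (fun r _ => hCY r)
    rw [hIJ, Finset.sum_insert hnotmem] at hchain
    have hzero : (YF (ach (s - 1))).card = 0 := by omega
    obtain ⟨u, hu⟩ := hYcne (s - 1)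
    have hmem : u ∈ YF (ach (s - 1)) := by
      simp only [hYFdef, Set.Finite.mem_toFinset]; exact hu
    rw [Finset.card_eq_zero] at hzero
    rw [hzero] at hmem
    exact absurd hmem (Finset.notMem_empty u)
  set r₀ := Nat.find hterm with hr₀def
  have hr₀ : ¬ Bad (ach r₀) := Nat.find_spec hterm
  have hbefore : ∀ r, r < r₀ → Bad (ach r) := fun r hr => not_not.mp (Nat.find_min hterm hr)
  have hYne : ∀ r, r ≤ r₀ → (Yc (ach r)).Nonempty := by
    intro r
    induction r with
    | zero =>
      intro _
      exact ⟨Sum.inl a₀, show compOf (Sum.inl a₀) = none from rfl⟩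
    | succ r ih =>
      intro hr
      have hBr : Bad (ach r) := hbefore r (by omega)
      obtain ⟨u, hu⟩ := hBr.1
      have hφ : φ u ∈ Pc (ach r) := mem_subdivPiece.mpr (Or.inl ⟨u, hu, rfl⟩)
      have hκφ : κ (φ u).1 = some hBr.2.choose := by
        have := hBr.2.choose_spec hφ
        simpa only [Set.mem_setOf_eq] using this
      rcases hw : (φ u).1 with x | b
      · rw [hw] at hκφ; simp [hκdef] at hκφ
      · rw [hw] at hκφ
        simp only [hκdef, Sum.elim_inr, Option.some.injEq] at hκφ
        refine ⟨Sum.inr b, ?_⟩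
        show compOf (Sum.inr b) = ach (r + 1)
        rw [hach_succ, hstepBad _ hBr]
        simp only [hcompdef, Sum.elim_inr]
        rw [hκφ]
  -- at r₀ the piece lies on the C side
  have hYr₀ : (Yc (ach r₀)).Nonempty := hYne r₀ le_rfl
  have hCside : ∀ w : X, w ∈ Pc (ach r₀) → κ w.1 = none := by
    obtain ⟨u, hu⟩ := hYr₀
    intro w hw
    have hconst := hsideκ (ach r₀) u hu w hw
    rcases hv : κ (φ u).1 with _ | j
    · rw [hconst, hv]
    · exfalso
      apply hr₀
      refine ⟨⟨u, hu⟩, j, ?_⟩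
      intro w' hw'
      show κ w'.1 = some j
      rw [hsideκ _ u hu w' hw', hv]
  -- descent
  have hdescent : ∀ d r, r + d = r₀ →
      ContainsInducedSubdivision (fun x y : (Yc (ach r)) => D x.1 y.1) G₁ := by
    intro d
    induction d with
    | zero =>
      intro r hr
      have hrr : r = r₀ := by omega
      have hC2 : ∀ w : X, w ∈ Pc (ach r) → κ w.1 = none := by
        rw [hrr]; exact hCside
      have hres := H.restrict_pattern (Yc (ach r))
      rw [hPc_eq] at hres
      have hCx : ∀ w : (Pc (ach r) : Set X), ∃ x : C, w.1.1 = Sum.inl x := by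
        intro w
        have hk := hC2 w.1 w.2
        rcases hwv : w.1.1 with x | b
        · exact ⟨x, rfl⟩
        · rw [hwv] at hk; simp [hκdef] at hk
      choose fC hfC using hCx
      refine hres.to_containment fC ?_ ?_
      · intro w w' e
        have h1 := hfC w
        rw [e] at h1
        exact Subtype.ext (Subtype.ext (h1.trans (hfC w').symm))
      · intro a b
        show glue G₁ DB a.1.1 b.1.1 ↔ G₁ (fC a) (fC b)
        rw [hfC a, hfC b]
        exact Iff.rfl
    | succ d ih =>
      intro r hr
      have hBr : Bad (ach r) := hbefore r (by omega)
      have hsub : Pc (ach r) ⊆ {w : X | κ w.1 = some hBr.2.choose} := hBr.2.choose_spec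
      have hnext : ach (r + 1) = some hBr.2.choose := by
        rw [hach_succ, hstepBad _ hBr]
      have IH := ih (r + 1) (by omega)
      rw [hnext] at IH
      have hBx : ∀ w : (Pc (ach r) : Set X),
          ∃ b : B, c b = hBr.2.choose ∧ w.1.1 = Sum.inr b := by
        intro w
        have hk : κ w.1.1 = some hBr.2.choose := by
          have := hsub w.2
          simpa only [Set.mem_setOf_eq] using this
        rcases hwv : w.1.1 with x | b
        · rw [hwv] at hk; simp [hκdef] at hk
        · rw [hwv] at hk
          simp only [hκdef, Sum.elim_inr, Option.some.injEq] at hk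
          exact ⟨b, hk, rfl⟩
      have hres := H.restrict_pattern (Yc (ach r))
      rw [hPc_eq] at hres
      have hmid : ContainsInducedSubdivision (fun x y : (Yc (ach r)) => D x.1 y.1)
          (fun x y : (Yc (some hBr.2.choose)) => D x.1 y.1) := by
        choose fB hfB1 hfB2 using hBx
        refine hres.to_containment (fun w =>
          (⟨Sum.inr (fB w), ?_⟩ : (Yc (some hBr.2.choose)))) ?_ ?_
        · show compOf (Sum.inr (fB w)) = some hBr.2.choose
          simp only [hcompdef, Sum.elim_inr]
          exact congrArg some (hfB1 w)
        · intro w w' e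
          simp only [Subtype.mk.injEq, Sum.inr.injEq] at e
          have h1 := hfB2 w
          rw [e] at h1
          exact Subtype.ext (Subtype.ext (h1.trans (hfB2 w').symm))
        · intro a b
          show glue G₁ DB a.1.1 b.1.1 ↔ D (Sum.inr (fB a)) (Sum.inr (fB b))
          rw [hfB2 a, hfB2 b]
          exact Iff.rfl
      exact hmid.trans_host IH
  have hmain := hdescent r₀ 0 (by omega)
  rw [hach0] at hmain
  -- transfer the pattern from `Yc none` back to `A`
  have heq : ∀ z : (Yc none : Set (A ⊕ B)), ∃ a : A, z.1 = Sum.inl a := by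
    intro z
    rcases hz : z.1 with a | b
    · exact ⟨a, rfl⟩
    · exfalso
      have h2 : compOf z.1 = none := z.2
      rw [hz] at h2
      simp [hcompdef] at h2
  have hbij : Function.Bijective
      (fun a : A => (⟨Sum.inl a, show compOf (Sum.inl a) = none from rfl⟩ :
        (Yc none : Set (A ⊕ B)))) := by
    constructor
    · intro a a' e
      simp only [Subtype.mk.injEq, Sum.inl.injEq] at e
      exact e
    · intro z
      obtain ⟨a, ha⟩ := heq z
      exact ⟨a, Subtype.ext ha.symm⟩
  obtain ⟨XF, hXF⟩ := hmain
  exact ⟨XF, hXF.pattern_iso (Equiv.ofBijective _ hbij) (fun a b => Iff.rfl)⟩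

/-- Let `D` be a (finite, loopless) digraph on `A ⊕ B` whose connected components are
`D₁` (the restriction to `A`, which is weakly connected) and `D₂, …, D_k` (the classes of
the labelling `c` of `B`, each weakly connected, with no arcs between distinct classes and
none between `A` and `B`).  Let `G` be obtained from `D` by replacing `D₁` by an arbitrary
digraph `G₁`.  Then `G` contains an induced subdivision of `D` if and only if `G₁` contains
an induced subdivision of `D₁`. -/
theorem stmt7 {A B C : Type} [Fintype A] [Fintype B] (k : ℕ) (c : B → Fin k)
    (D : A ⊕ B → A ⊕ B → Prop) (G₁ : C → C → Prop)
    (hloopless : ∀ p, ¬ D p p)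
    (hAB : ∀ (a : A) (b : B), ¬ D (Sum.inl a) (Sum.inr b) ∧ ¬ D (Sum.inr b) (Sum.inl a))
    (hconnA : ∀ x y : A,
      Relation.ReflTransGen (fun p q : A => D (Sum.inl p) (Sum.inl q) ∨ D (Sum.inl q) (Sum.inl p)) x y)
    (hcB : ∀ x y : B, D (Sum.inr x) (Sum.inr y) → c x = c y)
    (hconnB : ∀ x y : B, c x = c y →
      Relation.ReflTransGen (fun p q : B => D (Sum.inr p) (Sum.inr q) ∨ D (Sum.inr q) (Sum.inr p)) x y) :
    ContainsInducedSubdivision D (glue G₁ (fun x y : B => D (Sum.inr x) (Sum.inr y))) ↔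
      ContainsInducedSubdivision (fun a a' : A => D (Sum.inl a) (Sum.inl a')) G₁ :=
  ⟨fun h => stmt7_forward k c D G₁ hAB hconnA hcB hconnB h,
   fun h => stmt7_backward D G₁ hloopless hAB h⟩
end

section
/- Let G be an oriented graph, s a vertex, and T an induced out-tree rooted at s in G (an out-tree that is an induced subdigraph of G). Suppose some vertex x of T has an out-neighbour y not in T such that y has no out-neighbour that is an ancestor of x in T, and choose x earliest (in the IBFS order) with this property and y appropriately. Then G contains an induced cherry rooted at s. -/
/-- The digraph `H` is a cherry rooted at `s`, on `(s, u, v)` with `u = P np`, `v = Q nq`: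
it consists of an induced directed path `P` from `s` to `u` (possibly of length 0), and two
directed paths `Q` and `R` from `u` to `v`, both of length at least 1 and at least one of
length at least 2; `u` and `v` are the only vertices lying on more than one of `P, Q, R`,
every vertex of `H` lies on one of the paths, and the arcs of `H` are exactly the path arcs. -/
def IsCherryAt {W : Type*} (H : W → W → Prop) (s : W) : Prop :=
  ∃ (np nq nr : ℕ) (P Q R : ℕ → W),
    1 ≤ nq ∧ 1 ≤ nr ∧ (2 ≤ nq ∨ 2 ≤ nr) ∧
    P 0 = s ∧ P np = Q 0 ∧ Q 0 = R 0 ∧ Q nq = R nr ∧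
    (∀ i ≤ np, ∀ j ≤ np, P i = P j → i = j) ∧
    (∀ i ≤ nq, ∀ j ≤ nq, Q i = Q j → i = j) ∧
    (∀ i ≤ nr, ∀ j ≤ nr, R i = R j → i = j) ∧
    (∀ i < np, H (P i) (P (i + 1))) ∧
    (∀ i < nq, H (Q i) (Q (i + 1))) ∧
    (∀ i < nr, H (R i) (R (i + 1))) ∧
    (∀ i ≤ nq, ∀ j ≤ nr, Q i = R j → (i = 0 ∧ j = 0) ∨ (i = nq ∧ j = nr)) ∧
    (∀ i ≤ np, ∀ j ≤ nq, P i = Q j → i = np ∧ j = 0) ∧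
    (∀ i ≤ np, ∀ j ≤ nr, P i = R j → i = np ∧ j = 0) ∧
    (∀ w : W, (∃ i ≤ np, P i = w) ∨ (∃ i ≤ nq, Q i = w) ∨ (∃ i ≤ nr, R i = w)) ∧
    (∀ a b : W, H a b ↔
      ((∃ i < np, P i = a ∧ P (i + 1) = b) ∨ (∃ i < nq, Q i = a ∧ Q (i + 1) = b) ∨
        (∃ i < nr, R i = a ∧ R (i + 1) = b)))

/-- The digraph `H` is a cherry. -/
def IsCherry {W : Type*} (H : W → W → Prop) : Prop := ∃ s, IsCherryAt H s

theorem chainAux {m : ℕ} (par : ℕ → ℕ) (hpar : ∀ k, 1 ≤ k → k ≤ m → par k < k) :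
    ∀ k, k ≤ m → ∃ d, par^[d] k = 0 ∧ ∀ i < d, 1 ≤ par^[i] k ∧ par^[i] k ≤ m := by
  intro k
  induction k using Nat.strong_induction_on with
  | _ k ih =>
    intro hk
    rcases Nat.eq_zero_or_pos k with h0 | h1
    · exact ⟨0, by simp [h0], by omega⟩
    · have hlt := hpar k h1 hk
      obtain ⟨d, hd0, hdi⟩ := ih (par k) hlt (le_trans (Nat.le_of_lt hlt) hk)
      refine ⟨d + 1, ?_, ?_⟩
      · rw [Function.iterate_succ_apply]; exact hd0
      · intro i hi
        cases i with
        | zero => simpa using ⟨h1, hk⟩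
        | succ i => rw [Function.iterate_succ_apply]; exact hdi i (by omega)

theorem chainDec {m : ℕ} (par : ℕ → ℕ) (hpar : ∀ k, 1 ≤ k → k ≤ m → par k < k)
    (k d : ℕ) (hspec : ∀ i < d, 1 ≤ par^[i] k ∧ par^[i] k ≤ m) :
    ∀ i' ≤ d, ∀ i < i', par^[i'] k < par^[i] k := by
  intro i' hi'
  induction i' with
  | zero => omega
  | succ n ihn =>
    intro i hi
    have hstep : par^[n + 1] k < par^[n] k := by
      have h := hspec n (by omega)
      rw [Function.iterate_succ_apply']
      exact hpar _ h.1 h.2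
    rcases Nat.lt_or_ge i n with h | h
    · exact lt_trans hstep (ihn (by omega) i h)
    · have : i = n := by omega
      rw [this]; exact hstep

theorem chainAlign (par : ℕ → ℕ) (x j D E : ℕ)
    (hxD : par^[D] x = 0) (hxs : ∀ i < D, 1 ≤ par^[i] x)
    (hjE : par^[E] j = 0) (hjs : ∀ i < E, 1 ≤ par^[i] j)
    (i i' : ℕ) (hi : i ≤ D) (hi' : i' ≤ E) (heq : par^[i] x = par^[i'] j) :
    D - i = E - i' := by
  rcases Nat.lt_trichotomy (D - i) (E - i') with h | h | h
  · exfalso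
    have h1 : par^[(D - i) + i'] j = 0 := by
      rw [Function.iterate_add_apply, ← heq, ← Function.iterate_add_apply]
      have : D - i + i = D := by omega
      rw [this, hxD]
    have h2 := hjs ((D - i) + i') (by omega)
    omega
  · exact h
  · exfalso
    have h1 : par^[(E - i') + i] x = 0 := by
      rw [Function.iterate_add_apply, heq, ← Function.iterate_add_apply]
      have : E - i' + i' = E := by omega
      rw [this, hjE]
    have h2 := hxs ((E - i') + i) (by omega)
    omega


theorem buildCherry {V : Type} (G : V → V → Prop) (s : V)
    (np nq nr : ℕ) (P Q R : ℕ → V)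
    (h1 : 1 ≤ nq) (h2 : 1 ≤ nr) (h3 : 2 ≤ nq ∨ 2 ≤ nr)
    (hP0 : P 0 = s) (hPQ0 : P np = Q 0) (hQR0 : Q 0 = R 0) (hend : Q nq = R nr)
    (hPinj : ∀ i ≤ np, ∀ j ≤ np, P i = P j → i = j)
    (hQinj : ∀ i ≤ nq, ∀ j ≤ nq, Q i = Q j → i = j)
    (hRinj : ∀ i ≤ nr, ∀ j ≤ nr, R i = R j → i = j)
    (hPa : ∀ i < np, G (P i) (P (i + 1)))
    (hQa : ∀ i < nq, G (Q i) (Q (i + 1)))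
    (hRa : ∀ i < nr, G (R i) (R (i + 1)))
    (hQRx : ∀ i ≤ nq, ∀ j ≤ nr, Q i = R j → (i = 0 ∧ j = 0) ∨ (i = nq ∧ j = nr))
    (hPQx : ∀ i ≤ np, ∀ j ≤ nq, P i = Q j → i = np ∧ j = 0)
    (hPRx : ∀ i ≤ np, ∀ j ≤ nr, P i = R j → i = np ∧ j = 0)
    (hind : ∀ a b : V,
      ((∃ i ≤ np, P i = a) ∨ (∃ i ≤ nq, Q i = a) ∨ (∃ i ≤ nr, R i = a)) →
      ((∃ i ≤ np, P i = b) ∨ (∃ i ≤ nq, Q i = b) ∨ (∃ i ≤ nr, R i = b)) →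
      G a b →
      ((∃ i < np, P i = a ∧ P (i + 1) = b) ∨ (∃ i < nq, Q i = a ∧ Q (i + 1) = b) ∨
        (∃ i < nr, R i = a ∧ R (i + 1) = b))) :
    ∃ (X : Set V) (hs : s ∈ X), IsCherryAt (fun a b : X => G a.1 b.1) ⟨s, hs⟩ := by
  classical
  set X : Set V :=
    {w | (∃ i ≤ np, P i = w) ∨ (∃ i ≤ nq, Q i = w) ∨ (∃ i ≤ nr, R i = w)} with hX
  have hmemP : ∀ i, i ≤ np → P i ∈ X := fun i hi => Or.inl ⟨i, hi, rfl⟩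
  have hmemQ : ∀ i, i ≤ nq → Q i ∈ X := fun i hi => Or.inr (Or.inl ⟨i, hi, rfl⟩)
  have hmemR : ∀ i, i ≤ nr → R i ∈ X := fun i hi => Or.inr (Or.inr ⟨i, hi, rfl⟩)
  have hs : s ∈ X := hP0 ▸ hmemP 0 (Nat.zero_le _)
  refine ⟨X, hs, np, nq, nr,
    (fun i => if h : i ≤ np then ⟨P i, hmemP i h⟩ else ⟨s, hs⟩),
    (fun i => if h : i ≤ nq then ⟨Q i, hmemQ i h⟩ else ⟨s, hs⟩),
    (fun i => if h : i ≤ nr then ⟨R i, hmemR i h⟩ else ⟨s, hs⟩),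
    h1, h2, h3, ?_, ?_, ?_, ?_, ?_, ?_, ?_, ?_, ?_, ?_, ?_, ?_, ?_, ?_, ?_⟩
  · simp only [dif_pos (Nat.zero_le np)]
    exact Subtype.ext hP0
  · simp only [dif_pos (le_refl np), dif_pos (Nat.zero_le nq)]
    exact Subtype.ext hPQ0
  · simp only [dif_pos (Nat.zero_le nq), dif_pos (Nat.zero_le nr)]
    exact Subtype.ext hQR0
  · simp only [dif_pos (le_refl nq), dif_pos (le_refl nr)]
    exact Subtype.ext hend
  · intro i hi j hj h
    simp only [dif_pos hi, dif_pos hj, Subtype.mk.injEq] at h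
    exact hPinj i hi j hj h
  · intro i hi j hj h
    simp only [dif_pos hi, dif_pos hj, Subtype.mk.injEq] at h
    exact hQinj i hi j hj h
  · intro i hi j hj h
    simp only [dif_pos hi, dif_pos hj, Subtype.mk.injEq] at h
    exact hRinj i hi j hj h
  · intro i hi
    simp only [dif_pos (Nat.le_of_lt hi), dif_pos (Nat.succ_le_of_lt hi)]
    exact hPa i hi
  · intro i hi
    simp only [dif_pos (Nat.le_of_lt hi), dif_pos (Nat.succ_le_of_lt hi)]
    exact hQa i hi
  · intro i hi
    simp only [dif_pos (Nat.le_of_lt hi), dif_pos (Nat.succ_le_of_lt hi)]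
    exact hRa i hi
  · intro i hi j hj h
    simp only [dif_pos hi, dif_pos hj, Subtype.mk.injEq] at h
    exact hQRx i hi j hj h
  · intro i hi j hj h
    simp only [dif_pos hi, dif_pos hj, Subtype.mk.injEq] at h
    exact hPQx i hi j hj h
  · intro i hi j hj h
    simp only [dif_pos hi, dif_pos hj, Subtype.mk.injEq] at h
    exact hPRx i hi j hj h
  · rintro ⟨w, hw⟩
    rcases hw with ⟨i, hi, hEq⟩ | ⟨i, hi, hEq⟩ | ⟨i, hi, hEq⟩
    · exact Or.inl ⟨i, hi, by simp only [dif_pos hi]; exact Subtype.ext hEq⟩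
    · exact Or.inr (Or.inl ⟨i, hi, by simp only [dif_pos hi]; exact Subtype.ext hEq⟩)
    · exact Or.inr (Or.inr ⟨i, hi, by simp only [dif_pos hi]; exact Subtype.ext hEq⟩)
  · rintro ⟨a, ha⟩ ⟨b, hb⟩
    constructor
    · intro hG
      rcases hind a b ha hb hG with ⟨i, hi, h1', h2'⟩ | ⟨i, hi, h1', h2'⟩ | ⟨i, hi, h1', h2'⟩
      · exact Or.inl ⟨i, hi, by
          simp only [dif_pos (Nat.le_of_lt hi), dif_pos (Nat.succ_le_of_lt hi)]
          exact ⟨Subtype.ext h1', Subtype.ext h2'⟩⟩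
      · exact Or.inr (Or.inl ⟨i, hi, by
          simp only [dif_pos (Nat.le_of_lt hi), dif_pos (Nat.succ_le_of_lt hi)]
          exact ⟨Subtype.ext h1', Subtype.ext h2'⟩⟩)
      · exact Or.inr (Or.inr ⟨i, hi, by
          simp only [dif_pos (Nat.le_of_lt hi), dif_pos (Nat.succ_le_of_lt hi)]
          exact ⟨Subtype.ext h1', Subtype.ext h2'⟩⟩)
    · rintro (⟨i, hi, h1', h2'⟩ | ⟨i, hi, h1', h2'⟩ | ⟨i, hi, h1', h2'⟩)
      · simp only [dif_pos (Nat.le_of_lt hi), dif_pos (Nat.succ_le_of_lt hi),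
          Subtype.mk.injEq] at h1' h2'
        show G a b
        rw [← h1', ← h2']; exact hPa i hi
      · simp only [dif_pos (Nat.le_of_lt hi), dif_pos (Nat.succ_le_of_lt hi),
          Subtype.mk.injEq] at h1' h2'
        show G a b
        rw [← h1', ← h2']; exact hQa i hi
      · simp only [dif_pos (Nat.le_of_lt hi), dif_pos (Nat.succ_le_of_lt hi),
          Subtype.mk.injEq] at h1' h2'
        show G a b
        rw [← h1', ← h2']; exact hRa i hi


/-- Let `G` be an oriented graph and let `T` be an induced out-tree rooted at `s` produced by
induced breadth-first search `IBFS(G,s)`: its vertices are `t 0 = s, t 1, …, t m` in order of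
addition, with parent function `par` (parents are added earlier, in BFS order), the only arcs
of `G` among them are the tree arcs, and every out-neighbour `y ∉ T` of a tree vertex `t i`
was rejected because `y` already had another neighbour in the tree when `t i` was visited.
If some vertex `t x` of `T` has an out-neighbour `y` not in `T` such that no out-neighbour of
`y` is an ancestor of `t x` in `T` (i.e. outcome (ii) of Theorem 4.1 fails), then `G` contains
an induced cherry rooted at `s`. -/
theorem stmt10 {V : Type} (G : V → V → Prop) (horient : ∀ a b, G a b → ¬ G b a)
    (s : V) (m : ℕ) (t : ℕ → V) (par : ℕ → ℕ)
    (ht0 : t 0 = s)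
    (hinj : ∀ i ≤ m, ∀ j ≤ m, t i = t j → i = j)
    (hpar : ∀ k, 1 ≤ k → k ≤ m → par k < k ∧ G (t (par k)) (t k))
    (hmono : ∀ k l, 1 ≤ k → k ≤ l → l ≤ m → par k ≤ par l)
    (hinduced : ∀ i ≤ m, ∀ j ≤ m, G (t i) (t j) → 1 ≤ j ∧ i = par j)
    (hmax : ∀ i ≤ m, ∀ y : V, (∀ j ≤ m, t j ≠ y) → G (t i) y →
      ∃ j ≤ m, j ≠ i ∧ (G (t j) y ∨ G y (t j)) ∧ (j = 0 ∨ par j ≤ i))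
    (x : ℕ) (hx : x ≤ m) (y : V)
    (hyT : ∀ j ≤ m, t j ≠ y) (hxy : G (t x) y)
    (hanc : ∀ j ≤ m, G y (t j) →
      ¬ Relation.ReflTransGen (fun p q : ℕ => p = par q ∧ 1 ≤ q ∧ q ≤ m) j x) :
    ∃ (X : Set V) (hs : s ∈ X), IsCherryAt (fun a b : X => G a.1 b.1) ⟨s, hs⟩ := by
  classical
  have hpar' : ∀ k, 1 ≤ k → k ≤ m → par k < k := fun k h1 h2 => (hpar k h1 h2).1
  -- minimal bad vertex
  have hbadex : ∃ x', x' ≤ m ∧ ∃ y', (∀ l ≤ m, t l ≠ y') ∧ G (t x') y' ∧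
      (∀ l ≤ m, G y' (t l) →
        ¬ Relation.ReflTransGen (fun p q : ℕ => p = par q ∧ 1 ≤ q ∧ q ≤ m) l x') :=
    ⟨x, hx, y, hyT, hxy, hanc⟩
  obtain ⟨x₀, hx₀def⟩ : ∃ n, n = Nat.find hbadex := ⟨_, rfl⟩
  have hspec := Nat.find_spec hbadex
  rw [← hx₀def] at hspec
  obtain ⟨hx₀m, y₀, hyT₀, hxy₀, hanc₀⟩ := hspec
  have hx₀min : ∀ k, k < x₀ → ¬ (k ≤ m ∧ ∃ y', (∀ l ≤ m, t l ≠ y') ∧ G (t k) y' ∧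
      (∀ l ≤ m, G y' (t l) →
        ¬ Relation.ReflTransGen (fun p q : ℕ => p = par q ∧ 1 ≤ q ∧ q ≤ m) l k)) := by
    intro k hk
    exact Nat.find_min hbadex (by omega)
  -- chain of x₀
  obtain ⟨D, hD0', hDs⟩ := chainAux par hpar' x₀ hx₀m
  have hDm : ∀ i ≤ D, par^[i] x₀ ≤ m := by
    intro i hi
    rcases Nat.lt_or_ge i D with h | h
    · exact (hDs i h).2
    · have : i = D := by omega
      rw [this, hD0']; omega
  have hdecx := chainDec par hpar' x₀ D hDs
  have hinjx : ∀ i ≤ D, ∀ i' ≤ D, par^[i] x₀ = par^[i'] x₀ → i = i' := by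
    intro i hi i' hi' hEq
    rcases Nat.lt_trichotomy i i' with h | h | h
    · have := hdecx i' hi' i h; omega
    · exact h
    · have := hdecx i hi i' h; omega
  have harcx : ∀ i < D, G (t (par^[i + 1] x₀)) (t (par^[i] x₀)) := by
    intro i hi
    rw [Function.iterate_succ_apply']
    exact (hpar _ (hDs i hi).1 (hDs i hi).2).2
  have hmemx : ∀ i, i ≤ D →
      Relation.ReflTransGen (fun p q : ℕ => p = par q ∧ 1 ≤ q ∧ q ≤ m) (par^[i] x₀) x₀ := by
    intro i
    induction i with
    | zero => intro _; exact Relation.ReflTransGen.refl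
    | succ n ihn =>
      intro h
      refine Relation.ReflTransGen.head ?_ (ihn (by omega))
      exact ⟨Function.iterate_succ_apply' par n x₀, (hDs n (by omega)).1, (hDs n (by omega)).2⟩
  have hnoout : ∀ i ≤ D, ¬ G y₀ (t (par^[i] x₀)) := by
    intro i hi hG
    exact hanc₀ _ (hDm i hi) hG (hmemx i hi)
  have hnoin : ∀ i, 1 ≤ i → i ≤ D → ¬ G (t (par^[i] x₀)) y₀ := by
    intro i h1 hiD hG
    have hklt : par^[i] x₀ < x₀ := hdecx i hiD 0 (by omega)
    refine hx₀min _ hklt ⟨hDm i hiD, y₀, hyT₀, hG, ?_⟩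
    intro l hl hGl hR
    exact hanc₀ l hl hGl (hR.trans (hmemx i hiD))
  -- the other neighbour j of y₀
  have Jex := hmax x₀ hx₀m y₀ hyT₀ hxy₀
  obtain ⟨j, hjdef⟩ : ∃ n, n = Nat.find Jex := ⟨_, rfl⟩
  have hjspec := Nat.find_spec Jex
  rw [← hjdef] at hjspec
  obtain ⟨hjm, hjne, hjarc, hjcond⟩ := hjspec
  have hjmin : ∀ k, k < j → ¬ (k ≤ m ∧ k ≠ x₀ ∧ (G (t k) y₀ ∨ G y₀ (t k)) ∧
      (k = 0 ∨ par k ≤ x₀)) := by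
    intro k hk
    exact Nat.find_min Jex (by omega)
  obtain ⟨E, hE0', hEs⟩ := chainAux par hpar' j hjm
  have hEm : ∀ i ≤ E, par^[i] j ≤ m := by
    intro i hi
    rcases Nat.lt_or_ge i E with h | h
    · exact (hEs i h).2
    · have : i = E := by omega
      rw [this, hE0']; omega
  have hdecj := chainDec par hpar' j E hEs
  have hinjj : ∀ i ≤ E, ∀ i' ≤ E, par^[i] j = par^[i'] j → i = i' := by
    intro i hi i' hi' hEq
    rcases Nat.lt_trichotomy i i' with h | h | h
    · have := hdecj i' hi' i h; omega
    · exact h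
    · have := hdecj i hi i' h; omega
  have harcj : ∀ i < E, G (t (par^[i + 1] j)) (t (par^[i] j)) := by
    intro i hi
    rw [Function.iterate_succ_apply']
    exact (hpar _ (hEs i hi).1 (hEs i hi).2).2
  -- deepest common ancestor
  have hstar0 : par^[D - 0] x₀ = par^[E - 0] j := by
    rw [Nat.sub_zero, Nat.sub_zero, hD0', hE0']
  obtain ⟨c, hcdef⟩ : ∃ n, n = Nat.findGreatest (fun h => par^[D - h] x₀ = par^[E - h] j) (min D E) :=
    ⟨_, rfl⟩
  have hstar : par^[D - c] x₀ = par^[E - c] j := by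
    rw [hcdef]
    exact Nat.findGreatest_spec (P := fun h => par^[D - h] x₀ = par^[E - h] j)
      (Nat.zero_le _) hstar0
  have hsle : c ≤ min D E := by
    rw [hcdef]; exact Nat.findGreatest_le _
  have hsD : c ≤ D := by omega
  have hsE : c ≤ E := by omega
  obtain ⟨a, ha⟩ : ∃ n, n = D - c := ⟨_, rfl⟩
  obtain ⟨b, hb⟩ : ∃ n, n = E - c := ⟨_, rfl⟩
  have haD : a ≤ D := by omega
  have hbE : b ≤ E := by omega
  have hstar' : par^[a] x₀ = par^[b] j := by rw [ha, hb]; exact hstar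
  have hint : ∀ i ≤ D, ∀ i' ≤ E, par^[i] x₀ = par^[i'] j →
      a ≤ i ∧ b ≤ i' ∧ D - i = E - i' := by
    intro i hi i' hi' heq
    have hal : D - i = E - i' :=
      chainAlign par x₀ j D E hD0' (fun r hr => (hDs r hr).1) hE0'
        (fun r hr => (hEs r hr).1) i i' hi hi' heq
    have hPh : par^[D - (D - i)] x₀ = par^[E - (D - i)] j := by
      have e1 : D - (D - i) = i := by omega
      have e2 : E - (D - i) = i' := by omega
      rw [e1, e2]; exact heq
    have hle : D - i ≤ c := by
      by_contra hlt
      exact Nat.findGreatest_is_greatest (P := fun h => par^[D - h] x₀ = par^[E - h] j)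
        (n := min D E) (by rw [← hcdef]; omega) (by omega) hPh
    omega
  -- t-level helpers
  have haux1 : ∀ i ≤ D, t (par^[i] x₀) ≠ y₀ := fun i hi => hyT₀ _ (hDm i hi)
  have haux2 : ∀ i ≤ E, t (par^[i] j) ≠ y₀ := fun i hi => hyT₀ _ (hEm i hi)
  have haux4 : ∀ i ≤ D, ∀ i' ≤ D, t (par^[i] x₀) = t (par^[i'] x₀) → i = i' :=
    fun i hi i' hi' h => hinjx i hi i' hi' (hinj _ (hDm i hi) _ (hDm i' hi') h)
  have haux5 : ∀ i ≤ E, ∀ i' ≤ E, t (par^[i] j) = t (par^[i'] j) → i = i' :=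
    fun i hi i' hi' h => hinjj i hi i' hi' (hinj _ (hEm i hi) _ (hEm i' hi') h)
  have haux3 : ∀ i ≤ D, ∀ i' ≤ E, t (par^[i] x₀) = t (par^[i'] j) →
      a ≤ i ∧ b ≤ i' ∧ D - i = E - i' :=
    fun i hi i' hi' h => hint i hi i' hi' (hinj _ (hDm i hi) _ (hEm i' hi') h)
  -- members of J below j are impossible
  have hJcontra : ∀ i', 1 ≤ i' → i' < b →
      (G (t (par^[i'] j)) y₀ ∨ G y₀ (t (par^[i'] j))) → False := by
    intro i' h1 hib harc
    have hi'E : i' < E := by omega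
    have hj1 : 1 ≤ j := by
      have := (hEs 0 (by omega)).1
      exact this
    have hk1 : 1 ≤ par^[i'] j := (hEs i' hi'E).1
    have hkm : par^[i'] j ≤ m := (hEs i' hi'E).2
    have hkj : par^[i'] j < j := hdecj i' (le_of_lt hi'E) 0 (by omega)
    have hpj : par j ≤ x₀ := by
      rcases hjcond with h0 | h
      · omega
      · exact h
    have hne : par^[i'] j ≠ x₀ := by
      intro hEq
      have := hint 0 (Nat.zero_le D) i' (le_of_lt hi'E) hEq.symm
      omega
    exact hjmin _ hkj
      ⟨hkm, hne, harc, Or.inr (le_trans (hmono _ j hk1 (le_of_lt hkj) hjm) hpj)⟩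
  have hcx0 : (par^[0] x₀ : ℕ) = x₀ := rfl
  have hcj0 : (par^[0] j : ℕ) = j := rfl
  -- case split on the direction of the arc between t j and y₀
  rcases hjarc with hA | hB
  · -- Case A : G (t j) y₀ ; cherry with v = y₀
    have hab : 1 ≤ a ∨ 1 ≤ b := by
      by_contra h
      push_neg at h
      have ea : a = 0 := by omega
      have eb : b = 0 := by omega
      rw [ea, eb, hcx0, hcj0] at hstar'
      exact hjne hstar'.symm
    -- normal form of union members
    have hnormA : ∀ w,
        ((∃ i ≤ c, t (par^[D - i] x₀) = w) ∨
          (∃ i ≤ a + 1, (if i ≤ a then t (par^[a - i] x₀) else y₀) = w) ∨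
          (∃ i ≤ b + 1, (if i ≤ b then t (par^[b - i] j) else y₀) = w)) →
        w = y₀ ∨ (∃ i ≤ D, w = t (par^[i] x₀)) ∨ (∃ i' < b, w = t (par^[i'] j)) := by
      rintro w (⟨i, hi, rfl⟩ | ⟨i, hi, hw⟩ | ⟨i, hi, hw⟩)
      · exact Or.inr (Or.inl ⟨D - i, by omega, rfl⟩)
      · by_cases hia : i ≤ a
        · rw [if_pos hia] at hw
          exact Or.inr (Or.inl ⟨a - i, by omega, hw.symm⟩)
        · rw [if_neg hia] at hw
          exact Or.inl hw.symm
      · by_cases hib : i ≤ b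
        · rw [if_pos hib] at hw
          by_cases h0 : b - i < b
          · exact Or.inr (Or.inr ⟨b - i, h0, hw.symm⟩)
          · have e : b - i = b := by omega
            rw [e, ← hstar'] at hw
            exact Or.inr (Or.inl ⟨a, haD, hw.symm⟩)
        · rw [if_neg hib] at hw
          exact Or.inl hw.symm
    refine buildCherry G s c (a + 1) (b + 1)
      (fun r => t (par^[D - r] x₀))
      (fun r => if r ≤ a then t (par^[a - r] x₀) else y₀)
      (fun r => if r ≤ b then t (par^[b - r] j) else y₀)
      (by omega) (by omega) (by omega)
      ?_ ?_ ?_ ?_ ?_ ?_ ?_ ?_ ?_ ?_ ?_ ?_ ?_ ?_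
    · beta_reduce
      rw [Nat.sub_zero, hD0']; exact ht0
    · beta_reduce
      rw [if_pos (Nat.zero_le a)]
      have e : D - c = a - 0 := by omega
      rw [e]
    · beta_reduce
      rw [if_pos (Nat.zero_le a), if_pos (Nat.zero_le b), Nat.sub_zero, Nat.sub_zero, hstar']
    · beta_reduce
      rw [if_neg (by omega), if_neg (by omega)]
    · -- hPinj
      intro i hi i' hi' h
      beta_reduce at h
      have := haux4 (D - i) (by omega) (D - i') (by omega) h
      omega
    · -- hQinj
      intro i hi i' hi' h
      beta_reduce at h
      split_ifs at h with h1 h2 h2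
      · have := haux4 (a - i) (by omega) (a - i') (by omega) h
        omega
      · exact absurd h (haux1 (a - i) (by omega))
      · exact absurd h.symm (haux1 (a - i') (by omega))
      · omega
    · -- hRinj
      intro i hi i' hi' h
      beta_reduce at h
      split_ifs at h with h1 h2 h2
      · have := haux5 (b - i) (by omega) (b - i') (by omega) h
        omega
      · exact absurd h (haux2 (b - i) (by omega))
      · exact absurd h.symm (haux2 (b - i') (by omega))
      · omega
    · -- hPa
      intro i hi
      beta_reduce
      have e : D - i = (D - (i + 1)) + 1 := by omega
      rw [e]
      exact harcx _ (by omega)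
    · -- hQa
      intro i hi
      beta_reduce
      rcases Nat.lt_or_ge i a with hia | hia
      · rw [if_pos (by omega), if_pos (by omega)]
        have e : a - i = (a - (i + 1)) + 1 := by omega
        rw [e]
        exact harcx _ (by omega)
      · have e : i = a := by omega
        subst e
        rw [if_pos (le_refl i), if_neg (by omega)]
        have e2 : i - i = 0 := by omega
        rw [e2]
        exact hxy₀
    · -- hRa
      intro i hi
      beta_reduce
      rcases Nat.lt_or_ge i b with hib | hib
      · rw [if_pos (by omega), if_pos (by omega)]
        have e : b - i = (b - (i + 1)) + 1 := by omega
        rw [e]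
        exact harcj _ (by omega)
      · have e : i = b := by omega
        subst e
        rw [if_pos (le_refl i), if_neg (by omega)]
        have e2 : i - i = 0 := by omega
        rw [e2]
        exact hA
    · -- hQRx
      intro i hi i' hi' h
      beta_reduce at h
      split_ifs at h with h1 h2 h2
      · have := haux3 (a - i) (by omega) (b - i') (by omega) h
        left; omega
      · exact absurd h (haux1 (a - i) (by omega))
      · exact absurd h.symm (haux2 (b - i') (by omega))
      · right; omega
    · -- hPQx
      intro i hi i' hi' h
      beta_reduce at h
      split_ifs at h with h1
      · have := haux4 (D - i) (by omega) (a - i') (by omega) h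
        omega
      · exact absurd h (haux1 (D - i) (by omega))
    · -- hPRx
      intro i hi i' hi' h
      beta_reduce at h
      split_ifs at h with h1
      · have := haux3 (D - i) (by omega) (b - i') (by omega) h
        omega
      · exact absurd h (haux1 (D - i) (by omega))
    · -- hind
      intro a' b' ha' hb' hG
      beta_reduce at ha' hb' ⊢
      rcases hnormA b' hb' with rfl | ⟨i, hiD, rfl⟩ | ⟨i', hib, rfl⟩
      · -- b' = y₀
        rcases hnormA a' ha' with rfl | ⟨i, hiD, rfl⟩ | ⟨i', hib, rfl⟩
        · exact absurd hG (horient _ _ hG)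
        · rcases Nat.eq_zero_or_pos i with h0 | h1
          · subst h0
            refine Or.inr (Or.inl ⟨a, by omega, ?_, ?_⟩)
            · rw [if_pos (le_refl a)]
              have e : a - a = 0 := by omega
              rw [e]
            · rw [if_neg (by omega)]
          · exact absurd hG (hnoin i h1 hiD)
        · rcases Nat.eq_zero_or_pos i' with h0 | h1
          · subst h0
            refine Or.inr (Or.inr ⟨b, by omega, ?_, ?_⟩)
            · rw [if_pos (le_refl b)]
              have e : b - b = 0 := by omega
              rw [e]
            · rw [if_neg (by omega)]
          · exact absurd (Or.inl hG) (hJcontra i' h1 hib)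
      · -- b' = t (par^[i] x₀)
        obtain ⟨K, hKm, rfl⟩ : ∃ K, K ≤ m ∧ a' = t K := by
          rcases hnormA a' ha' with rfl | ⟨k, hkD, rfl⟩ | ⟨k', hkb, rfl⟩
          · exact absurd hG (hnoout i hiD)
          · exact ⟨_, hDm k hkD, rfl⟩
          · exact ⟨_, hEm k' (by omega), rfl⟩
        obtain ⟨hl1, hkl⟩ := hinduced K hKm (par^[i] x₀) (hDm i hiD) hG
        have hiD' : i < D := by
          rcases Nat.lt_or_ge i D with h | h
          · exact h
          · exfalso
            have e : i = D := by omega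
            rw [e, hD0'] at hl1
            omega
        have hK : K = par^[i + 1] x₀ := by
          rw [hkl, Function.iterate_succ_apply']
        subst hK
        rcases Nat.lt_or_ge i a with hia | hia
        · refine Or.inr (Or.inl ⟨a - i - 1, by omega, ?_, ?_⟩)
          · rw [if_pos (by omega)]
            have e : a - (a - i - 1) = i + 1 := by omega
            rw [e]
          · rw [if_pos (by omega)]
            have e : a - (a - i - 1 + 1) = i := by omega
            rw [e]
        · refine Or.inl ⟨D - i - 1, by clear * - hia hiD' ha hsD; omega, ?_, ?_⟩
          · have e : D - (D - i - 1) = i + 1 := by clear * - hia hiD' ha hsD; omega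
            rw [e]
          · have e : D - (D - i - 1 + 1) = i := by clear * - hia hiD' ha hsD; omega
            rw [e]
      · -- b' = t (par^[i'] j), i' < b
        obtain ⟨K, hKm, rfl⟩ : ∃ K, K ≤ m ∧ a' = t K := by
          rcases hnormA a' ha' with rfl | ⟨k, hkD, rfl⟩ | ⟨k', hkb, rfl⟩
          · rcases Nat.eq_zero_or_pos i' with h0 | h1
            · exfalso
              subst h0
              exact absurd hG (horient _ _ hA)
            · exact absurd (Or.inr hG) (hJcontra i' h1 hib)
          · exact ⟨_, hDm k hkD, rfl⟩
          · exact ⟨_, hEm k' (by omega), rfl⟩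
        obtain ⟨hl1, hkl⟩ := hinduced K hKm (par^[i'] j) (hEm i' (by omega)) hG
        have hK : K = par^[i' + 1] j := by
          rw [hkl, Function.iterate_succ_apply']
        subst hK
        refine Or.inr (Or.inr ⟨b - i' - 1, by omega, ?_, ?_⟩)
        · rw [if_pos (by omega)]
          have e : b - (b - i' - 1) = i' + 1 := by omega
          rw [e]
        · rw [if_pos (by omega)]
          have e : b - (b - i' - 1 + 1) = i' := by omega
          rw [e]
  · -- Case B : G y₀ (t j) ; cherry with v = t j
    have hjnotanc : ¬ Relation.ReflTransGen (fun p q : ℕ => p = par q ∧ 1 ≤ q ∧ q ≤ m) j x₀ :=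
      hanc₀ j hjm hB
    have hb1 : 1 ≤ b := by
      by_contra h
      have hb0 : b = 0 := by omega
      have hj : par^[a] x₀ = j := by rw [hstar', hb0]; exact hcj0
      exact hjnotanc (hj ▸ hmemx a haD)
    have hnormB : ∀ w,
        ((∃ i ≤ c, t (par^[D - i] x₀) = w) ∨
          (∃ i ≤ a + 2,
            (if i ≤ a then t (par^[a - i] x₀) else if i = a + 1 then y₀ else t j) = w) ∨
          (∃ i ≤ b, t (par^[b - i] j) = w)) →
        w = y₀ ∨ (∃ i ≤ D, w = t (par^[i] x₀)) ∨ (∃ i' < b, w = t (par^[i'] j)) := by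
      rintro w (⟨i, hi, rfl⟩ | ⟨i, hi, hw⟩ | ⟨i, hi, rfl⟩)
      · exact Or.inr (Or.inl ⟨D - i, by omega, rfl⟩)
      · by_cases hia : i ≤ a
        · rw [if_pos hia] at hw
          exact Or.inr (Or.inl ⟨a - i, by omega, hw.symm⟩)
        · by_cases hia1 : i = a + 1
          · rw [if_neg hia, if_pos hia1] at hw
            exact Or.inl hw.symm
          · rw [if_neg hia, if_neg hia1] at hw
            exact Or.inr (Or.inr ⟨0, by omega, hw.symm⟩)
      · by_cases h0 : b - i < b
        · exact Or.inr (Or.inr ⟨b - i, h0, rfl⟩)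
        · have e : b - i = b := by omega
          rw [e, ← hstar']
          exact Or.inr (Or.inl ⟨a, haD, rfl⟩)
    refine buildCherry G s c (a + 2) b
      (fun r => t (par^[D - r] x₀))
      (fun r => if r ≤ a then t (par^[a - r] x₀) else if r = a + 1 then y₀ else t j)
      (fun r => t (par^[b - r] j))
      (by omega) (by omega) (by omega)
      ?_ ?_ ?_ ?_ ?_ ?_ ?_ ?_ ?_ ?_ ?_ ?_ ?_ ?_
    · beta_reduce
      rw [Nat.sub_zero, hD0']; exact ht0
    · beta_reduce
      rw [if_pos (Nat.zero_le a)]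
      have e : D - c = a - 0 := by omega
      rw [e]
    · beta_reduce
      rw [if_pos (Nat.zero_le a), Nat.sub_zero, Nat.sub_zero, hstar']
    · beta_reduce
      rw [if_neg (by omega : ¬ (a + 2 ≤ a)), if_neg (by omega : ¬ (a + 2 = a + 1))]
      have e : b - b = 0 := by omega
      rw [e]
      exact congrArg t hcj0.symm
    · -- hPinj
      intro i hi i' hi' h
      beta_reduce at h
      have := haux4 (D - i) (by omega) (D - i') (by omega) h
      omega
    · -- hQinj
      intro i hi i' hi' h
      beta_reduce at h
      by_cases hia : i ≤ a <;> by_cases hia' : i' ≤ a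
      · rw [if_pos hia, if_pos hia'] at h
        have := haux4 (a - i) (by omega) (a - i') (by omega) h
        omega
      · rw [if_pos hia, if_neg hia'] at h
        by_cases h2 : i' = a + 1
        · rw [if_pos h2] at h
          exact absurd h (haux1 (a - i) (by omega))
        · rw [if_neg h2] at h
          have := haux3 (a - i) (by omega) 0 (by omega) h
          omega
      · rw [if_neg hia, if_pos hia'] at h
        by_cases h2 : i = a + 1
        · rw [if_pos h2] at h
          exact absurd h.symm (haux1 (a - i') (by omega))
        · rw [if_neg h2] at h
          have := haux3 (a - i') (by omega) 0 (by omega) h.symm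
          omega
      · rw [if_neg hia, if_neg hia'] at h
        by_cases h2 : i = a + 1 <;> by_cases h3 : i' = a + 1
        · omega
        · rw [if_pos h2, if_neg h3] at h
          exact absurd h.symm (haux2 0 (by omega))
        · rw [if_neg h2, if_pos h3] at h
          exact absurd h (haux2 0 (by omega))
        · omega
    · -- hRinj
      intro i hi i' hi' h
      beta_reduce at h
      have := haux5 (b - i) (by omega) (b - i') (by omega) h
      omega
    · -- hPa
      intro i hi
      beta_reduce
      have e : D - i = (D - (i + 1)) + 1 := by omega
      rw [e]
      exact harcx _ (by omega)
    · -- hQa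
      intro i hi
      beta_reduce
      rcases Nat.lt_or_ge i a with hia | hia
      · rw [if_pos (by omega : i ≤ a), if_pos (by omega : i + 1 ≤ a)]
        have e : a - i = (a - (i + 1)) + 1 := by omega
        rw [e]
        exact harcx _ (by omega)
      · rcases Nat.lt_or_ge i (a + 1) with hia1 | hia1
        · rw [if_pos (by omega : i ≤ a), if_neg (by omega : ¬ (i + 1 ≤ a)),
            if_pos (by omega : i + 1 = a + 1)]
          have e : a - i = 0 := by omega
          rw [e]
          exact hxy₀
        · rw [if_neg (by omega : ¬ (i ≤ a)), if_pos (by omega : i = a + 1),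
            if_neg (by omega : ¬ (i + 1 ≤ a)), if_neg (by omega : ¬ (i + 1 = a + 1))]
          exact hB
    · -- hRa
      intro i hi
      beta_reduce
      have e : b - i = (b - (i + 1)) + 1 := by omega
      rw [e]
      exact harcj _ (by omega)
    · -- hQRx
      intro i hi i' hi' h
      beta_reduce at h
      by_cases hia : i ≤ a
      · rw [if_pos hia] at h
        have := haux3 (a - i) (by omega) (b - i') (by omega) h
        left; omega
      · by_cases h2 : i = a + 1
        · rw [if_neg hia, if_pos h2] at h
          exact absurd h.symm (haux2 (b - i') (by omega))
        · rw [if_neg hia, if_neg h2] at h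
          have := haux5 0 (by omega) (b - i') (by omega) h
          right; omega
    · -- hPQx
      intro i hi i' hi' h
      beta_reduce at h
      by_cases hia : i' ≤ a
      · rw [if_pos hia] at h
        have := haux4 (D - i) (by omega) (a - i') (by omega) h
        omega
      · by_cases h2 : i' = a + 1
        · rw [if_neg hia, if_pos h2] at h
          exact absurd h (haux1 (D - i) (by omega))
        · rw [if_neg hia, if_neg h2] at h
          have := haux3 (D - i) (by omega) 0 (by omega) h
          omega
    · -- hPRx
      intro i hi i' hi' h
      beta_reduce at h
      have := haux3 (D - i) (by omega) (b - i') (by omega) h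
      omega
    · -- hind
      intro a' b' ha' hb' hG
      beta_reduce at ha' hb' ⊢
      rcases hnormB b' hb' with rfl | ⟨i, hiD, rfl⟩ | ⟨i', hib, rfl⟩
      · -- b' = y₀
        rcases hnormB a' ha' with rfl | ⟨i, hiD, rfl⟩ | ⟨i', hib, rfl⟩
        · exact absurd hG (horient _ _ hG)
        · rcases Nat.eq_zero_or_pos i with h0 | h1
          · subst h0
            refine Or.inr (Or.inl ⟨a, by omega, ?_, ?_⟩)
            · rw [if_pos (le_refl a)]
              have e : a - a = 0 := by omega
              rw [e]
            · rw [if_neg (by omega : ¬ (a + 1 ≤ a)), if_pos (rfl : a + 1 = a + 1)]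
          · exact absurd hG (hnoin i h1 hiD)
        · rcases Nat.eq_zero_or_pos i' with h0 | h1
          · subst h0
            exact absurd hG (horient _ _ hB)
          · exact absurd (Or.inl hG) (hJcontra i' h1 hib)
      · -- b' = t (par^[i] x₀)
        obtain ⟨K, hKm, rfl⟩ : ∃ K, K ≤ m ∧ a' = t K := by
          rcases hnormB a' ha' with rfl | ⟨k, hkD, rfl⟩ | ⟨k', hkb, rfl⟩
          · exact absurd hG (hnoout i hiD)
          · exact ⟨_, hDm k hkD, rfl⟩
          · exact ⟨_, hEm k' (by omega), rfl⟩
        obtain ⟨hl1, hkl⟩ := hinduced K hKm (par^[i] x₀) (hDm i hiD) hG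
        have hiD' : i < D := by
          rcases Nat.lt_or_ge i D with h | h
          · exact h
          · exfalso
            have e : i = D := by omega
            rw [e, hD0'] at hl1
            omega
        have hK : K = par^[i + 1] x₀ := by
          rw [hkl, Function.iterate_succ_apply']
        subst hK
        rcases Nat.lt_or_ge i a with hia | hia
        · refine Or.inr (Or.inl ⟨a - i - 1, by omega, ?_, ?_⟩)
          · rw [if_pos (by omega : a - i - 1 ≤ a)]
            have e : a - (a - i - 1) = i + 1 := by omega
            rw [e]
          · rw [if_pos (by omega : a - i - 1 + 1 ≤ a)]
            have e : a - (a - i - 1 + 1) = i := by omega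
            rw [e]
        · refine Or.inl ⟨D - i - 1, by clear * - hia hiD' ha hsD; omega, ?_, ?_⟩
          · have e : D - (D - i - 1) = i + 1 := by clear * - hia hiD' ha hsD; omega
            rw [e]
          · have e : D - (D - i - 1 + 1) = i := by clear * - hia hiD' ha hsD; omega
            rw [e]
      · -- b' = t (par^[i'] j), i' < b
        rcases hnormB a' ha' with rfl | ⟨k, hkD, rfl⟩ | ⟨k', hkb, rfl⟩
        · -- a' = y₀
          rcases Nat.eq_zero_or_pos i' with h0 | h1
          · subst h0
            refine Or.inr (Or.inl ⟨a + 1, by omega, ?_, ?_⟩)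
            · rw [if_neg (by omega : ¬ (a + 1 ≤ a)), if_pos (rfl : a + 1 = a + 1)]
            · rw [if_neg (by omega : ¬ (a + 2 ≤ a)), if_neg (by omega : ¬ (a + 2 = a + 1))]
              exact congrArg t hcj0.symm
          · exact absurd (Or.inr hG) (hJcontra i' h1 hib)
        · -- a' = t (par^[k] x₀)
          obtain ⟨hl1, hkl⟩ := hinduced _ (hDm k hkD) (par^[i'] j) (hEm i' (by omega)) hG
          have hK : par^[k] x₀ = par^[i' + 1] j := by
            rw [hkl, Function.iterate_succ_apply']
          refine Or.inr (Or.inr ⟨b - i' - 1, by omega, ?_, ?_⟩)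
          · have e : b - (b - i' - 1) = i' + 1 := by omega
            rw [e, ← hK]
          · have e : b - (b - i' - 1 + 1) = i' := by omega
            rw [e]
        · -- a' = t (par^[k'] j)
          obtain ⟨hl1, hkl⟩ := hinduced _ (hEm k' (by omega)) (par^[i'] j) (hEm i' (by omega)) hG
          have hK : par^[k'] j = par^[i' + 1] j := by
            rw [hkl, Function.iterate_succ_apply']
          refine Or.inr (Or.inr ⟨b - i' - 1, by omega, ?_, ?_⟩)
          · have e : b - (b - i' - 1) = i' + 1 := by omega
            rw [e, ← hK]
          · have e : b - (b - i' - 1 + 1) = i' := by omega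
            rw [e]
end

section
/- Let G be an oriented graph, s a vertex, and T an induced out-tree rooted at s produced by IBFS such that every vertex x of T satisfies: every out-neighbour of x not in T has an out-neighbour among the ancestors of x in T. Then G contains no induced cherry rooted at s. -/
/-- Let `G` be an oriented graph and let `T` be an induced out-tree rooted at `s` produced by
induced breadth-first search `IBFS(G,s)` (vertices `t 0 = s, t 1, …, t m` in order of
addition, parent function `par`, the only arcs of `G` among the tree vertices being the tree
arcs, with the IBFS maximality property).  If every vertex `t i` of `T` satisfies: every
out-neighbour of `t i` not in `T` has an out-neighbour among the ancestors of `t i` in `T`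
(outcome (ii) of Theorem 4.1), then `G` contains no induced cherry rooted at `s`. -/
theorem stmt11 {V : Type} (G : V → V → Prop) (horient : ∀ a b, G a b → ¬ G b a)
    (s : V) (m : ℕ) (t : ℕ → V) (par : ℕ → ℕ)
    (ht0 : t 0 = s)
    (hinj : ∀ i ≤ m, ∀ j ≤ m, t i = t j → i = j)
    (hpar : ∀ k, 1 ≤ k → k ≤ m → par k < k ∧ G (t (par k)) (t k))
    (hmono : ∀ k l, 1 ≤ k → k ≤ l → l ≤ m → par k ≤ par l)
    (hinduced : ∀ i ≤ m, ∀ j ≤ m, G (t i) (t j) → 1 ≤ j ∧ i = par j)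
    (hmax : ∀ i ≤ m, ∀ y : V, (∀ j ≤ m, t j ≠ y) → G (t i) y →
      ∃ j ≤ m, j ≠ i ∧ (G (t j) y ∨ G y (t j)) ∧ (j = 0 ∨ par j ≤ i))
    (hii : ∀ i ≤ m, ∀ y : V, (∀ j ≤ m, t j ≠ y) → G (t i) y →
      ∃ j ≤ m, G y (t j) ∧
        Relation.ReflTransGen (fun p q : ℕ => p = par q ∧ 1 ≤ q ∧ q ≤ m) j i) :
    ¬ ∃ (X : Set V) (hs : s ∈ X), IsCherryAt (fun a b : X => G a.1 b.1) ⟨s, hs⟩ := by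
  rintro ⟨X, hs, np, nq, nr, P, Q, R, hnq, hnr, h2, hP0, hPQ0, hQR0, hv,
    hPinj, hQinj, hRinj, hParc, hQarc, hRarc, hQR, hPQ, hPR, hcover, hchar⟩
  have anc0 : ∀ j, Relation.ReflTransGen
      (fun p q : ℕ => p = par q ∧ 1 ≤ q ∧ q ≤ m) j 0 → j = 0 := by
    intro j hj
    rcases Relation.ReflTransGen.cases_tail hj with h | ⟨c, _, h⟩
    · exact h.symm
    · exact absurd h.2.1 (by omega)
  have ancstep : ∀ j c, Relation.ReflTransGen
      (fun p q : ℕ => p = par q ∧ 1 ≤ q ∧ q ≤ m) j c →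
      j = c ∨ Relation.ReflTransGen
        (fun p q : ℕ => p = par q ∧ 1 ≤ q ∧ q ≤ m) j (par c) := by
    intro j c hj
    rcases Relation.ReflTransGen.cases_tail hj with h | ⟨b, hb, h⟩
    · exact Or.inl h.symm
    · exact Or.inr (h.1 ▸ hb)
  have lemP : ∀ i, i ≤ np → ∃ k, k ≤ m ∧ t k = (P i).1 ∧
      ∀ j, Relation.ReflTransGen (fun p q : ℕ => p = par q ∧ 1 ≤ q ∧ q ≤ m) j k →
        ∃ l, l ≤ i ∧ t j = (P l).1 := by
    intro i
    induction i with
    | zero =>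
      intro _
      refine ⟨0, Nat.zero_le m, by rw [ht0, hP0], ?_⟩
      intro j hj
      exact ⟨0, le_rfl, by rw [anc0 j hj, ht0, hP0]⟩
    | succ i ih =>
      intro hsucc
      obtain ⟨k, hkm, hk, hanc⟩ := ih (Nat.le_of_succ_le hsucc)
      have harcPi : G (t k) (P (i+1)).1 := by
        rw [hk]; exact hParc i (Nat.lt_of_succ_le hsucc)
      by_cases hT : ∃ c, c ≤ m ∧ t c = (P (i+1)).1
      · obtain ⟨c, hcm, hc⟩ := hT
        have hic := hinduced k hkm c hcm (by rw [hc]; exact harcPi)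
        refine ⟨c, hcm, hc, ?_⟩
        intro j hj
        rcases ancstep j c hj with rfl | hj'
        · exact ⟨i+1, le_rfl, hc⟩
        · obtain ⟨l, hl, hjl⟩ := hanc j (by rw [hic.2]; exact hj')
          exact ⟨l, Nat.le_succ_of_le hl, hjl⟩
      · push_neg at hT
        obtain ⟨j, hjm, hGy, hancj⟩ :=
          hii k hkm (P (i+1)).1 (fun c hcm heq => hT c hcm heq) harcPi
        obtain ⟨l, hl, hjl⟩ := hanc j hancj
        exfalso
        have hcarc : G (P (i+1)).1 (P l).1 := by rw [← hjl]; exact hGy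
        rcases (hchar (P (i+1)) (P l)).mp hcarc with
          ⟨a, ha, h1, h2⟩ | ⟨a, ha, h1, h2⟩ | ⟨a, ha, h1, h2⟩
        · have e1 : a = i + 1 := hPinj a (le_of_lt ha) (i+1) hsucc h1
          have e2 : a + 1 = l :=
            hPinj (a+1) ha l (le_trans hl (Nat.le_of_succ_le hsucc)) h2
          omega
        · have u1 := hPQ (i+1) hsucc a (le_of_lt ha) h1.symm
          have u2 := hPQ l (le_trans hl (Nat.le_of_succ_le hsucc)) (a+1) ha h2.symm
          omega
        · have u1 := hPR (i+1) hsucc a (le_of_lt ha) h1.symm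
          have u2 := hPR l (le_trans hl (Nat.le_of_succ_le hsucc)) (a+1) ha h2.symm
          omega
  have lemQ : ∀ i, i ≤ nq → ∃ k, k ≤ m ∧ t k = (Q i).1 ∧
      ∀ j, Relation.ReflTransGen (fun p q : ℕ => p = par q ∧ 1 ≤ q ∧ q ≤ m) j k →
        (∃ l, l ≤ np ∧ t j = (P l).1) ∨ (∃ l, l ≤ i ∧ t j = (Q l).1) := by
    intro i
    induction i with
    | zero =>
      intro _
      obtain ⟨k, hkm, hk, hanc⟩ := lemP np le_rfl
      refine ⟨k, hkm, by rw [hk, hPQ0], ?_⟩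
      intro j hj
      obtain ⟨l, hl, hjl⟩ := hanc j hj
      exact Or.inl ⟨l, hl, hjl⟩
    | succ i ih =>
      intro hsucc
      obtain ⟨k, hkm, hk, hanc⟩ := ih (Nat.le_of_succ_le hsucc)
      have harcQi : G (t k) (Q (i+1)).1 := by
        rw [hk]; exact hQarc i (Nat.lt_of_succ_le hsucc)
      by_cases hT : ∃ c, c ≤ m ∧ t c = (Q (i+1)).1
      · obtain ⟨c, hcm, hc⟩ := hT
        have hic := hinduced k hkm c hcm (by rw [hc]; exact harcQi)
        refine ⟨c, hcm, hc, ?_⟩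
        intro j hj
        rcases ancstep j c hj with rfl | hj'
        · exact Or.inr ⟨i+1, le_rfl, hc⟩
        · rcases hanc j (by rw [hic.2]; exact hj') with ⟨l, hl, hjl⟩ | ⟨l, hl, hjl⟩
          · exact Or.inl ⟨l, hl, hjl⟩
          · exact Or.inr ⟨l, Nat.le_succ_of_le hl, hjl⟩
      · push_neg at hT
        obtain ⟨j, hjm, hGy, hancj⟩ :=
          hii k hkm (Q (i+1)).1 (fun c hcm heq => hT c hcm heq) harcQi
        exfalso
        rcases hanc j hancj with ⟨l, hl, hjl⟩ | ⟨l, hl, hjl⟩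
        · have hcarc : G (Q (i+1)).1 (P l).1 := by rw [← hjl]; exact hGy
          rcases (hchar (Q (i+1)) (P l)).mp hcarc with
            ⟨a, ha, h1, h2⟩ | ⟨a, ha, h1, h2⟩ | ⟨a, ha, h1, h2⟩
          · have u1 := hPQ a (le_of_lt ha) (i+1) hsucc h1
            omega
          · have u2 := hPQ l hl (a+1) ha h2.symm
            omega
          · have u1 := hQR (i+1) hsucc a (le_of_lt ha) h1.symm
            omega
        · have hcarc : G (Q (i+1)).1 (Q l).1 := by rw [← hjl]; exact hGy
          rcases (hchar (Q (i+1)) (Q l)).mp hcarc with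
            ⟨a, ha, h1, h2⟩ | ⟨a, ha, h1, h2⟩ | ⟨a, ha, h1, h2⟩
          · have u1 := hPQ a (le_of_lt ha) (i+1) hsucc h1
            omega
          · have e1 := hQinj a (le_of_lt ha) (i+1) hsucc h1
            have e2 := hQinj (a+1) ha l (le_trans hl (Nat.le_of_succ_le hsucc)) h2
            omega
          · have u1 := hQR (i+1) hsucc a (le_of_lt ha) h1.symm
            omega
  have lemR : ∀ i, i ≤ nr → ∃ k, k ≤ m ∧ t k = (R i).1 ∧
      ∀ j, Relation.ReflTransGen (fun p q : ℕ => p = par q ∧ 1 ≤ q ∧ q ≤ m) j k →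
        (∃ l, l ≤ np ∧ t j = (P l).1) ∨ (∃ l, l ≤ i ∧ t j = (R l).1) := by
    intro i
    induction i with
    | zero =>
      intro _
      obtain ⟨k, hkm, hk, hanc⟩ := lemP np le_rfl
      refine ⟨k, hkm, by rw [hk, hPQ0, hQR0], ?_⟩
      intro j hj
      obtain ⟨l, hl, hjl⟩ := hanc j hj
      exact Or.inl ⟨l, hl, hjl⟩
    | succ i ih =>
      intro hsucc
      obtain ⟨k, hkm, hk, hanc⟩ := ih (Nat.le_of_succ_le hsucc)
      have harcRi : G (t k) (R (i+1)).1 := by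
        rw [hk]; exact hRarc i (Nat.lt_of_succ_le hsucc)
      by_cases hT : ∃ c, c ≤ m ∧ t c = (R (i+1)).1
      · obtain ⟨c, hcm, hc⟩ := hT
        have hic := hinduced k hkm c hcm (by rw [hc]; exact harcRi)
        refine ⟨c, hcm, hc, ?_⟩
        intro j hj
        rcases ancstep j c hj with rfl | hj'
        · exact Or.inr ⟨i+1, le_rfl, hc⟩
        · rcases hanc j (by rw [hic.2]; exact hj') with ⟨l, hl, hjl⟩ | ⟨l, hl, hjl⟩
          · exact Or.inl ⟨l, hl, hjl⟩
          · exact Or.inr ⟨l, Nat.le_succ_of_le hl, hjl⟩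
      · push_neg at hT
        obtain ⟨j, hjm, hGy, hancj⟩ :=
          hii k hkm (R (i+1)).1 (fun c hcm heq => hT c hcm heq) harcRi
        exfalso
        rcases hanc j hancj with ⟨l, hl, hjl⟩ | ⟨l, hl, hjl⟩
        · have hcarc : G (R (i+1)).1 (P l).1 := by rw [← hjl]; exact hGy
          rcases (hchar (R (i+1)) (P l)).mp hcarc with
            ⟨a, ha, h1, h2⟩ | ⟨a, ha, h1, h2⟩ | ⟨a, ha, h1, h2⟩
          · have u1 := hPR a (le_of_lt ha) (i+1) hsucc h1
            omega
          · have u1 := hQR a (le_of_lt ha) (i+1) hsucc h1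
            omega
          · have u2 := hPR l hl (a+1) ha h2.symm
            omega
        · have hcarc : G (R (i+1)).1 (R l).1 := by rw [← hjl]; exact hGy
          rcases (hchar (R (i+1)) (R l)).mp hcarc with
            ⟨a, ha, h1, h2⟩ | ⟨a, ha, h1, h2⟩ | ⟨a, ha, h1, h2⟩
          · have u1 := hPR a (le_of_lt ha) (i+1) hsucc h1
            omega
          · have u1 := hQR a (le_of_lt ha) (i+1) hsucc h1
            omega
          · have e1 := hRinj a (le_of_lt ha) (i+1) hsucc h1
            have e2 := hRinj (a+1) ha l (le_trans hl (Nat.le_of_succ_le hsucc)) h2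
            omega
  obtain ⟨c, hcm, hc, -⟩ := lemQ nq le_rfl
  obtain ⟨k1, hk1m, hk1, -⟩ := lemQ (nq-1) (Nat.sub_le nq 1)
  obtain ⟨k2, hk2m, hk2, -⟩ := lemR (nr-1) (Nat.sub_le nr 1)
  have a1 : G (t k1) (t c) := by
    rw [hk1, hc]
    have h := hQarc (nq-1) (by omega)
    rw [Nat.sub_add_cancel hnq] at h
    exact h
  have a2 : G (t k2) (t c) := by
    rw [hk2, hc]
    have h := hRarc (nr-1) (by omega)
    rw [Nat.sub_add_cancel hnr, ← hv] at h
    exact h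
  have e1 := (hinduced k1 hk1m c hcm a1).2
  have e2 := (hinduced k2 hk2m c hcm a2).2
  have heq : Q (nq-1) = R (nr-1) := by
    apply Subtype.ext
    rw [← hk1, ← hk2, e1, e2]
  have := hQR (nq-1) (Nat.sub_le nq 1) (nr-1) (Nat.sub_le nr 1) heq
  omega
end

section
/- Let P be a directed path from s to t in a digraph G such that P has no forward chord, and suppose the subdigraph of G induced by V(P) contains an arc uv with u occurring after v on P and v ≠ s. Choose such an arc b_3 b_2 with b_2 as close to s as possible on P. Then the initial segment of P from s to b_2 together with the arc b_3 b_2 forms an induced subdivision of A^+_2 (an oriented path with two blocks: a forward directed path followed by one backward arc) with origin s. -/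
/-- An induced subdivision of `A⁺₂` with origin `s` in the digraph `G`: an induced directed
path `Q 0 = s, …, Q n` of length `n ≥ 1`, together with one arc entering its terminus `Q n`
from a vertex `w` not on the path, such that the only arcs of `G` among these vertices are
the path arcs and the arc `w → Q n`. -/
def IsInducedA2Plus {V : Type*} (G : V → V → Prop) (s : V) (n : ℕ) (Q : ℕ → V) (w : V) : Prop :=
  1 ≤ n ∧ Q 0 = s ∧
  (∀ i ≤ n, ∀ j ≤ n, Q i = Q j → i = j) ∧
  (∀ i < n, G (Q i) (Q (i + 1))) ∧
  (∀ i ≤ n, w ≠ Q i) ∧ G w (Q n) ∧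
  (∀ i ≤ n, ∀ j ≤ n, G (Q i) (Q j) → j = i + 1) ∧
  (∀ i ≤ n, ¬ G (Q i) w) ∧
  (∀ i ≤ n, G w (Q i) → i = n)

/-- Let `P` be a directed path from `s = P 0` to `t = P n` in an oriented graph `G` with no
forward chord, and suppose the subdigraph induced by `V(P)` contains a backward arc
`P i → P j` (with `j < i`), every such arc having head different from `s` (`1 ≤ j`).
Choose such an arc `P i₀ → P j₀` with `P j₀` as close to `s` as possible.  Then the initial
segment of `P` from `s` to `P j₀` together with the arc `P i₀ → P j₀` forms an induced
subdivision of `A⁺₂` with origin `s`. -/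
theorem stmt12 {V : Type*} (G : V → V → Prop) (horient : ∀ a b, G a b → ¬ G b a)
    (n : ℕ) (P : ℕ → V)
    (hinj : ∀ i ≤ n, ∀ j ≤ n, P i = P j → i = j)
    (harc : ∀ i < n, G (P i) (P (i + 1)))
    (hnofwd : ∀ i ≤ n, ∀ j ≤ n, G (P i) (P j) → j ≤ i + 1)
    (i₀ j₀ : ℕ) (hi₀ : i₀ ≤ n) (hj₀i₀ : j₀ < i₀) (hj₀ : 1 ≤ j₀)
    (hback : G (P i₀) (P j₀))
    (hmin : ∀ i ≤ n, ∀ j, j < i → G (P i) (P j) → j₀ ≤ j) :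
    IsInducedA2Plus G (P 0) j₀ P (P i₀) := by
  have hj₀n : j₀ ≤ n := le_of_lt (lt_of_lt_of_le hj₀i₀ hi₀)
  refine ⟨hj₀, rfl, ?_, ?_, ?_, hback, ?_, ?_, ?_⟩
  · intro i hi j hj h
    exact hinj i (hi.trans hj₀n) j (hj.trans hj₀n) h
  · intro i hi
    exact harc i (lt_of_lt_of_le hi hj₀n)
  · intro i hi h
    have := hinj i₀ hi₀ i (hi.trans hj₀n) h
    omega
  · intro i hi j hj h
    have h1 := hnofwd i (hi.trans hj₀n) j (hj.trans hj₀n) h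
    rcases lt_trichotomy j i with hlt | heq | hgt
    · have := hmin i (hi.trans hj₀n) j hlt h
      omega
    · subst heq; exact absurd h (horient _ _ h)
    · omega
  · intro i hi h
    have h1 := hnofwd i (hi.trans hj₀n) i₀ hi₀ h
    have : i = j₀ ∧ i₀ = j₀ + 1 := by omega
    obtain ⟨rfl, _⟩ := this
    exact horient _ _ hback h
  · intro i hi h
    have := hmin i₀ hi₀ i (lt_of_le_of_lt hi hj₀i₀) h
    omega
end

section
/- Let G be an oriented graph and s_3 s_2 an arc of G. Let G' be obtained from G by deleting all in-neighbours of a vertex s and all neighbours of s_3 except s_2 (assume s, s_2, s_3 survive and are distinct from each other appropriately). If G' contains a shortest directed path from s to s_2 of length ≥ 1, then G contains an induced subdivision of A^+_2 with origin s. -/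
/-- Let `G` be an oriented graph with an arc `s₃ → s₂` and a vertex `s` (with `s, s₂, s₃`
pairwise distinct), and let `G'` be obtained from `G` by deleting all in-neighbours of `s`
and all neighbours of `s₃` except `s₂` (we assume `s, s₂, s₃` survive these deletions).
If `G'` contains a (shortest) directed path from `s` to `s₂` (necessarily of length ≥ 1),
then `G` contains an induced subdivision of `A⁺₂` with origin `s`. -/
theorem stmt13 {V : Type*} (G : V → V → Prop) (horient : ∀ a b, G a b → ¬ G b a)
    (s s₂ s₃ : V) (harc : G s₃ s₂)
    (hss₂ : s ≠ s₂) (hss₃ : s ≠ s₃) (hs₂s₃ : s₂ ≠ s₃)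
    (hsurv₁ : ¬ G s s₃) (hsurv₂ : ¬ G s₃ s) (hsurv₃ : ¬ G s₂ s)
    (hpath : ∃ (n : ℕ) (Q : ℕ → V),
      Q 0 = s ∧ Q n = s₂ ∧
      (∀ i ≤ n, ∀ j ≤ n, Q i = Q j → i = j) ∧
      (∀ i < n, G (Q i) (Q (i + 1))) ∧
      -- the path lies in G', i.e. avoids the deleted vertices:
      (∀ i ≤ n, ¬ G (Q i) s) ∧
      (∀ i ≤ n, Q i ≠ s₂ → ¬ G (Q i) s₃ ∧ ¬ G s₃ (Q i))) :
    ∃ (n : ℕ) (Q : ℕ → V) (w : V), IsInducedA2Plus G s n Q w := by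
  classical
  have hirr : ∀ a : V, ¬ G a a := fun a h => horient a a h h
  set Pred : ℕ → Prop := fun n => ∃ Q : ℕ → V,
      Q 0 = s ∧ Q n = s₂ ∧
      (∀ i ≤ n, ∀ j ≤ n, Q i = Q j → i = j) ∧
      (∀ i < n, G (Q i) (Q (i + 1))) ∧
      (∀ i ≤ n, ¬ G (Q i) s) ∧
      (∀ i ≤ n, Q i ≠ s₂ → ¬ G (Q i) s₃ ∧ ¬ G s₃ (Q i)) with hPred
  have hex : ∃ n, Pred n := hpath
  obtain ⟨Q, hQ0, hQn, hinj, harcs, hns, hns3⟩ := Nat.find_spec hex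
  set n := Nat.find hex with hn
  have hmin : ∀ m, m < n → ¬ Pred m := fun m hm => Nat.find_min hex hm
  have hn1 : 1 ≤ n := by
    rcases Nat.eq_zero_or_pos n with h0 | h
    · exfalso; apply hss₂; rw [← hQ0, ← hQn, h0]
    · exact h
  -- no forward chords, by minimality of n
  have hnofwd : ∀ a b, a ≤ n → b ≤ n → a + 2 ≤ b → ¬ G (Q a) (Q b) := by
    intro a b ha hb hab hch
    set d := b - a - 1 with hd
    have hd1 : 1 ≤ d := by omega
    have hb' : b = a + d + 1 := by omega
    apply hmin (n - d) (by omega)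
    refine ⟨fun m => if m ≤ a then Q m else Q (m + d), ?_, ?_, ?_, ?_, ?_, ?_⟩
    · simp [hQ0]
    · have : ¬ (n - d ≤ a) := by omega
      simp only [this, if_false]
      have : n - d + d = n := by omega
      rw [this, hQn]
    · intro i hi j hj hij
      by_cases hia : i ≤ a <;> by_cases hja : j ≤ a <;>
        simp only [hia, hja, if_true, if_false] at hij
      · exact hinj i (by omega) j (by omega) hij
      · have := hinj i (by omega) (j + d) (by omega) hij; omega
      · have := hinj (i + d) (by omega) j (by omega) hij; omega
      · have := hinj (i + d) (by omega) (j + d) (by omega) hij; omega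
    · intro i hi
      by_cases hia : i ≤ a
      · by_cases hi1a : i + 1 ≤ a
        · simp only [hia, hi1a, if_true]; exact harcs i (by omega)
        · have hia' : i = a := by omega
          simp only [hia, hi1a, if_true, if_false]
          have : i + 1 + d = b := by omega
          rw [this, hia']; exact hch
      · have h1 : ¬ (i + 1 ≤ a) := by omega
        simp only [hia, h1, if_false]
        have h2 : i + 1 + d = i + d + 1 := by omega
        rw [h2]
        exact harcs (i + d) (by omega)
    · intro i hi
      by_cases hia : i ≤ a <;> simp only [hia, if_true, if_false]
      · exact hns i (by omega)
      · exact hns (i + d) (by omega)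
    · intro i hi
      by_cases hia : i ≤ a <;> simp only [hia, if_true, if_false]
      · exact hns3 i (by omega)
      · exact hns3 (i + d) (by omega)
  by_cases hbwd : ∃ i, ∃ j, i + 2 ≤ j ∧ j ≤ n ∧ G (Q j) (Q i)
  · -- a backward chord exists; take one with minimal target index
    obtain ⟨j, hj2, hjn, hjch⟩ := Nat.find_spec hbwd
    set i₀ := Nat.find hbwd with hi₀
    have hi₀min : ∀ m, m < i₀ → ¬ ∃ j, m + 2 ≤ j ∧ j ≤ n ∧ G (Q j) (Q m) :=
      fun m hm => Nat.find_min hbwd hm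
    have hi₀1 : 1 ≤ i₀ := by
      rcases Nat.eq_zero_or_pos i₀ with h0 | h
      · exfalso; apply hns j hjn; rw [← hQ0, ← h0]; exact hjch
      · exact h
    have hi₀n : i₀ ≤ n := by omega
    refine ⟨i₀, Q, Q j, hi₀1, hQ0, ?_, ?_, ?_, hjch, ?_, ?_, ?_⟩
    · intro a ha b hb hab; exact hinj a (by omega) b (by omega) hab
    · intro a ha; exact harcs a (by omega)
    · intro a ha hab
      have := hinj j hjn a (by omega) hab; omega
    · intro a ha b hb hab
      by_cases hfwd : a + 2 ≤ b
      · exact absurd hab (hnofwd a b (by omega) (by omega) hfwd)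
      by_cases hb1 : b = a + 1
      · exact hb1
      rcases Nat.lt_or_ge a (b + 1) with h | h
      · have hba : a = b := by omega
        exact absurd hab (hba ▸ hirr _)
      rcases Nat.eq_or_lt_of_le h with h' | h'
      · exact absurd (by rw [h']; exact hab) (horient _ _ (harcs b (by omega)))
      · exact absurd hab (fun hab => hi₀min b (by omega) ⟨a, by omega, by omega, hab⟩)
    · intro a ha hab
      exact hnofwd a j (by omega) hjn (by omega) hab
    · intro a ha hab
      by_contra hne
      exact hi₀min a (by omega) ⟨j, by omega, hjn, hab⟩
  · -- no backward chord: the path is induced; take w = s₃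
    push_neg at hbwd
    have hs₃off : ∀ i, i ≤ n → Q i ≠ s₃ := by
      intro i hi hi3
      rcases Nat.eq_zero_or_pos i with h0 | hpos
      · exact hss₃ (by rw [← hQ0, ← h0]; exact hi3)
      · rcases Nat.lt_or_ge i n with hlt | hge
        · have hne : Q (i - 1) ≠ s₂ := by
            intro h
            have := hinj (i - 1) (by omega) n le_rfl (h.trans hQn.symm)
            omega
          have := (hns3 (i - 1) (by omega) hne).1
          apply this
          have : i - 1 + 1 = i := by omega
          rw [← hi3, ← this]
          exact harcs (i - 1) (by omega)
        · have hin : i = n := by omega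
          exact hs₂s₃ (by rw [← hQn, ← hin]; exact hi3)
    have hind : ∀ a, a ≤ n → ∀ b, b ≤ n → G (Q a) (Q b) → b = a + 1 := by
      intro a ha b hb hab
      by_cases hfwd : a + 2 ≤ b
      · exact absurd hab (hnofwd a b ha hb hfwd)
      by_cases hb1 : b = a + 1
      · exact hb1
      rcases Nat.lt_or_ge a (b + 1) with h | h
      · have hba : a = b := by omega
        exact absurd hab (hba ▸ hirr _)
      rcases Nat.eq_or_lt_of_le h with h' | h'
      · exact absurd (by rw [h']; exact hab) (horient _ _ (harcs b (by omega)))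
      · exact absurd hab (hbwd b a (by omega) ha)
    refine ⟨n, Q, s₃, hn1, hQ0, hinj, harcs, ?_, by rw [hQn]; exact harc, hind, ?_, ?_⟩
    · intro i hi h; exact hs₃off i hi h.symm
    · intro i hi h
      rcases Nat.lt_or_ge i n with hlt | hge
      · have hne : Q i ≠ s₂ := by
          intro he
          have := hinj i hi n le_rfl (he.trans hQn.symm)
          omega
        exact (hns3 i hi hne).1 h
      · have hin : i = n := by omega
        rw [hin, hQn] at h
        exact horient _ _ harc h
    · intro i hi h
      by_contra hne
      have hlt : i < n := by omega
      have hne2 : Q i ≠ s₂ := by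
        intro he
        have := hinj i hi n le_rfl (he.trans hQn.symm)
        omega
      exact (hns3 i hi hne2).2 h
end

section
/- Let Y be a good (x,y_1,y_2)-switch in an oriented graph D, and let S be an induced subdivision of ST_4 in D (where ST_4 is the unique strong tournament on 4 vertices). Then the arc y_2 y_1 is not an arc of S. -/
/-- The strong tournament `ST₄` on 4 vertices: the directed cycle `α γ β δ α`
(`0 → 1 → 2 → 3 → 0`) together with the chords `α → β` (`0 → 2`) and `γ → δ` (`1 → 3`). -/
def ST4 : Fin 4 → Fin 4 → Prop := fun a b =>
  (a = 0 ∧ b = 1) ∨ (a = 1 ∧ b = 2) ∨ (a = 2 ∧ b = 3) ∨ (a = 3 ∧ b = 0) ∨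
  (a = 0 ∧ b = 2) ∨ (a = 1 ∧ b = 3)

/-- `{x, z, y₁, y₂}` is a good `(x, y₁, y₂)`-switch in `D`: the four vertices are distinct,
the arcs of `D` among them are exactly `xz, xy₁, zy₁, zy₂, y₂y₁`, every arc of `D` entering
the switch has head `x`, and every arc of `D` leaving it has tail `y₁` or `y₂`. -/
def IsGoodSwitch {V : Type*} (D : V → V → Prop) (x z y₁ y₂ : V) : Prop :=
  (x ≠ z ∧ x ≠ y₁ ∧ x ≠ y₂ ∧ z ≠ y₁ ∧ z ≠ y₂ ∧ y₁ ≠ y₂) ∧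
  (∀ a b : V, a ∈ ({x, z, y₁, y₂} : Set V) → b ∈ ({x, z, y₁, y₂} : Set V) →
    (D a b ↔ ((a = x ∧ b = z) ∨ (a = x ∧ b = y₁) ∨ (a = z ∧ b = y₁) ∨
      (a = z ∧ b = y₂) ∨ (a = y₂ ∧ b = y₁)))) ∧
  (∀ w : V, w ∉ ({x, z, y₁, y₂} : Set V) → ∀ u ∈ ({x, z, y₁, y₂} : Set V), D w u → u = x) ∧
  (∀ u ∈ ({x, z, y₁, y₂} : Set V), ∀ w : V, w ∉ ({x, z, y₁, y₂} : Set V) → D u w →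
    u = y₁ ∨ u = y₂)

section Aux

variable {U W : Type*} {D : U → U → Prop} {S : W → W → Prop}
  {φ : U → W} {n : ∀ u v, D u v → ℕ} {p : ∀ u v (h : D u v), Fin (n u v h + 1) → W}

lemma cover' (hs : IsSubdivisionVia D S φ n p) (w : W) :
    (∃ v, w = φ v) ∨ ∃ u, ∃ v, ∃ h : D u v, ∃ i : Fin (n u v h + 1),
      0 < i.val ∧ i.val < n u v h ∧ p u v h i = w := by
  obtain ⟨hφ, hn, hends, hinj, hint, hdisj, hcov, harc⟩ := hs
  rcases hcov w with ⟨u, hu⟩ | ⟨u, v, h, i, hi⟩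
  · exact Or.inl ⟨u, hu.symm⟩
  · rcases Nat.eq_zero_or_pos i.val with h0 | h0
    · exact Or.inl ⟨u, by rw [← hi, show i = 0 from Fin.ext h0, (hends u v h).1]⟩
    · rcases eq_or_lt_of_le (Nat.lt_succ_iff.mp i.isLt) with hl | hl
      · exact Or.inl ⟨v, by rw [← hi, show i = Fin.last _ from Fin.ext hl, (hends u v h).2]⟩
      · exact Or.inr ⟨u, v, h, i, h0, hl, hi⟩

lemma into_branch (hs : IsSubdivisionVia D S φ n p) {u v : U} (h : D u v) :
    ∃ a, S a (φ v) := by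
  obtain ⟨hφ, hn, hends, hinj, hint, hdisj, hcov, harc⟩ := hs
  have hn1 := hn u v h
  refine ⟨p u v h (⟨n u v h - 1, by omega⟩ : Fin (n u v h)).castSucc, ?_⟩
  rw [harc]
  refine ⟨u, v, h, ⟨n u v h - 1, by omega⟩, rfl, ?_⟩
  have hlast : (⟨n u v h - 1, by omega⟩ : Fin (n u v h)).succ = Fin.last _ := by
    ext; simp [Fin.val_succ]; omega
  rw [hlast, (hends u v h).2]

lemma exists_in_arc (hs : IsSubdivisionVia D S φ n p) (hD : ∀ v, ∃ u, D u v) (w : W) :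
    ∃ a, S a w := by
  rcases cover' hs w with ⟨v, rfl⟩ | ⟨u, v, h, i, h0, h1, rfl⟩
  · obtain ⟨u, hu⟩ := hD v
    exact into_branch hs hu
  · obtain ⟨hφ, hn, hends, hinj, hint, hdisj, hcov, harc⟩ := hs
    refine ⟨p u v h (⟨i.val - 1, by omega⟩ : Fin (n u v h)).castSucc, ?_⟩
    rw [harc]
    refine ⟨u, v, h, ⟨i.val - 1, by omega⟩, rfl, ?_⟩
    congr 1
    ext
    simp [Fin.val_succ]
    omega

lemma arc_into (hs : IsSubdivisionVia D S φ n p) {a : W} {v : U} (ha : S a (φ v)) :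
    ∃ u, ∃ h : D u v, ∃ j : Fin (n u v h), j.val = n u v h - 1 ∧ p u v h j.castSucc = a := by
  obtain ⟨hφ, hn, hends, hinj, hint, hdisj, hcov, harc⟩ := hs
  rw [harc] at ha
  obtain ⟨u', v', h', j, hja, hjw⟩ := ha
  have h1 : j.val + 1 ≤ n u' v' h' := j.isLt
  rcases eq_or_lt_of_le h1 with he | hl
  · have hlast : j.succ = Fin.last _ := by ext; simp [Fin.val_succ]; omega
    rw [hlast, (hends u' v' h').2] at hjw
    obtain rfl := hφ hjw
    exact ⟨u', h', j, by omega, hja⟩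
  · exact absurd hjw (hint u' v' h' j.succ (by simp [Fin.val_succ])
      (by simp only [Fin.val_succ]; omega) v)

lemma arc_internal (hs : IsSubdivisionVia D S φ n p) {u v : U} {h : D u v}
    {i : Fin (n u v h + 1)} (h0 : 0 < i.val) (h1 : i.val < n u v h) {a b : W}
    (ha : S a (p u v h i)) (hb : S b (p u v h i)) : a = b := by
  obtain ⟨hφ, hn, hends, hinj, hint, hdisj, hcov, harc⟩ := hs
  rw [harc] at ha hb
  obtain ⟨u1, v1, g1, j, hja, hjw⟩ := ha
  obtain ⟨u2, v2, g2, k, hka, hkw⟩ := hb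
  have hj : j.val + 1 < n u1 v1 g1 := by
    rcases eq_or_lt_of_le (Nat.succ_le_of_lt j.isLt : j.val + 1 ≤ _) with he | hl
    · exfalso
      have hlast : j.succ = Fin.last _ := by ext; simp [Fin.val_succ]; omega
      rw [hlast, (hends u1 v1 g1).2] at hjw
      exact hint u v h i h0 h1 v1 hjw.symm
    · exact hl
  have hk : k.val + 1 < n u2 v2 g2 := by
    rcases eq_or_lt_of_le (Nat.succ_le_of_lt k.isLt : k.val + 1 ≤ _) with he | hl
    · exfalso
      have hlast : k.succ = Fin.last _ := by ext; simp [Fin.val_succ]; omega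
      rw [hlast, (hends u2 v2 g2).2] at hkw
      exact hint u v h i h0 h1 v2 hkw.symm
    · exact hl
  obtain ⟨rfl, rfl, hvj⟩ := hdisj u v h u1 v1 g1 i j.succ h0 h1 (by simp [Fin.val_succ])
    (by simpa [Fin.val_succ] using hj) hjw.symm
  obtain ⟨rfl, rfl, hvk⟩ := hdisj u v h u2 v2 g2 i k.succ h0 h1 (by simp [Fin.val_succ])
    (by simpa [Fin.val_succ] using hk) hkw.symm
  obtain rfl : h = g1 := rfl
  obtain rfl : h = g2 := rfl
  rw [← hja, ← hka]
  congr 1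
  ext
  simp only [Fin.coe_castSucc]
  simp only [Fin.val_succ] at hvj hvk
  omega

lemma indeg_le2 (hs : IsSubdivisionVia D S φ n p)
    (hD2 : ∀ v u1 u2 u3, D u1 v → D u2 v → D u3 v → u1 = u2 ∨ u1 = u3 ∨ u2 = u3)
    {w a b c : W} (ha : S a w) (hb : S b w) (hc : S c w) : a = b ∨ a = c ∨ b = c := by
  rcases cover' hs w with ⟨v, rfl⟩ | ⟨u, v, h, i, h0, h1, rfl⟩
  · obtain ⟨ua, hha, ja, hja, hpa⟩ := arc_into hs ha
    obtain ⟨ub, hhb, jb, hjb, hpb⟩ := arc_into hs hb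
    obtain ⟨uc, hhc, jc, hjc, hpc⟩ := arc_into hs hc
    have key : ∀ (u1 u2 : U) (g1 : D u1 v) (g2 : D u2 v) (j1 : Fin (n u1 v g1))
        (j2 : Fin (n u2 v g2)), u1 = u2 → j1.val = n u1 v g1 - 1 → j2.val = n u2 v g2 - 1 →
        p u1 v g1 j1.castSucc = p u2 v g2 j2.castSucc := by
      rintro u1 u2 g1 g2 j1 j2 rfl e1 e2
      obtain rfl : g2 = g1 := rfl
      congr 1
      ext
      simp only [Fin.coe_castSucc]
      omega
    rcases hD2 v ua ub uc hha hhb hhc with he | he | he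
    · exact Or.inl (by rw [← hpa, ← hpb]; exact key _ _ _ _ _ _ he hja hjb)
    · exact Or.inr (Or.inl (by rw [← hpa, ← hpc]; exact key _ _ _ _ _ _ he hja hjc))
    · exact Or.inr (Or.inr (by rw [← hpb, ← hpc]; exact key _ _ _ _ _ _ he hjb hjc))
  · exact Or.inl (arc_internal hs h0 h1 ha hb)

end Aux

lemma ST4_in_exists : ∀ v : Fin 4, ∃ u, ST4 u v := by
  intro v
  fin_cases v
  · exact ⟨3, by simp [ST4]⟩
  · exact ⟨0, by simp [ST4]⟩
  · exact ⟨1, by simp [ST4]⟩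
  · exact ⟨2, by simp [ST4]⟩

lemma ST4_indeg_le2 : ∀ (v u1 u2 u3 : Fin 4), ST4 u1 v → ST4 u2 v → ST4 u3 v →
    u1 = u2 ∨ u1 = u3 ∨ u2 = u3 := by
  intro v u1 u2 u3 h1 h2 h3
  fin_cases v <;> fin_cases u1 <;> fin_cases u2 <;> fin_cases u3 <;> simp_all [ST4]

/-- Let `{x, z, y₁, y₂}` be a good `(x, y₁, y₂)`-switch in an oriented graph `D`, and let
`X` induce a subdivision of `ST₄` in `D`.  Then the arc `y₂ → y₁` is not an arc of this
induced subdivision, i.e. `y₂` and `y₁` do not both belong to `X`. -/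
theorem stmt14 {V : Type} (D : V → V → Prop) (horient : ∀ a b, D a b → ¬ D b a)
    (x z y₁ y₂ : V) (hswitch : IsGoodSwitch D x z y₁ y₂)
    (X : Set V) (hS : IsSubdivision ST4 (fun a b : X => D a.1 b.1)) :
    ¬ (y₂ ∈ X ∧ y₁ ∈ X) := by
  rintro ⟨hy2, hy1⟩
  obtain ⟨φ, n, p, hs⟩ := hS
  obtain ⟨⟨hxz, hxy1, hxy2, hzy1, hzy2, hy12⟩, harcs, hin, hout⟩ := hswitch
  have hmx : x ∈ ({x, z, y₁, y₂} : Set V) := by simp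
  have hmz : z ∈ ({x, z, y₁, y₂} : Set V) := by simp
  have hmy1 : y₁ ∈ ({x, z, y₁, y₂} : Set V) := by simp
  have hmy2 : y₂ ∈ ({x, z, y₁, y₂} : Set V) := by simp
  -- z ∈ X
  have hzX : z ∈ X := by
    obtain ⟨a, haS⟩ := exists_in_arc hs ST4_in_exists ⟨y₂, hy2⟩
    have hDa : D a.1 y₂ := haS
    by_cases hmem : a.1 ∈ ({x, z, y₁, y₂} : Set V)
    · have := (harcs a.1 y₂ hmem hmy2).1 hDa
      rcases this with ⟨_, h2⟩ | ⟨_, h2⟩ | ⟨_, h2⟩ | ⟨h1, _⟩ | ⟨_, h2⟩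
      · exact (hzy2 h2.symm).elim
      · exact (hy12 h2.symm).elim
      · exact (hy12 h2.symm).elim
      · rw [← h1]; exact a.2
      · exact (hy12 h2.symm).elim
    · exact (hxy2 (hin a.1 hmem y₂ hmy2 hDa).symm).elim
  -- x ∈ X
  have hxX : x ∈ X := by
    obtain ⟨a, haS⟩ := exists_in_arc hs ST4_in_exists ⟨z, hzX⟩
    have hDa : D a.1 z := haS
    by_cases hmem : a.1 ∈ ({x, z, y₁, y₂} : Set V)
    · have := (harcs a.1 z hmem hmz).1 hDa
      rcases this with ⟨h1, _⟩ | ⟨_, h2⟩ | ⟨_, h2⟩ | ⟨_, h2⟩ | ⟨_, h2⟩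
      · rw [← h1]; exact a.2
      · exact (hzy1 h2).elim
      · exact (hzy1 h2).elim
      · exact (hzy2 h2).elim
      · exact (hzy1 h2).elim
    · exact (hxz (hin a.1 hmem z hmz hDa).symm).elim
  -- the three arcs into y₁
  have hDxy1 : D x y₁ := (harcs x y₁ hmx hmy1).2 (by tauto)
  have hDzy1 : D z y₁ := (harcs z y₁ hmz hmy1).2 (by tauto)
  have hDy2y1 : D y₂ y₁ := (harcs y₂ y₁ hmy2 hmy1).2 (by tauto)
  have ha : D (⟨x, hxX⟩ : X).1 (⟨y₁, hy1⟩ : X).1 := hDxy1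
  have hb : D (⟨z, hzX⟩ : X).1 (⟨y₁, hy1⟩ : X).1 := hDzy1
  have hc : D (⟨y₂, hy2⟩ : X).1 (⟨y₁, hy1⟩ : X).1 := hDy2y1
  rcases indeg_le2 hs ST4_indeg_le2 ha hb hc with he | he | he
  · exact hxz (congrArg Subtype.val he)
  · exact hxy2 (congrArg Subtype.val he)
  · exact hzy2 (congrArg Subtype.val he)
end

section
/- Let Y be a good (x,y_1,y_2)-switch in an oriented graph D, and let S be an induced subdivision of ST_4 in D. Then S intersects Y in exactly one of: the path (x,y_1), the path (x,z,y_2), or the empty set. -/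
instance : DecidableRel ST4 := fun a b => by unfold ST4; infer_instance

lemma st4_out (u : Fin 4) : ∃ v, ST4 u v := by revert u; decide
lemma st4_in (u : Fin 4) : ∃ v, ST4 v u := by revert u; decide
lemma st4_indeg (v u₁ u₂ u₃ : Fin 4) (h₁ : ST4 u₁ v) (h₂ : ST4 u₂ v) (h₃ : ST4 u₃ v) :
    u₁ = u₂ ∨ u₁ = u₃ ∨ u₂ = u₃ := by revert h₁ h₂ h₃; revert v u₁ u₂ u₃; decide
lemma st4_deg2 (u : Fin 4) :
    (∃ v w, v ≠ w ∧ ST4 u v ∧ ST4 u w) ∨ (∃ v w, v ≠ w ∧ ST4 v u ∧ ST4 w u) := by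
  revert u; decide

section Sub

variable {W : Type*} {S : W → W → Prop} {φ : Fin 4 → W} {n : ∀ u v, ST4 u v → ℕ}
  {p : ∀ u v (h : ST4 u v), Fin (n u v h + 1) → W}

lemma arc_from_branch (hsub : IsSubdivisionVia ST4 S φ n p) {u v : Fin 4} (h : ST4 u v)
    {i : Fin (n u v h + 1)} (hi : i.val = 1) : S (φ u) (p u v h i) := by
  obtain ⟨hinj, hn, hend, hpinj, hint, hdisj, hcov, harc⟩ := hsub
  refine (harc _ _).2 ⟨u, v, h, ⟨0, hn u v h⟩, ?_, ?_⟩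
  · have : (⟨0, hn u v h⟩ : Fin (n u v h)).castSucc = 0 := by ext; simp
    rw [this]; exact (hend u v h).1
  · congr 1; ext; simp [hi]

lemma arc_to_branch (hsub : IsSubdivisionVia ST4 S φ n p) {u v : Fin 4} (h : ST4 u v)
    {i : Fin (n u v h + 1)} (hi : i.val = n u v h - 1) : S (p u v h i) (φ v) := by
  obtain ⟨hinj, hn, hend, hpinj, hint, hdisj, hcov, harc⟩ := hsub
  have h1 := hn u v h
  refine (harc _ _).2 ⟨u, v, h, ⟨n u v h - 1, by omega⟩, ?_, ?_⟩
  · congr 1; ext; simp [hi]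
  · have : (⟨n u v h - 1, by omega⟩ : Fin (n u v h)).succ = Fin.last _ := by
      ext; simp [Fin.last]; omega
    rw [this]; exact (hend u v h).2

lemma first_ne (hsub : IsSubdivisionVia ST4 S φ n p) {u v v' : Fin 4}
    (h : ST4 u v) (h' : ST4 u v') (hvv : v ≠ v')
    {i : Fin (n u v h + 1)} {j : Fin (n u v' h' + 1)} (hi : i.val = 1) (hj : j.val = 1) :
    p u v h i ≠ p u v' h' j := by
  obtain ⟨hinj, hn, hend, hpinj, hint, hdisj, hcov, harc⟩ := hsub
  intro heq
  rcases Nat.lt_or_ge 1 (n u v h) with hlt | hle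
  · rcases Nat.lt_or_ge 1 (n u v' h') with hlt' | hle'
    · exact hvv (hdisj u v h u v' h' i j (by omega) (by omega) (by omega) (by omega) heq).2.1
    · have hn' : n u v' h' = 1 := le_antisymm hle' (hn u v' h')
      have : j = Fin.last _ := by ext; simp [Fin.last]; omega
      rw [this, (hend u v' h').2] at heq
      exact hint u v h i (by omega) (by omega) v' heq
  · have hn1 : n u v h = 1 := le_antisymm hle (hn u v h)
    have : i = Fin.last _ := by ext; simp [Fin.last]; omega
    rw [this, (hend u v h).2] at heq
    rcases Nat.lt_or_ge 1 (n u v' h') with hlt' | hle'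
    · exact hint u v' h' j (by omega) (by omega) v heq.symm
    · have hn' : n u v' h' = 1 := le_antisymm hle' (hn u v' h')
      have : j = Fin.last _ := by ext; simp [Fin.last]; omega
      rw [this, (hend u v' h').2] at heq
      exact hvv (hinj heq)

lemma last_ne (hsub : IsSubdivisionVia ST4 S φ n p) {u u' v : Fin 4}
    (h : ST4 u v) (h' : ST4 u' v) (huu : u ≠ u')
    {i : Fin (n u v h + 1)} {j : Fin (n u' v h' + 1)}
    (hi : i.val = n u v h - 1) (hj : j.val = n u' v h' - 1) :
    p u v h i ≠ p u' v h' j := by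
  obtain ⟨hinj, hn, hend, hpinj, hint, hdisj, hcov, harc⟩ := hsub
  have h1 := hn u v h
  have h1' := hn u' v h'
  intro heq
  rcases Nat.lt_or_ge 1 (n u v h) with hlt | hle
  · rcases Nat.lt_or_ge 1 (n u' v h') with hlt' | hle'
    · exact huu (hdisj u v h u' v h' i j (by omega) (by omega) (by omega) (by omega) heq).1
    · have hn' : n u' v h' = 1 := le_antisymm hle' h1'
      have : j = 0 := by ext; simp only [Fin.val_zero]; omega
      rw [this, (hend u' v h').1] at heq
      exact hint u v h i (by omega) (by omega) u' heq
  · have hn1 : n u v h = 1 := le_antisymm hle h1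
    have : i = 0 := by ext; simp only [Fin.val_zero]; omega
    rw [this, (hend u v h).1] at heq
    rcases Nat.lt_or_ge 1 (n u' v h') with hlt' | hle'
    · exact hint u' v h' j (by omega) (by omega) u heq.symm
    · have hn' : n u' v h' = 1 := le_antisymm hle' h1'
      have : j = 0 := by ext; simp only [Fin.val_zero]; omega
      rw [this, (hend u' v h').1] at heq
      exact huu (hinj heq)

end Sub

section Sub2

variable {W : Type*} {S : W → W → Prop} {φ : Fin 4 → W} {n : ∀ u v, ST4 u v → ℕ}
  {p : ∀ u v (h : ST4 u v), Fin (n u v h + 1) → W}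

lemma exists_out_branch (hsub : IsSubdivisionVia ST4 S φ n p) (u : Fin 4) :
    ∃ a, S (φ u) a := by
  obtain ⟨v, hv⟩ := st4_out u
  exact ⟨_, arc_from_branch hsub hv (i := ⟨1, by have := hsub.2.1 u v hv; omega⟩) rfl⟩

lemma exists_in_branch (hsub : IsSubdivisionVia ST4 S φ n p) (u : Fin 4) :
    ∃ a, S a (φ u) := by
  obtain ⟨v, hv⟩ := st4_in u
  exact ⟨_, arc_to_branch hsub hv (i := ⟨n v u hv - 1, by omega⟩) rfl⟩

lemma exists_out (hsub : IsSubdivisionVia ST4 S φ n p) (w : W) : ∃ a, S w a := by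
  rcases hsub.2.2.2.2.2.2.1 w with ⟨u, rfl⟩ | ⟨u, v, h, i, rfl⟩
  · exact exists_out_branch hsub u
  · rcases Nat.lt_or_ge i.val (n u v h) with hlt | hge
    · refine ⟨p u v h ⟨i.val + 1, by omega⟩, (hsub.2.2.2.2.2.2.2 _ _).2
        ⟨u, v, h, ⟨i.val, hlt⟩, ?_, ?_⟩⟩ <;> (apply congrArg; ext; simp)
    · have hi : i = Fin.last _ := by ext; simp [Fin.last]; omega
      rw [hi, (hsub.2.2.1 u v h).2]
      exact exists_out_branch hsub v

lemma exists_in (hsub : IsSubdivisionVia ST4 S φ n p) (w : W) : ∃ a, S a w := by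
  rcases hsub.2.2.2.2.2.2.1 w with ⟨u, rfl⟩ | ⟨u, v, h, i, rfl⟩
  · exact exists_in_branch hsub u
  · rcases Nat.eq_zero_or_pos i.val with h0 | hpos
    · have hi : i = 0 := by ext; simpa using h0
      rw [hi, (hsub.2.2.1 u v h).1]
      exact exists_in_branch hsub u
    · refine ⟨p u v h ⟨i.val - 1, by omega⟩, (hsub.2.2.2.2.2.2.2 _ _).2
        ⟨u, v, h, ⟨i.val - 1, by omega⟩, ?_, ?_⟩⟩
      · apply congrArg; ext; simp
      · apply congrArg; ext; simp; omega

lemma in_pair (hsub : IsSubdivisionVia ST4 S φ n p) {w a b : W} (ha : S a w) (hb : S b w) :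
    a = b ∨ ∃ (v u u' : Fin 4) (h : ST4 u v) (h' : ST4 u' v), u ≠ u' ∧ w = φ v ∧
      (∃ i : Fin (n u v h + 1), i.val = n u v h - 1 ∧ a = p u v h i) ∧
      (∃ j : Fin (n u' v h' + 1), j.val = n u' v h' - 1 ∧ b = p u' v h' j) := by
  obtain ⟨hinj, hn, hend, hpinj, hint, hdisj, hcov, harc⟩ := hsub
  obtain ⟨u, v, h, i, hi1, hi2⟩ := (harc a w).1 ha
  obtain ⟨u', v', h', j, hj1, hj2⟩ := (harc b w).1 hb
  rcases Nat.lt_or_ge (i.val + 1) (n u v h) with hlt | hge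
  · rcases Nat.lt_or_ge (j.val + 1) (n u' v' h') with hlt' | hge'
    · obtain ⟨rfl, rfl, hij⟩ := hdisj u v h u' v' h' i.succ j.succ (by simp) (by simpa) (by simp)
        (by simpa) (hi2.trans hj2.symm)
      left
      have : h = h' := Subsingleton.elim _ _
      subst this
      have : i = j := by ext; simpa using hij
      subst this
      exact hi1.symm.trans hj1
    · have hjn : j.val + 1 = n u' v' h' := le_antisymm (by omega) hge'
      exfalso
      have : j.succ = Fin.last _ := by ext; simpa using hjn
      rw [this, (hend u' v' h').2] at hj2
      exact hint u v h i.succ (by simp) (by simpa) v' (hi2.trans hj2.symm)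
  · have hin : i.val + 1 = n u v h := le_antisymm (by omega) hge
    have : i.succ = Fin.last _ := by ext; simpa using hin
    rw [this, (hend u v h).2] at hi2
    rcases Nat.lt_or_ge (j.val + 1) (n u' v' h') with hlt' | hge'
    · exfalso
      exact hint u' v' h' j.succ (by simp) (by simpa) v (hj2.trans hi2.symm)
    · have hjn : j.val + 1 = n u' v' h' := le_antisymm (by omega) hge'
      have : j.succ = Fin.last _ := by ext; simpa using hjn
      rw [this, (hend u' v' h').2] at hj2
      have hvv : v = v' := hinj (hi2.trans hj2.symm)
      subst hvv
      by_cases huu : u = u'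
      · subst huu
        left
        have : h = h' := Subsingleton.elim _ _
        subst this
        have : i = j := by ext; omega
        subst this
        exact hi1.symm.trans hj1
      · right
        exact ⟨v, u, u', h, h', huu, hi2.symm,
          ⟨i.castSucc, by simp; omega, hi1.symm⟩, ⟨j.castSucc, by simp; omega, hj1.symm⟩⟩

lemma indeg_le_two (hsub : IsSubdivisionVia ST4 S φ n p) {w a b c : W}
    (ha : S a w) (hb : S b w) (hc : S c w) : a = b ∨ a = c ∨ b = c := by
  rcases in_pair hsub ha hb with hab | ⟨v, u₁, u₂, h₁, h₂, h12, rfl, ⟨i₁, hi₁, rfl⟩, ⟨i₂, hi₂, rfl⟩⟩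
  · exact Or.inl hab
  rcases in_pair hsub ha hc with hac | ⟨v', u₃, u₄, h₃, h₄, h34, hv', ⟨i₃, hi₃, ha3⟩, ⟨i₄, hi₄, rfl⟩⟩
  · exact Or.inr (Or.inl hac)
  rcases in_pair hsub hb hc with hbc | ⟨v'', u₅, u₆, h₅, h₆, h56, hv'', ⟨i₅, hi₅, hb5⟩, ⟨i₆, hi₆, hc6⟩⟩
  · exact Or.inr (Or.inr hbc)
  exfalso
  have hvv' : v = v' := hsub.1 hv'
  subst hvv'
  have hvv'' : v = v'' := hsub.1 hv''
  subst hvv''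
  -- a = p u₁ v i₁ = p u₃ v i₃  ⇒ u₁ = u₃
  have e13 : u₁ = u₃ := by
    by_contra hne
    exact last_ne hsub h₁ h₃ hne hi₁ hi₃ ha3
  have e25 : u₂ = u₅ := by
    by_contra hne
    exact last_ne hsub h₂ h₅ hne hi₂ hi₅ hb5
  have e46 : u₄ = u₆ := by
    by_contra hne
    exact last_ne hsub h₄ h₆ hne hi₄ hi₆ hc6
  rcases st4_indeg v u₁ u₂ u₄ h₁ h₂ h₄ with e | e | e
  · exact h12 e
  · exact h34 (e13 ▸ e)
  · exact h56 (e25 ▸ e46 ▸ e)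

end Sub2

section Sub3

variable {W : Type*} {S : W → W → Prop} {φ : Fin 4 → W} {n : ∀ u v, ST4 u v → ℕ}
  {p : ∀ u v (h : ST4 u v), Fin (n u v h + 1) → W}

lemma branch_case (hsub : IsSubdivisionVia ST4 S φ n p) (u : Fin 4) {a c : W}
    (hain : ∀ b, S b (φ u) → b = a) (hcout : ∀ b, S (φ u) b → b = c) : False := by
  rcases st4_deg2 u with ⟨v, v', hvv, h, h'⟩ | ⟨v, v', hvv, h, h'⟩
  · have hb1 : S (φ u) (p u v h ⟨1, by have := hsub.2.1 u v h; omega⟩) :=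
      arc_from_branch hsub h rfl
    have hb2 : S (φ u) (p u v' h' ⟨1, by have := hsub.2.1 u v' h'; omega⟩) :=
      arc_from_branch hsub h' rfl
    exact first_ne hsub h h' hvv rfl rfl ((hcout _ hb1).trans (hcout _ hb2).symm)
  · have hb1 : S (p v u h ⟨n v u h - 1, by omega⟩) (φ u) := arc_to_branch hsub h rfl
    have hb2 : S (p v' u h' ⟨n v' u h' - 1, by omega⟩) (φ u) := arc_to_branch hsub h' rfl
    exact last_ne hsub h h' hvv rfl rfl ((hain _ hb1).trans (hain _ hb2).symm)

lemma no_in1_out1_chord (hsub : IsSubdivisionVia ST4 S φ n p) {w a c : W}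
    (hac : S a c)
    (hain : ∀ b, S b w → b = a) (hcout : ∀ b, S w b → b = c)
    (haw : a ≠ w) (hwc : w ≠ c) : False := by
  have hsub' := hsub
  obtain ⟨hinj, hn, hend, hpinj, hint, hdisj, hcov, harc⟩ := hsub'
  rcases hcov w with ⟨u, rfl⟩ | ⟨u, v, h, i, rfl⟩
  · exact branch_case hsub u hain hcout
  rcases Nat.eq_zero_or_pos i.val with h0 | hpos
  · have hi : i = 0 := by ext; simpa using h0
    rw [hi, (hend u v h).1] at hain hcout
    exact branch_case hsub u hain hcout
  rcases Nat.lt_or_ge i.val (n u v h) with hlt | hge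
  swap
  · have hi : i = Fin.last _ := by ext; simp [Fin.last]; omega
    rw [hi, (hend u v h).2] at hain hcout
    exact branch_case hsub v hain hcout
  -- internal case: 0 < i.val < n u v h
  have hpred : S (p u v h ⟨i.val - 1, by omega⟩) (p u v h i) := by
    refine (harc _ _).2 ⟨u, v, h, ⟨i.val - 1, by omega⟩, ?_, ?_⟩
    · apply congrArg; ext; simp
    · apply congrArg; ext; simp; omega
  have hsucc : S (p u v h i) (p u v h ⟨i.val + 1, by omega⟩) := by
    refine (harc _ _).2 ⟨u, v, h, ⟨i.val, by omega⟩, ?_, ?_⟩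
    · apply congrArg; ext; simp
    · apply congrArg; ext; simp
  have ha' : p u v h ⟨i.val - 1, by omega⟩ = a := hain _ hpred
  have hc' : p u v h ⟨i.val + 1, by omega⟩ = c := hcout _ hsucc
  obtain ⟨u', v', h', j, hj1, hj2⟩ := (harc a c).1 hac
  -- case i.val ≥ 2 : a is internal
  rcases Nat.lt_or_ge 1 i.val with h2 | hle1
  · rcases Nat.eq_zero_or_pos j.val with hj0 | hjpos
    · have : j.castSucc = 0 := by ext; simpa using hj0
      rw [this, (hend u' v' h').1] at hj1
      exact hint u v h ⟨i.val - 1, by omega⟩ (by simp; omega) (by simp; omega) u'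
        (ha'.trans hj1.symm)
    · obtain ⟨rfl, rfl, hval⟩ := hdisj u' v' h' u v h j.castSucc ⟨i.val - 1, by omega⟩
        (by simpa) (by simpa using j.isLt) (by simp; omega) (by simp; omega) (hj1.trans ha'.symm)
      have : h' = h := Subsingleton.elim _ _
      subst this
      apply hwc
      rw [← hj2]
      apply congrArg; ext; simp at hval ⊢; omega
  have hi1 : i.val = 1 := by omega
  -- a = φ u
  have haphi : a = φ u := by
    rw [← ha', ← (hend u v h).1]
    apply congrArg; ext; simp; omega
  -- case i.val + 1 < n : c internal
  rcases Nat.lt_or_ge (i.val + 1) (n u v h) with h3 | hge3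
  · rcases Nat.lt_or_ge (j.val + 1) (n u' v' h') with hj3 | hjge
    · obtain ⟨rfl, rfl, hval⟩ := hdisj u' v' h' u v h j.succ ⟨i.val + 1, by omega⟩
        (by simp) (by simpa) (by simp) (by simp; omega) (hj2.trans hc'.symm)
      have : h' = h := Subsingleton.elim _ _
      subst this
      apply haw
      rw [← hj1]
      apply congrArg; ext; simp at hval ⊢; omega
    · have : j.succ = Fin.last _ := by ext; simp; omega
      rw [this, (hend u' v' h').2] at hj2
      exact hint u v h ⟨i.val + 1, by omega⟩ (by simp) (by simp; omega) v'
        (hc'.trans hj2.symm)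
  -- now n u v h = 2, i.val = 1, c = φ v
  have hn2 : n u v h = 2 := by omega
  have hcphi : c = φ v := by
    rw [← hc', ← (hend u v h).2]
    apply congrArg; ext; simp [Fin.last]; omega
  -- the chord a → c : from φ u to φ v
  rcases Nat.eq_zero_or_pos j.val with hj0 | hjpos
  · have hj00 : j.castSucc = 0 := by ext; simpa using hj0
    rw [hj00, (hend u' v' h').1] at hj1
    have huu : u' = u := hinj (hj1.trans haphi)
    subst huu
    rcases Nat.lt_or_ge (j.val + 1) (n u' v' h') with hj3 | hjge
    · rw [hcphi] at hj2
      exact hint u' v' h' j.succ (by simp) (by simpa) v hj2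
    · have hn1 : n u' v' h' = 1 := by have := hn u' v' h'; omega
      have : j.succ = Fin.last _ := by ext; simp; omega
      rw [this, (hend u' v' h').2, hcphi] at hj2
      have hvv : v' = v := hinj hj2
      subst hvv
      have : h' = h := Subsingleton.elim _ _
      subst this
      omega
  · exact hint u' v' h' j.castSucc (by simpa) (by simpa using j.isLt) u
      (hj1.trans haphi)

end Sub3

/-- Let `{x, z, y₁, y₂}` be a good `(x, y₁, y₂)`-switch in an oriented graph `D`, and let
`X` induce a subdivision of `ST₄` in `D`.  Then the subdivision intersects the switch in
exactly one of: the path `(x, y₁)`, the path `(x, z, y₂)`, or the empty set. -/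
theorem stmt15 {V : Type} (D : V → V → Prop) (horient : ∀ a b, D a b → ¬ D b a)
    (x z y₁ y₂ : V) (hswitch : IsGoodSwitch D x z y₁ y₂)
    (X : Set V) (hS : IsSubdivision ST4 (fun a b : X => D a.1 b.1)) :
    X ∩ ({x, z, y₁, y₂} : Set V) = {x, y₁} ∨
    X ∩ ({x, z, y₁, y₂} : Set V) = {x, z, y₂} ∨
    X ∩ ({x, z, y₁, y₂} : Set V) = (∅ : Set V) := by
  obtain ⟨φ, n, p, hsub⟩ := hS
  obtain ⟨⟨hxz, hxy1, hxy2, hzy1, hzy2, hy12⟩, harcs, hin, hout⟩ := hswitch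
  have hxY : x ∈ ({x, z, y₁, y₂} : Set V) := by simp
  have hzY : z ∈ ({x, z, y₁, y₂} : Set V) := by simp
  have hy1Y : y₁ ∈ ({x, z, y₁, y₂} : Set V) := by simp
  have hy2Y : y₂ ∈ ({x, z, y₁, y₂} : Set V) := by simp
  -- unique in-neighbour of z is x
  have zin : ∀ (hz : z ∈ X) (a : X), D a.1 z → a.1 = x := by
    intro hz a ha
    have haY : a.1 ∈ ({x, z, y₁, y₂} : Set V) := by
      by_contra hmem
      exact hxz (hin a.1 hmem z hzY ha).symm
    rcases (harcs a.1 z haY hzY).1 ha with ⟨h1, _⟩ | ⟨_, h2⟩ | ⟨_, h2⟩ | ⟨_, h2⟩ | ⟨_, h2⟩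
    · exact h1
    · exact absurd h2 hzy1
    · exact absurd h2 hzy1
    · exact absurd h2 hzy2
    · exact absurd h2 hzy1
  have impz : z ∈ X → x ∈ X := by
    intro hz
    obtain ⟨a, ha⟩ := exists_in hsub (⟨z, hz⟩ : X)
    have := zin hz a ha
    exact this ▸ a.2
  -- out-neighbours of z lie in {y₁, y₂}
  have zout : ∀ (hz : z ∈ X) (b : X), D z b.1 → b.1 = y₁ ∨ b.1 = y₂ := by
    intro hz b hb
    have hbY : b.1 ∈ ({x, z, y₁, y₂} : Set V) := by
      by_contra hmem
      rcases hout z hzY b.1 hmem hb with h | h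
      · exact hzy1 h
      · exact hzy2 h
    rcases (harcs z b.1 hzY hbY).1 hb with ⟨h1, _⟩ | ⟨h1, _⟩ | ⟨_, h2⟩ | ⟨_, h2⟩ | ⟨h1, _⟩
    · exact absurd h1.symm hxz
    · exact absurd h1.symm hxz
    · exact Or.inl h2
    · exact Or.inr h2
    · exact absurd h1 hzy2
  have impz2 : z ∈ X → y₁ ∈ X ∨ y₂ ∈ X := by
    intro hz
    obtain ⟨b, hb⟩ := exists_out hsub (⟨z, hz⟩ : X)
    rcases zout hz b hb with h | h
    · exact Or.inl (h ▸ b.2)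
    · exact Or.inr (h ▸ b.2)
  have impy2 : y₂ ∈ X → z ∈ X := by
    intro hy2
    obtain ⟨a, ha⟩ := exists_in hsub (⟨y₂, hy2⟩ : X)
    have haY : a.1 ∈ ({x, z, y₁, y₂} : Set V) := by
      by_contra hmem
      exact hxy2 (hin a.1 hmem y₂ hy2Y ha).symm
    have : a.1 = z := by
      rcases (harcs a.1 y₂ haY hy2Y).1 ha with ⟨_, h2⟩ | ⟨_, h2⟩ | ⟨_, h2⟩ | ⟨h1, _⟩ | ⟨_, h2⟩
      · exact absurd h2 (Ne.symm hzy2)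
      · exact absurd h2 (Ne.symm hy12)
      · exact absurd h2 (Ne.symm hy12)
      · exact h1
      · exact absurd h2 (Ne.symm hy12)
    exact this ▸ a.2
  have impx : x ∈ X → z ∈ X ∨ y₁ ∈ X := by
    intro hx
    obtain ⟨b, hb⟩ := exists_out hsub (⟨x, hx⟩ : X)
    have hbY : b.1 ∈ ({x, z, y₁, y₂} : Set V) := by
      by_contra hmem
      rcases hout x hxY b.1 hmem hb with h | h
      · exact hxy1 h
      · exact hxy2 h
    rcases (harcs x b.1 hxY hbY).1 hb with ⟨_, h2⟩ | ⟨_, h2⟩ | ⟨h1, _⟩ | ⟨h1, _⟩ | ⟨h1, _⟩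
    · exact Or.inl (h2 ▸ b.2)
    · exact Or.inr (h2 ▸ b.2)
    · exact absurd h1 hxz
    · exact absurd h1 hxz
    · exact absurd h1 hxy2
  have impy1 : y₁ ∈ X → x ∈ X ∨ z ∈ X ∨ y₂ ∈ X := by
    intro hy1
    obtain ⟨a, ha⟩ := exists_in hsub (⟨y₁, hy1⟩ : X)
    have haY : a.1 ∈ ({x, z, y₁, y₂} : Set V) := by
      by_contra hmem
      exact hxy1 (hin a.1 hmem y₁ hy1Y ha).symm
    rcases (harcs a.1 y₁ haY hy1Y).1 ha with ⟨h1, h2⟩ | ⟨h1, _⟩ | ⟨h1, _⟩ | ⟨h1, h2⟩ | ⟨h1, _⟩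
    · exact absurd h2 (Ne.symm hzy1)
    · exact Or.inl (h1 ▸ a.2)
    · exact Or.inr (Or.inl (h1 ▸ a.2))
    · exact absurd h2 hy12
    · exact Or.inr (Or.inr (h1 ▸ a.2))
  -- contradiction: all four in X
  have contra_full : x ∈ X → z ∈ X → y₁ ∈ X → y₂ ∈ X → False := by
    intro hx hz hy1 hy2
    have a1 : D x y₁ := (harcs x y₁ hxY hy1Y).2 (Or.inr (Or.inl ⟨rfl, rfl⟩))
    have a2 : D z y₁ := (harcs z y₁ hzY hy1Y).2 (Or.inr (Or.inr (Or.inl ⟨rfl, rfl⟩)))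
    have a3 : D y₂ y₁ := (harcs y₂ y₁ hy2Y hy1Y).2 (Or.inr (Or.inr (Or.inr (Or.inr ⟨rfl, rfl⟩))))
    have := indeg_le_two hsub (w := ⟨y₁, hy1⟩) (a := ⟨x, hx⟩) (b := ⟨z, hz⟩) (c := ⟨y₂, hy2⟩)
      a1 a2 a3
    rcases this with h | h | h
    · exact hxz (congrArg Subtype.val h)
    · exact hxy2 (congrArg Subtype.val h)
    · exact hzy2 (congrArg Subtype.val h)
  -- contradiction: x, z, y₁ ∈ X, y₂ ∉ X
  have contra_xzy1 : x ∈ X → z ∈ X → y₁ ∈ X → y₂ ∉ X → False := by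
    intro hx hz hy1 hy2
    have chord : D x y₁ := (harcs x y₁ hxY hy1Y).2 (Or.inr (Or.inl ⟨rfl, rfl⟩))
    refine no_in1_out1_chord hsub (w := ⟨z, hz⟩) (a := ⟨x, hx⟩) (c := ⟨y₁, hy1⟩) chord
      ?_ ?_ ?_ ?_
    · intro b hb
      exact Subtype.ext (zin hz b hb)
    · intro b hb
      rcases zout hz b hb with h | h
      · exact Subtype.ext h
      · exact absurd (h ▸ b.2) hy2
    · exact fun e => hxz (congrArg Subtype.val e)
    · exact fun e => hzy1 (congrArg Subtype.val e)
  clear hsub harcs hin hout zin zout horient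
  by_cases hx : x ∈ X <;> by_cases hz : z ∈ X <;> by_cases hy1 : y₁ ∈ X <;>
    by_cases hy2 : y₂ ∈ X
  · exact absurd (contra_full hx hz hy1 hy2) id
  · exact absurd (contra_xzy1 hx hz hy1 hy2) id
  · -- x, z, y₂ ∈ X, y₁ ∉ X
    right; left
    ext w
    simp only [Set.mem_inter_iff, Set.mem_insert_iff, Set.mem_singleton_iff]
    constructor
    · rintro ⟨hw, rfl | rfl | rfl | rfl⟩
      · exact Or.inl rfl
      · exact Or.inr (Or.inl rfl)
      · exact absurd hw hy1
      · exact Or.inr (Or.inr rfl)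
    · rintro (rfl | rfl | rfl)
      · exact ⟨hx, Or.inl rfl⟩
      · exact ⟨hz, Or.inr (Or.inl rfl)⟩
      · exact ⟨hy2, Or.inr (Or.inr (Or.inr rfl))⟩
  · rcases impz2 hz with h | h
    · exact absurd h hy1
    · exact absurd h hy2
  · exact absurd (impy2 hy2) hz
  · -- x, y₁ ∈ X, z, y₂ ∉ X
    left
    ext w
    simp only [Set.mem_inter_iff, Set.mem_insert_iff, Set.mem_singleton_iff]
    constructor
    · rintro ⟨hw, rfl | rfl | rfl | rfl⟩
      · exact Or.inl rfl
      · exact absurd hw hz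
      · exact Or.inr rfl
      · exact absurd hw hy2
    · rintro (rfl | rfl)
      · exact ⟨hx, Or.inl rfl⟩
      · exact ⟨hy1, Or.inr (Or.inr (Or.inl rfl))⟩
  · exact absurd (impy2 hy2) hz
  · rcases impx hx with h | h
    · exact absurd h hz
    · exact absurd h hy1
  · exact absurd (impz hz) hx
  · exact absurd (impz hz) hx
  · exact absurd (impz hz) hx
  · exact absurd (impz hz) hx
  · exact absurd (impy2 hy2) hz
  · rcases impy1 hy1 with h | h | h
    · exact absurd h hx
    · exact absurd h hz
    · exact absurd h hy2
  · exact absurd (impy2 hy2) hz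
  · -- empty
    right; right
    ext w
    simp only [Set.mem_inter_iff, Set.mem_insert_iff, Set.mem_singleton_iff,
      Set.mem_empty_iff_false, iff_false, not_and]
    rintro hw (rfl | rfl | rfl | rfl) <;> contradiction
end

section
/- Let D be a digraph, C a directed cycle of length at least 4 in D, and uv an arc of C where u has total degree 2 in D. Then the digraph D − uv (D with arc uv deleted) has strictly fewer induced directed cycles of length at least 4 than D. -/
/-- A directed cycle in the digraph `G`: vertices `v 0, …, v (n-1)` (all distinct),
`v n = v 0`, with arcs `v i → v (i+1)` for all `i < n`, and `n ≥ 2`. -/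
def IsDiCycle {V : Type*} (G : V → V → Prop) (n : ℕ) (v : ℕ → V) : Prop :=
  2 ≤ n ∧ v n = v 0 ∧ (∀ i < n, ∀ j < n, v i = v j → i = j) ∧ ∀ i < n, G (v i) (v (i + 1))

/-- An induced directed cycle: a directed cycle with no chords. -/
def IsInducedDiCycle {V : Type*} (G : V → V → Prop) (n : ℕ) (v : ℕ → V) : Prop :=
  IsDiCycle G n v ∧ ∀ i < n, ∀ j < n, G (v i) (v j) → j = (i + 1) % n

/-- In-degree of a vertex in a digraph. -/
noncomputable def inDeg {V : Type*} (G : V → V → Prop) (v : V) : ℕ := {u | G u v}.ncard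

/-- Out-degree of a vertex in a digraph. -/
noncomputable def outDeg {V : Type*} (G : V → V → Prop) (v : V) : ℕ := {u | G v u}.ncard

/-- The vertex sets of the induced directed cycles of a digraph. -/
def InducedCycleSets {V : Type*} (G : V → V → Prop) : Set (Set V) :=
  {X | ∃ n v, IsInducedDiCycle G n v ∧ X = {x | ∃ i < n, v i = x}}

/-- The vertex sets of the induced directed cycles of length at least 4 of a digraph. -/
def LongInducedCycleSets {V : Type*} (G : V → V → Prop) : Set (Set V) :=
  {X | ∃ n v, 4 ≤ n ∧ IsInducedDiCycle G n v ∧ X = {x | ∃ i < n, v i = x}}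

/-- Let `D` be a digraph with an arc `u → v` where `u` has total degree 2, and let `D'` be
obtained by deleting the arc `uv`.  Then deleting `uv` creates no new induced directed
cycles (every induced directed cycle of `D'` is an induced directed cycle of `D`), and if
some induced directed cycle of `D` of length at least 4 passes through the arc `uv`, then
`D'` has strictly fewer induced directed cycles of length at least 4 than `D`. -/
theorem stmt16 {V : Type*} [Fintype V] (D : V → V → Prop) (u v : V) (huv : D u v)
    (hdeg : inDeg D u + outDeg D u = 2)
    (D' : V → V → Prop) (hD' : D' = fun a b => D a b ∧ ¬(a = u ∧ b = v)) :
    InducedCycleSets D' ⊆ InducedCycleSets D ∧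
    ((∃ n w i, 4 ≤ n ∧ IsInducedDiCycle D n w ∧ i < n ∧ w i = u ∧ w ((i + 1) % n) = v) →
      (LongInducedCycleSets D').ncard < (LongInducedCycleSets D).ncard) := by
  subst hD'
  -- no directed cycle of D' passes through u
  have no_u : ∀ n (w : ℕ → V), IsDiCycle (fun a b => D a b ∧ ¬(a = u ∧ b = v)) n w →
      ∀ i < n, w i ≠ u := by
    intro n w ⟨hn, hc, hinj, harc⟩ i hi hwi
    have hout := harc i hi
    have hDuw : D u (w (i + 1)) := hwi ▸ hout.1
    have hne : w (i + 1) ≠ v := fun h => hout.2 ⟨hwi, h⟩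
    have hin : ∃ x, D x u := by
      rcases Nat.eq_zero_or_pos i with h0 | h0
      · refine ⟨w (n - 1), ?_⟩
        have := (harc (n - 1) (by omega)).1
        have h1 : n - 1 + 1 = n := by omega
        rw [h1, hc] at this
        subst h0; rwa [hwi] at this
      · refine ⟨w (i - 1), ?_⟩
        have := (harc (i - 1) (by omega)).1
        have h1 : i - 1 + 1 = i := by omega
        rw [h1, hwi] at this; exact this
    have hout2 : 2 ≤ outDeg D u := by
      have hsub : ({v, w (i + 1)} : Set V) ⊆ {x | D u x} := by
        rintro x (rfl | rfl)
        · exact huv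
        · exact hDuw
      calc 2 = ({v, w (i + 1)} : Set V).ncard := (Set.ncard_pair (Ne.symm hne)).symm
        _ ≤ _ := Set.ncard_le_ncard hsub (Set.toFinite _)
    have hin1 : 1 ≤ inDeg D u := by
      obtain ⟨x, hx⟩ := hin
      have : 0 < ({y | D y u} : Set V).ncard :=
        (Set.ncard_pos (Set.toFinite _)).mpr ⟨x, hx⟩
      exact this
    omega
  -- an induced cycle of D' is an induced cycle of D
  have conv : ∀ n (w : ℕ → V),
      IsInducedDiCycle (fun a b => D a b ∧ ¬(a = u ∧ b = v)) n w →
      IsInducedDiCycle D n w := by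
    intro n w ⟨⟨hn, hc, hinj, harc⟩, hchord⟩
    refine ⟨⟨hn, hc, hinj, fun i hi => (harc i hi).1⟩, ?_⟩
    intro i hi j hj hDij
    by_cases h : (fun a b => D a b ∧ ¬(a = u ∧ b = v)) (w i) (w j)
    · exact hchord i hi j hj h
    · exfalso
      have : w i = u ∧ w j = v := by
        by_contra hcon
        exact h ⟨hDij, hcon⟩
      exact no_u n w ⟨hn, hc, hinj, harc⟩ i hi this.1
  constructor
  · rintro X ⟨n, w, hind, rfl⟩
    exact ⟨n, w, conv n w hind, rfl⟩
  · rintro ⟨n, w, i, hn4, hind, hi, hwi, hwv⟩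
    have hsub : LongInducedCycleSets (fun a b => D a b ∧ ¬(a = u ∧ b = v)) ⊆
        LongInducedCycleSets D := by
      rintro X ⟨m, w', hm, hind', rfl⟩
      exact ⟨m, w', hm, conv m w' hind', rfl⟩
    set X : Set V := {x | ∃ j < n, w j = x} with hX
    have hXin : X ∈ LongInducedCycleSets D := ⟨n, w, hn4, hind, rfl⟩
    have hXout : X ∉ LongInducedCycleSets (fun a b => D a b ∧ ¬(a = u ∧ b = v)) := by
      rintro ⟨m, w', hm, hind', hXeq⟩
      have huX : u ∈ X := ⟨i, hi, hwi⟩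
      rw [hXeq] at huX
      obtain ⟨j, hj, hwj⟩ := huX
      exact no_u m w' hind'.1 j hj hwj
    exact Set.ncard_lt_ncard
      ((Set.ssubset_iff_of_subset hsub).mpr ⟨X, hXin, hXout⟩) (Set.toFinite _)
end
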